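/- arXiv:1008.1020 — 6 statements merged into one kernel-verified Lean document; each statement's English description precedes it below -/
import Mathlib

section
/- Let $g\in L^2(0,T;\mathbb{R}^n)$ be defined from two functions $a,b\in L^\infty(0,T;\mathbb{R}^n)$ and $\alpha\in[0,1]$ as follows: for $\varepsilon>0$ set $g_\varepsilon(t)=a(t)$ if the fractional part of $t/\varepsilon$ lies in $[0,\alpha)$ and $g_\varepsilon(t)=b(t)$ otherwise. Then $g_\varepsilon\to \alpha a+(1-\alpha)b$ weakly in $L^2(0,T;\mathbb{R}^n)$ as $\varepsilon\to 0^+$. -/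
open MeasureTheory Set
open scoped RealInnerProductSpace

noncomputable def w1 (α τ : ℝ) : ℝ := if Int.fract τ < α then 1 else 0

lemma w1_measurable (α : ℝ) : Measurable (w1 α) :=
  Measurable.ite (measurableSet_lt measurable_fract measurable_const)
    measurable_const measurable_const

lemma w1_periodic (α : ℝ) : Function.Periodic (w1 α) 1 := by
  intro τ; simp [w1, Int.fract_add_one]

lemma w1_abs_le (α τ : ℝ) (hα : α ∈ Icc (0:ℝ) 1) : |w1 α τ| ≤ 1 := by
  unfold w1; split_ifs <;> simp

lemma w1_sub_abs_le (α τ : ℝ) (hα : α ∈ Icc (0:ℝ) 1) : |w1 α τ - α| ≤ 1 := by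
  obtain ⟨h0, h1⟩ := hα
  unfold w1; split_ifs <;> rw [abs_le] <;> constructor <;> linarith

lemma bdd_meas_intervalIntegrable {f : ℝ → ℝ} (hf : Measurable f) {C : ℝ}
    (hC : ∀ x, |f x| ≤ C) (a b : ℝ) : IntervalIntegrable f volume a b := by
  rw [intervalIntegrable_iff]
  refine Integrable.mono' (g := fun _ => C) ?_ hf.aestronglyMeasurable
    (Filter.Eventually.of_forall fun x => hC x)
  exact integrableOn_const (by exact measure_Ioc_lt_top.ne)

lemma w1_integral {α : ℝ} (hα : α ∈ Icc (0:ℝ) 1) : ∫ τ in (0:ℝ)..1, w1 α τ = α := by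
  obtain ⟨h0, h1⟩ := hα
  rw [intervalIntegral.integral_of_le zero_le_one, integral_Ioc_eq_integral_Ioo]
  have : EqOn (w1 α) ((Ioo (0:ℝ) α).indicator fun _ => (1:ℝ)) (Ioo (0:ℝ) 1) := by
    intro x hx
    have hfr : Int.fract x = x := Int.fract_eq_self.2 ⟨hx.1.le, hx.2⟩
    by_cases hxa : x < α
    · simp [w1, hfr, hxa, indicator_of_mem, mem_Ioo.2 ⟨hx.1, hxa⟩]
    · simp [w1, hfr, hxa, indicator_of_notMem, fun h : x ∈ Ioo 0 α => hxa h.2]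
  rw [setIntegral_congr_fun measurableSet_Ioo this,
    setIntegral_indicator measurableSet_Ioo]
  have : Ioo (0:ℝ) 1 ∩ Ioo 0 α = Ioo 0 α := by
    apply inter_eq_self_of_subset_right
    exact Ioo_subset_Ioo le_rfl h1
  rw [this]
  simp [Real.volume_Ioo, ENNReal.toReal_ofReal h0, h0]


noncomputable def Psi (α τ : ℝ) : ℝ := ∫ x in (0:ℝ)..τ, (w1 α x - α)

lemma w1_sub_intervalIntegrable {α : ℝ} (hα : α ∈ Icc (0:ℝ) 1) (a b : ℝ) :
    IntervalIntegrable (fun x => w1 α x - α) volume a b :=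
  bdd_meas_intervalIntegrable ((w1_measurable α).sub measurable_const)
    (fun x => w1_sub_abs_le α x hα) a b

lemma Psi_periodic {α : ℝ} (hα : α ∈ Icc (0:ℝ) 1) : Function.Periodic (Psi α) 1 := by
  intro τ
  have key : ∫ x in τ..τ+1, (w1 α x - α) = 0 := by
    have hper : Function.Periodic (fun x => w1 α x - α) 1 := fun x => by
      simp [w1_periodic α x]
    rw [hper.intervalIntegral_add_eq τ 0]
    rw [intervalIntegral.integral_sub (bdd_meas_intervalIntegrable (w1_measurable α)
        (fun x => w1_abs_le α x hα) 0 (0+1)) intervalIntegrable_const]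
    simp [w1_integral hα]
  have := intervalIntegral.integral_add_adjacent_intervals
    (w1_sub_intervalIntegrable hα 0 τ) (w1_sub_intervalIntegrable hα τ (τ+1))
  unfold Psi
  rw [← this, key, add_zero]

lemma Psi_abs_le {α : ℝ} (hα : α ∈ Icc (0:ℝ) 1) (τ : ℝ) : |Psi α τ| ≤ 1 := by
  have hp : Psi α (τ - (⌊τ⌋ : ℝ) * 1) = Psi α τ :=
    (Psi_periodic hα).sub_int_mul_eq ⌊τ⌋
  rw [mul_one] at hp
  rw [← hp]
  have h1 : |Psi α (τ - ⌊τ⌋)| ≤ 1 * |(τ - (⌊τ⌋:ℝ)) - 0| := by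
    rw [show |Psi α (τ - ⌊τ⌋)| = ‖∫ x in (0:ℝ)..(τ - (⌊τ⌋:ℝ)), (w1 α x - α)‖ from rfl]
    exact intervalIntegral.norm_integral_le_of_norm_le_const
      (fun x _ => w1_sub_abs_le α x hα)
  have h2 : |(τ - (⌊τ⌋:ℝ)) - 0| ≤ 1 := by
    rw [sub_zero]
    have := Int.fract_nonneg τ
    have := Int.fract_lt_one τ
    rw [Int.self_sub_floor]
    rw [abs_of_nonneg ‹0 ≤ Int.fract τ›]; linarith
  calc |Psi α (τ - ⌊τ⌋)| ≤ 1 * |(τ - (⌊τ⌋:ℝ)) - 0| := h1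
    _ ≤ 1 := by rw [one_mul]; exact h2

lemma w1_eventually_const {α : ℝ} (hα : α ∈ Icc (0:ℝ) 1) (τ : ℝ) :
    ∀ᶠ s in nhdsWithin τ (Ici τ), w1 α s = w1 α τ := by
  have hfl : (⌊τ⌋ : ℝ) ≤ τ := Int.floor_le τ
  have hfr : Int.fract τ = τ - ⌊τ⌋ := rfl
  by_cases h : Int.fract τ < α
  · have hub : τ < (⌊τ⌋ : ℝ) + α := by rw [hfr] at h; linarith
    filter_upwards [Ico_mem_nhdsGE hub]
      with s hs
    have hfloor : ⌊s⌋ = ⌊τ⌋ := by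
      rw [Int.floor_eq_iff]
      constructor
      · exact hfl.trans hs.1
      · have := hs.2; have := hα.2; push_cast; linarith
    have : Int.fract s = s - ⌊τ⌋ := by rw [Int.fract, hfloor]
    simp only [w1, this, h, if_true]
    rw [if_pos (by linarith [hs.2])]
  · have hub : τ < (⌊τ⌋ : ℝ) + 1 := Int.lt_floor_add_one τ
    filter_upwards [Ico_mem_nhdsGE hub]
      with s hs
    have hfloor : ⌊s⌋ = ⌊τ⌋ := by
      rw [Int.floor_eq_iff]
      refine ⟨hfl.trans hs.1, by push_cast; linarith [hs.2]⟩
    have hfs : Int.fract s = s - ⌊τ⌋ := by rw [Int.fract, hfloor]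
    have : ¬ Int.fract s < α := by
      rw [hfs]; rw [hfr] at h; push_neg at h ⊢; linarith [hs.1]
    simp only [w1, this, h, if_false]

/-- the primitive of the rescaled oscillation -/

noncomputable def Psie (α ε t : ℝ) : ℝ := ∫ x in (0:ℝ)..t, (w1 α (x/ε) - α)

lemma we_intervalIntegrable {α : ℝ} (hα : α ∈ Icc (0:ℝ) 1) (ε : ℝ) (a b : ℝ) :
    IntervalIntegrable (fun x => w1 α (x/ε) - α) volume a b :=
  bdd_meas_intervalIntegrable (((w1_measurable α).comp (measurable_id.div_const ε)).sub
    measurable_const) (fun x => w1_sub_abs_le α _ hα) a b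

lemma Psie_eq {α : ℝ} {ε : ℝ} (hε : 0 < ε) (t : ℝ) :
    Psie α ε t = ε * Psi α (t/ε) := by
  unfold Psie Psi
  rw [intervalIntegral.integral_comp_div (fun x => w1 α x - α) hε.ne']
  rw [zero_div]; simp

lemma Psie_abs_le {α : ℝ} (hα : α ∈ Icc (0:ℝ) 1) {ε : ℝ} (hε : 0 < ε) (t : ℝ) :
    |Psie α ε t| ≤ ε := by
  rw [Psie_eq hε, abs_mul, abs_of_pos hε]
  calc ε * |Psi α (t/ε)| ≤ ε * 1 := by
        exact mul_le_mul_of_nonneg_left (Psi_abs_le hα _) hε.le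
    _ = ε := mul_one ε

lemma Psie_continuous {α : ℝ} (hα : α ∈ Icc (0:ℝ) 1) (ε : ℝ) :
    Continuous (Psie α ε) :=
  intervalIntegral.continuous_primitive (fun a b => we_intervalIntegrable hα ε a b) 0

lemma Psie_hasDerivWithinAt {α : ℝ} (hα : α ∈ Icc (0:ℝ) 1) {ε : ℝ} (hε : 0 < ε) (t : ℝ) :
    HasDerivWithinAt (Psie α ε) (w1 α (t/ε) - α) (Ici t) t := by
  apply intervalIntegral.integral_hasDerivWithinAt_right
    (we_intervalIntegrable hα ε 0 t) (s := Ici t) (t := Ioi t)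
  · exact ⟨univ, Filter.univ_mem, ((((w1_measurable α).comp
      (measurable_id.div_const ε)).sub measurable_const).aestronglyMeasurable)⟩
  · apply ContinuousWithinAt.mono (t := Ici t) ?_ Ioi_subset_Ici_self
    have hmap : Filter.Tendsto (fun s => s / ε) (nhdsWithin t (Ici t))
        (nhdsWithin (t/ε) (Ici (t/ε))) := by
      apply tendsto_nhdsWithin_of_tendsto_nhds_of_eventually_within
      · exact ((continuous_id.div_const ε).tendsto t).mono_left nhdsWithin_le_nhds
      · filter_upwards [self_mem_nhdsWithin] with s hs
        exact (div_le_div_iff_of_pos_right hε).2 hs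
    have hev : ∀ᶠ s in nhdsWithin t (Ici t), w1 α (s/ε) = w1 α (t/ε) :=
      hmap.eventually (w1_eventually_const hα (t/ε))
    unfold ContinuousWithinAt
    rw [Filter.tendsto_congr'
      (show (fun x => w1 α (x/ε) - α) =ᶠ[nhdsWithin t (Ici t)]
        (fun _ => w1 α (t/ε) - α) by filter_upwards [hev] with s hs; rw [hs])]
    exact tendsto_const_nhds

lemma parts {α : ℝ} (hα : α ∈ Icc (0:ℝ) 1) {ε : ℝ} (hε : 0 < ε) {T : ℝ} (hT : 0 ≤ T)
    (u u' : ℝ → ℝ) (hu : ∀ t, HasDerivAt u (u' t) t) (hu' : Continuous u') :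
    ∫ t in (0:ℝ)..T, (w1 α (t/ε) - α) * u t
      = Psie α ε T * u T - ∫ t in (0:ℝ)..T, Psie α ε t * u' t := by
  have hucont : Continuous u := by
    apply continuous_iff_continuousAt.2
    exact fun x => (hu x).continuousAt
  have hPc : Continuous (Psie α ε) := Psie_continuous hα ε
  have hF : ∀ x, HasDerivWithinAt (fun t => Psie α ε t * u t)
      ((w1 α (x/ε) - α) * u x + Psie α ε x * u' x) (Ici x) x :=
    fun x => (Psie_hasDerivWithinAt hα hε x).mul ((hu x).hasDerivWithinAt)
  have hint1 : IntervalIntegrable (fun t => (w1 α (t/ε) - α) * u t) volume 0 T :=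
    (we_intervalIntegrable hα ε 0 T).mul_continuousOn hucont.continuousOn
  have hint2 : IntervalIntegrable (fun t => Psie α ε t * u' t) volume 0 T :=
    (hPc.mul hu').intervalIntegrable 0 T
  have key := intervalIntegral.integral_eq_sub_of_hasDeriv_right_of_le hT
    (f := fun t => Psie α ε t * u t)
    (f' := fun x => (w1 α (x/ε) - α) * u x + Psie α ε x * u' x)
    ((hPc.mul hucont).continuousOn)
    (fun x _ => (hF x).mono Ioi_subset_Ici_self)
    (hint1.add hint2)
  rw [intervalIntegral.integral_add hint1 hint2] at key
  have hP0 : Psie α ε 0 = 0 := by unfold Psie; simp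
  simp only [hP0, zero_mul, sub_zero] at key
  linarith [key]

lemma parts_bound {α : ℝ} (hα : α ∈ Icc (0:ℝ) 1) {ε : ℝ} (hε : 0 < ε) {T : ℝ} (hT : 0 ≤ T)
    (u u' : ℝ → ℝ) (hu : ∀ t, HasDerivAt u (u' t) t) (hu' : Continuous u')
    {M : ℝ} (hM : ∀ t ∈ Icc 0 T, |u' t| ≤ M) :
    |∫ t in (0:ℝ)..T, (w1 α (t/ε) - α) * u t| ≤ ε * (|u T| + M * T) := by
  rw [parts hα hε hT u u' hu hu']
  have h2 : |∫ t in (0:ℝ)..T, Psie α ε t * u' t| ≤ (ε * M) * |T - 0| := by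
    rw [← Real.norm_eq_abs]
    apply intervalIntegral.norm_integral_le_of_norm_le_const
    intro x hx
    rw [uIoc_of_le hT] at hx
    rw [Real.norm_eq_abs, abs_mul]
    exact mul_le_mul (Psie_abs_le hα hε x) (hM x ⟨hx.1.le, hx.2⟩) (abs_nonneg _)
      hε.le
  have h1 : |Psie α ε T * u T| ≤ ε * |u T| := by
    rw [abs_mul]
    exact mul_le_mul_of_nonneg_right (Psie_abs_le hα hε T) (abs_nonneg _)
  calc |Psie α ε T * u T - ∫ t in (0:ℝ)..T, Psie α ε t * u' t|
      ≤ |Psie α ε T * u T| + |∫ t in (0:ℝ)..T, Psie α ε t * u' t| := abs_sub _ _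
    _ ≤ ε * |u T| + (ε * M) * |T - 0| := add_le_add h1 h2
    _ = ε * (|u T| + M * T) := by rw [sub_zero, abs_of_nonneg hT]; ring

lemma key_tendsto {α T : ℝ} (hα : α ∈ Icc (0:ℝ) 1) (hT : 0 < T) (h : ℝ → ℝ)
    (hh : IntegrableOn h (Ioc 0 T)) :
    Filter.Tendsto (fun ε => ∫ t in Ioc (0:ℝ) T, w1 α (t/ε) * h t)
      (nhdsWithin 0 (Ioi 0)) (nhds (α * ∫ t in Ioc (0:ℝ) T, h t)) := by
  rw [Metric.tendsto_nhdsWithin_nhds]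
  intro η hη
  -- continuous compactly supported approximation of the zero-extension of h
  have hH : Integrable ((Ioc (0:ℝ) T).indicator h) volume :=
    hh.integrable_indicator measurableSet_Ioc
  obtain ⟨u, -, hu1, hucont, huint⟩ :=
    hH.exists_hasCompactSupport_integral_sub_le (show (0:ℝ) < η/8 by positivity)
  -- polynomial approximation of u on [0,T]
  have hT1 : (0:ℝ) < η / (8 * (T + 1)) := by positivity
  obtain ⟨p, hp⟩ := exists_polynomial_near_of_continuousOn 0 T u
    hucont.continuousOn _ hT1
  set v : ℝ → ℝ := fun x => Polynomial.eval x p with hvdef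
  have hvcont : Continuous v := p.continuous
  have hv'cont : Continuous fun x => Polynomial.eval x (Polynomial.derivative p) :=
    (Polynomial.derivative p).continuous
  obtain ⟨M, hM⟩ := isCompact_Icc.exists_bound_of_continuousOn
    (hv'cont.continuousOn (s := Icc (0:ℝ) T))
  have hM0 : 0 ≤ M := le_trans (norm_nonneg _) (hM 0 ⟨le_rfl, hT.le⟩)
  -- integrability facts
  have hvint : IntegrableOn v (Ioc (0:ℝ) T) := hvcont.integrableOn_Ioc
  have huuint : IntegrableOn u (Ioc (0:ℝ) T) := huint.integrableOn
  -- L¹ estimate : ∫ |h - v| ≤ η/4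
  have e11 : ∫ t in Ioc (0:ℝ) T, |h t - u t| ≤ η/8 := by
    have heq : ∫ t in Ioc (0:ℝ) T, |h t - u t|
        = ∫ t in Ioc (0:ℝ) T, ‖(Ioc (0:ℝ) T).indicator h t - u t‖ := by
      apply setIntegral_congr_fun measurableSet_Ioc
      intro x hx
      simp [indicator_of_mem hx]
    rw [heq]
    exact le_trans (setIntegral_le_integral (hH.sub huint).norm
      (Filter.Eventually.of_forall fun x => norm_nonneg _)) hu1
  have e12 : ∫ t in Ioc (0:ℝ) T, |u t - v t| ≤ η/8 := by
    have : ∫ t in Ioc (0:ℝ) T, |u t - v t| ≤ ∫ _t in Ioc (0:ℝ) T, (η / (8 * (T + 1))) := by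
      apply setIntegral_mono_on ((hucont.sub hvcont).abs.integrableOn_Ioc)
        (integrableOn_const measure_Ioc_lt_top.ne) measurableSet_Ioc
      intro x hx
      rw [Pi.sub_apply, abs_sub_comm]
      exact (hp x ⟨hx.1.le, hx.2⟩).le
    apply le_trans this
    rw [setIntegral_const, smul_eq_mul, measureReal_def, Real.volume_Ioc, sub_zero,
      ENNReal.toReal_ofReal hT.le]
    have hD0 : 0 ≤ η / (8 * (T + 1)) := hT1.le
    have hDeq : (η / (8 * (T + 1))) * (8 * (T + 1)) = η :=
      div_mul_cancel₀ _ (by positivity)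
    nlinarith [hD0, hDeq, hT.le]
  have E1 : ∫ t in Ioc (0:ℝ) T, |h t - v t| ≤ η/4 := by
    have step : ∫ t in Ioc (0:ℝ) T, |h t - v t|
        ≤ ∫ t in Ioc (0:ℝ) T, (|h t - u t| + |u t - v t|) := by
      apply setIntegral_mono_on ((hh.sub hvint).abs)
        (((hh.sub huuint).abs).add ((huuint.sub hvint).abs)) measurableSet_Ioc
      intro x _
      calc |h x - v x| = |(h x - u x) + (u x - v x)| := by ring_nf
        _ ≤ |h x - u x| + |u x - v x| := abs_add_le _ _
    have hsum := integral_add (μ := (volume.restrict (Ioc 0 T)))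
      ((hh.sub huuint).abs) ((huuint.sub hvint).abs)
    simp only [Pi.sub_apply] at hsum
    rw [hsum] at step
    linarith
  -- choose δ
  set Cv : ℝ := |v T| + M * T + 1 with hCv
  have hCv0 : 0 < Cv := by positivity
  refine ⟨η / (4 * Cv), by positivity, ?_⟩
  intro ε hε hεδ
  rw [Real.dist_eq, sub_zero] at hεδ
  rw [abs_of_pos hε] at hεδ
  rw [Real.dist_eq]
  -- integrability of the products
  have hw : AEStronglyMeasurable (fun t => w1 α (t/ε)) (volume.restrict (Ioc (0:ℝ) T)) :=
    ((w1_measurable α).comp (measurable_id.div_const ε)).aestronglyMeasurable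
  have hwb : ∀ᵐ x ∂(volume.restrict (Ioc (0:ℝ) T)), ‖w1 α (x/ε)‖ ≤ 1 :=
    Filter.Eventually.of_forall fun x => w1_abs_le α _ hα
  have hAh : IntegrableOn (fun t => w1 α (t/ε) * h t) (Ioc (0:ℝ) T) :=
    hh.bdd_mul hw hwb
  have hAv : IntegrableOn (fun t => w1 α (t/ε) * v t) (Ioc (0:ℝ) T) :=
    hvint.bdd_mul hw hwb
  have hhv : IntegrableOn (fun t => h t - v t) (Ioc (0:ℝ) T) := hh.sub hvint
  have hAhv : IntegrableOn (fun t => w1 α (t/ε) * (h t - v t)) (Ioc (0:ℝ) T) :=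
    hhv.bdd_mul hw hwb
  -- decomposition
  have d1 : ∫ t in Ioc (0:ℝ) T, w1 α (t/ε) * (h t - v t)
      = (∫ t in Ioc (0:ℝ) T, w1 α (t/ε) * h t) - ∫ t in Ioc (0:ℝ) T, w1 α (t/ε) * v t := by
    rw [← integral_sub hAh hAv]
    congr 1; funext t; ring
  have d2 : ∫ t in Ioc (0:ℝ) T, (w1 α (t/ε) - α) * v t
      = (∫ t in Ioc (0:ℝ) T, w1 α (t/ε) * v t) - α * ∫ t in Ioc (0:ℝ) T, v t := by
    rw [← integral_const_mul, ← integral_sub hAv (hvint.const_mul α)]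
    congr 1; funext t; ring
  have d3 : ∫ t in Ioc (0:ℝ) T, (w1 α (t/ε) - α) * v t
      = ∫ t in (0:ℝ)..T, (w1 α (t/ε) - α) * v t := by
    rw [intervalIntegral.integral_of_le hT.le]
  -- bounds
  have B1 : |∫ t in Ioc (0:ℝ) T, w1 α (t/ε) * (h t - v t)| ≤ η/4 := by
    have n1 : |∫ t in Ioc (0:ℝ) T, w1 α (t/ε) * (h t - v t)|
        ≤ ∫ t in Ioc (0:ℝ) T, ‖w1 α (t/ε) * (h t - v t)‖ := by
      rw [← Real.norm_eq_abs]; exact norm_integral_le_integral_norm _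
    have n2 : ∫ t in Ioc (0:ℝ) T, ‖w1 α (t/ε) * (h t - v t)‖
        ≤ ∫ t in Ioc (0:ℝ) T, |h t - v t| := by
      apply setIntegral_mono_on hAhv.norm hhv.abs measurableSet_Ioc
      intro x _
      rw [Real.norm_eq_abs, abs_mul]
      calc |w1 α (x/ε)| * |h x - v x| ≤ 1 * |h x - v x| :=
            mul_le_mul_of_nonneg_right (w1_abs_le α _ hα) (abs_nonneg _)
        _ = |h x - v x| := one_mul _
    linarith
  have B2 : |∫ t in (0:ℝ)..T, (w1 α (t/ε) - α) * v t| < η/4 := by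
    have hb := parts_bound hα hε hT.le v (fun x => Polynomial.eval x (Polynomial.derivative p))
      (fun x => p.hasDerivAt x) hv'cont (M := M)
      (fun t ht => by rw [← Real.norm_eq_abs]; exact hM t ht)
    have hlt : ε * (|v T| + M * T) < (η / (4 * Cv)) * Cv := by
      apply lt_of_le_of_lt (b := ε * Cv)
      · apply mul_le_mul_of_nonneg_left _ hε.le
        rw [hCv]; linarith
      · exact (mul_lt_mul_of_pos_right hεδ hCv0)
    have : (η / (4 * Cv)) * Cv = η / 4 := by field_simp
    linarith
  have B3 : |α * ((∫ t in Ioc (0:ℝ) T, v t) - ∫ t in Ioc (0:ℝ) T, h t)| ≤ η/4 := by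
    rw [abs_mul]
    have hα1 : |α| ≤ 1 := by rw [abs_of_nonneg hα.1]; exact hα.2
    have : |(∫ t in Ioc (0:ℝ) T, v t) - ∫ t in Ioc (0:ℝ) T, h t|
        ≤ ∫ t in Ioc (0:ℝ) T, |h t - v t| := by
      rw [← integral_sub hvint hh, ← Real.norm_eq_abs]
      apply le_trans (norm_integral_le_integral_norm _)
      apply le_of_eq
      apply setIntegral_congr_fun measurableSet_Ioc
      intro x _
      simp [abs_sub_comm]
    calc |α| * |(∫ t in Ioc (0:ℝ) T, v t) - ∫ t in Ioc (0:ℝ) T, h t|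
        ≤ 1 * (∫ t in Ioc (0:ℝ) T, |h t - v t|) :=
          mul_le_mul hα1 this (abs_nonneg _) zero_le_one
      _ ≤ η/4 := by rw [one_mul]; exact E1
  -- put it together
  have decomp : (∫ t in Ioc (0:ℝ) T, w1 α (t/ε) * h t) - α * ∫ t in Ioc (0:ℝ) T, h t
      = (∫ t in Ioc (0:ℝ) T, w1 α (t/ε) * (h t - v t))
        + (∫ t in (0:ℝ)..T, (w1 α (t/ε) - α) * v t)
        + α * ((∫ t in Ioc (0:ℝ) T, v t) - ∫ t in Ioc (0:ℝ) T, h t) := by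
    rw [← d3, d1, d2]; ring
  rw [decomp]
  calc |_ + _ + _| ≤ |(∫ t in Ioc (0:ℝ) T, w1 α (t/ε) * (h t - v t))
        + (∫ t in (0:ℝ)..T, (w1 α (t/ε) - α) * v t)|
        + |α * ((∫ t in Ioc (0:ℝ) T, v t) - ∫ t in Ioc (0:ℝ) T, h t)| := abs_add_le _ _
    _ ≤ |∫ t in Ioc (0:ℝ) T, w1 α (t/ε) * (h t - v t)|
        + |∫ t in (0:ℝ)..T, (w1 α (t/ε) - α) * v t|
        + |α * ((∫ t in Ioc (0:ℝ) T, v t) - ∫ t in Ioc (0:ℝ) T, h t)| := by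
          have := abs_add_le (∫ t in Ioc (0:ℝ) T, w1 α (t/ε) * (h t - v t))
            (∫ t in (0:ℝ)..T, (w1 α (t/ε) - α) * v t)
          linarith
    _ < η := by linarith

theorem stmt_2 {n : ℕ} (T : ℝ) (hT : 0 < T) (α : ℝ) (hα : α ∈ Set.Icc (0:ℝ) 1)
    (a b : ℝ → EuclideanSpace ℝ (Fin n))
    (ha : Measurable a) (hb : Measurable b)
    (Ca Cb : ℝ) (hCa : ∀ t, ‖a t‖ ≤ Ca) (hCb : ∀ t, ‖b t‖ ≤ Cb)
    (g : ℝ → ℝ → EuclideanSpace ℝ (Fin n))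
    (hg : ∀ ε t, g ε t = if Int.fract (t / ε) < α then a t else b t)
    (φ : ℝ → EuclideanSpace ℝ (Fin n))
    (hφ : MemLp φ 2 (volume.restrict (Set.Ioc (0:ℝ) T))) :
    Filter.Tendsto (fun ε => ∫ t in (0:ℝ)..T, ⟪g ε t, φ t⟫)
      (nhdsWithin 0 (Set.Ioi 0))
      (nhds (∫ t in (0:ℝ)..T, ⟪α • a t + (1 - α) • b t, φ t⟫)) := by
  haveI : IsFiniteMeasure (volume.restrict (Ioc (0:ℝ) T)) :=
    ⟨by rw [Measure.restrict_apply_univ]; exact measure_Ioc_lt_top⟩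
  have hφint : Integrable φ (volume.restrict (Ioc (0:ℝ) T)) :=
    hφ.integrable (by norm_num)
  have hφm : AEStronglyMeasurable φ (volume.restrict (Ioc (0:ℝ) T)) :=
    hφ.aestronglyMeasurable
  set h : ℝ → ℝ := fun t => ⟪a t - b t, φ t⟫ with hhdef
  set h2 : ℝ → ℝ := fun t => ⟪b t, φ t⟫ with hh2def
  have hhm : AEStronglyMeasurable h (volume.restrict (Ioc (0:ℝ) T)) :=
    AEStronglyMeasurable.inner ((ha.sub hb).aestronglyMeasurable) hφm
  have hh2m : AEStronglyMeasurable h2 (volume.restrict (Ioc (0:ℝ) T)) :=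
    AEStronglyMeasurable.inner hb.aestronglyMeasurable hφm
  have hhint : IntegrableOn h (Ioc (0:ℝ) T) := by
    apply Integrable.mono' (hφint.norm.const_mul (Ca + Cb)) hhm
    filter_upwards with t
    calc ‖h t‖ ≤ ‖a t - b t‖ * ‖φ t‖ := norm_inner_le_norm _ _
      _ ≤ (Ca + Cb) * ‖φ t‖ := by
          apply mul_le_mul_of_nonneg_right _ (norm_nonneg _)
          calc ‖a t - b t‖ ≤ ‖a t‖ + ‖b t‖ := norm_sub_le _ _
            _ ≤ Ca + Cb := add_le_add (hCa t) (hCb t)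
  have hh2int : IntegrableOn h2 (Ioc (0:ℝ) T) := by
    apply Integrable.mono' (hφint.norm.const_mul Cb) hh2m
    filter_upwards with t
    calc ‖h2 t‖ ≤ ‖b t‖ * ‖φ t‖ := norm_inner_le_norm _ _
      _ ≤ Cb * ‖φ t‖ := mul_le_mul_of_nonneg_right (hCb t) (norm_nonneg _)
  have hfun : ∀ ε, (∫ t in (0:ℝ)..T, ⟪g ε t, φ t⟫)
      = (∫ t in Ioc (0:ℝ) T, h2 t) + ∫ t in Ioc (0:ℝ) T, w1 α (t/ε) * h t := by
    intro ε
    have hw : AEStronglyMeasurable (fun t => w1 α (t/ε))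
        (volume.restrict (Ioc (0:ℝ) T)) :=
      ((w1_measurable α).comp (measurable_id.div_const ε)).aestronglyMeasurable
    have heq : (fun t => ⟪g ε t, φ t⟫) = fun t => h2 t + w1 α (t/ε) * h t := by
      funext t
      rw [hg ε t]
      by_cases hc : Int.fract (t/ε) < α
      · simp only [if_pos hc, w1, hhdef, hh2def, inner_sub_left]
        ring
      · simp only [if_neg hc, w1, hhdef, hh2def]
        ring
    rw [intervalIntegral.integral_of_le hT.le, heq]
    exact integral_add hh2int (hhint.bdd_mul hw (Filter.Eventually.of_forall fun x => w1_abs_le α _ hα))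
  have hR : (∫ t in (0:ℝ)..T, ⟪α • a t + (1 - α) • b t, φ t⟫)
      = (∫ t in Ioc (0:ℝ) T, h2 t) + α * ∫ t in Ioc (0:ℝ) T, h t := by
    have heq : (fun t => ⟪α • a t + (1 - α) • b t, φ t⟫)
        = fun t => h2 t + α * h t := by
      funext t
      simp only [hhdef, hh2def, inner_add_left, real_inner_smul_left, inner_sub_left]
      ring
    rw [intervalIntegral.integral_of_le hT.le, heq,
      integral_add hh2int (hhint.const_mul α), integral_const_mul]
  simp only [hfun, hR]
  exact (key_tendsto hα hT h hhint).const_add _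
end

section
/- Let $\bar u$ be a minimizer of $J(u)=\int_0^T f^0(t,x(t;u),u(t))\,dt$ over all measurable controls $u:[0,T]\to U$, where $x(\cdot;u)$ solves $\dot x=f(t,x,u(t))$, $x(0)=x_0$. For $\alpha\in[0,1]$ and any measurable control $u$, define the relaxed dynamics $\dot x^\alpha(t)=(1-\alpha)f(t,x^\alpha(t),\bar u(t))+\alpha f(t,x^\alpha(t),u(t))$, $x^\alpha(0)=x_0$, and relaxed cost $J^\alpha=\int_0^T[(1-\alpha)f^0(t,x^\alpha(t),\bar u(t))+\alpha f^0(t,x^\alpha(t),u(t))]\,dt$. Then $J(\bar u)\le J^\alpha$ for every $\alpha\in[0,1]$ and every measurable $u$. -/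
open MeasureTheory Set Function

section meas
variable {E G U : Type*} [NormedAddCommGroup E] [NormedSpace ℝ E]
  [MeasurableSpace E] [BorelSpace E] [SecondCountableTopology E]
  [NormedAddCommGroup G] [SecondCountableTopology G] [MeasurableSpace G] [BorelSpace G]
  [MetricSpace U] [TopologicalSpace.SeparableSpace U] [MeasurableSpace U] [BorelSpace U]

lemma meas_comp (g : ℝ → E → U → G)
    (hm : ∀ x u, Measurable (fun t => g t x u))
    (hc : ∀ t, Continuous (fun p : E × U => g t p.1 p.2))
    (y : ℝ → E) (hy : Continuous y) (v : ℝ → U) (hv : Measurable v) :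
    StronglyMeasurable (fun s => g s (y s) (v s)) := by
  haveI : SecondCountableTopology U := UniformSpace.secondCountable_of_separable U
  have H : StronglyMeasurable (Function.uncurry (fun (p : E × U) (t : ℝ) => g t p.1 p.2)) := by
    apply stronglyMeasurable_uncurry_of_continuous_of_stronglyMeasurable
    · exact fun t => hc t
    · exact fun p => (hm p.1 p.2).stronglyMeasurable
  have : (fun s => g s (y s) (v s)) =
      (Function.uncurry (fun (p : E × U) (t : ℝ) => g t p.1 p.2)) ∘ (fun s => ((y s, v s), s)) :=
    rfl
  rw [this]
  exact H.comp_measurable (((hy.measurable.prodMk hv)).prodMk measurable_id)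
end meas

section picard
variable {E : Type*} [NormedAddCommGroup E] [NormedSpace ℝ E] [CompleteSpace E]

lemma picard (T L : ℝ) (hT : 0 < T) (hL : 0 < L) (m : ℕ)
    (hq : (L*T)^m / (Nat.factorial m) < 1) (x0 : E) (F : ℝ → E → E)
    (hFm : ∀ y : ℝ → E, Continuous y →
      AEStronglyMeasurable (fun s => F s (y s)) (volume.restrict (Icc 0 T)))
    (hFlip : ∀ s x x', ‖F s x - F s x'‖ ≤ L * ‖x - x'‖)
    (hFbd : ∀ s x, ‖F s x‖ ≤ L + L * ‖x‖) :
    ∃ x : ℝ → E, Continuous x ∧ (∀ t ∈ Icc 0 T, x t = x0 + ∫ s in (0:ℝ)..t, F s (x s)) ∧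
      ∀ (z : ℝ → E), Continuous z → ∀ ε : ℝ,
        (∀ t ∈ Icc 0 T, ‖x0 + (∫ s in (0:ℝ)..t, F s (z s)) - z t‖ ≤ ε) →
        ∀ t ∈ Icc 0 T, ‖x t - z t‖ ≤
          ((∑ i ∈ Finset.range m, (L*T)^i) / (1 - (L*T)^m / (Nat.factorial m))) * ε := by
  have h0T : (0:ℝ) ∈ Icc (0:ℝ) T := ⟨le_refl _, hT.le⟩
  set ext : C(Icc (0:ℝ) T, E) → ℝ → E := fun y s => y (projIcc 0 T hT.le s) with hext
  have extc : ∀ y, Continuous (ext y) := fun y => y.continuous.comp continuous_projIcc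
  have extapp : ∀ y, ∀ s ∈ Icc (0:ℝ) T, ∀ (hs : s ∈ Icc (0:ℝ) T), ext y s = y ⟨s, hs⟩ := by
    intro y s hs hs'
    simp only [hext]
    exact congrArg y (projIcc_of_mem hT.le hs')
  -- integrability
  have intOn : ∀ y : C(Icc (0:ℝ) T, E),
      IntegrableOn (fun s => F s (ext y s)) (Icc 0 T) volume := by
    intro y
    refine Integrable.mono' (g := fun _ => L + L * ‖y‖) ?_ (hFm _ (extc y)) ?_
    · exact integrableOn_const measure_Icc_lt_top.ne
    · refine Filter.Eventually.of_forall (fun s => ?_)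
      refine (hFbd s _).trans ?_
      have h1 : ‖ext y s‖ ≤ ‖y‖ := by
        rw [hext]; exact ContinuousMap.norm_coe_le_norm y (projIcc 0 T hT.le s)
      nlinarith [hL.le]
  have ii : ∀ y : C(Icc (0:ℝ) T, E), ∀ t ∈ Icc (0:ℝ) T,
      IntervalIntegrable (fun s => F s (ext y s)) volume 0 t := by
    intro y t ht
    rw [intervalIntegrable_iff_integrableOn_Ioc_of_le ht.1]
    exact (intOn y).mono_set ((Ioc_subset_Icc_self).trans (Icc_subset_Icc le_rfl ht.2))
  -- the Picard operator
  have contPhi : ∀ y : C(Icc (0:ℝ) T, E),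
      Continuous (fun t : Icc (0:ℝ) T => x0 + ∫ s in Ioc (0:ℝ) (t:ℝ), F s (ext y s)) := by
    intro y
    have := (intervalIntegral.continuousOn_primitive (f := fun s => F s (ext y s)) (μ := volume)
      (a := 0) (b := T) (intOn y)).restrict
    exact continuous_const.add (this.comp (continuous_id.subtype_map (fun x hx => hx)) |>.congr
      (fun t => rfl))
  set Phi : C(Icc (0:ℝ) T, E) → C(Icc (0:ℝ) T, E) := fun y =>
    ⟨fun t => x0 + ∫ s in Ioc (0:ℝ) (t:ℝ), F s (ext y s), contPhi y⟩ with hPhi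
  have Phieq : ∀ y (t : Icc (0:ℝ) T),
      Phi y t = x0 + ∫ s in (0:ℝ)..(t:ℝ), F s (ext y s) := by
    intro y t
    simp only [hPhi, ContinuousMap.coe_mk]
    rw [intervalIntegral.integral_of_le t.2.1]
  -- the key iterate estimate
  have key : ∀ (k : ℕ) (y z : C(Icc (0:ℝ) T, E)) (t : Icc (0:ℝ) T),
      ‖(Phi^[k] y) t - (Phi^[k] z) t‖ ≤ (L*(t:ℝ))^k / (Nat.factorial k) * dist y z := by
    intro k
    induction k with
    | zero =>
      intro y z t
      simp only [Function.iterate_zero, id_eq, pow_zero, Nat.factorial_zero, Nat.cast_one,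
        div_one, one_mul, ← dist_eq_norm]
      exact ContinuousMap.dist_apply_le_dist t
    | succ k ihk =>
      intro y z t
      rw [Function.iterate_succ_apply', Function.iterate_succ_apply']
      set Y := Phi^[k] y
      set Z := Phi^[k] z
      rw [Phieq, Phieq]
      have hib : ∀ w : C(Icc (0:ℝ) T, E),
          IntervalIntegrable (fun s => F s (ext w s)) volume 0 (t:ℝ) := fun w => ii w t t.2
      have hsub : ‖(x0 + ∫ s in (0:ℝ)..(t:ℝ), F s (ext Y s)) -
          (x0 + ∫ s in (0:ℝ)..(t:ℝ), F s (ext Z s))‖ =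
          ‖∫ s in (0:ℝ)..(t:ℝ), (F s (ext Y s) - F s (ext Z s))‖ := by
        rw [intervalIntegral.integral_sub (hib Y) (hib Z)]
        congr 1
        abel
      rw [hsub]
      have hbd : ∀ s ∈ uIoc (0:ℝ) (t:ℝ), ‖F s (ext Y s) - F s (ext Z s)‖ ≤
          L * ((L*s)^k / (Nat.factorial k) * dist y z) := by
        intro s hs
        rw [uIoc_of_le t.2.1] at hs
        have hsT : s ∈ Icc (0:ℝ) T := ⟨hs.1.le, hs.2.trans t.2.2⟩
        refine (hFlip s _ _).trans ?_
        refine mul_le_mul_of_nonneg_left ?_ hL.le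
        rw [extapp Y s hsT hsT, extapp Z s hsT hsT]
        exact ihk y z ⟨s, hsT⟩
      have hIb : IntervalIntegrable (fun s => L * ((L*s)^k / (Nat.factorial k) * dist y z))
          volume 0 (t:ℝ) := (Continuous.intervalIntegrable (by fun_prop) _ _)
      have hnorm := intervalIntegral.norm_integral_le_abs_of_norm_le
        (f := fun s => F s (ext Y s) - F s (ext Z s))
        (g := fun s => L * ((L*s)^k / (Nat.factorial k) * dist y z))
        (μ := volume) (a := 0) (b := (t:ℝ))
        ((MeasureTheory.ae_restrict_iff' measurableSet_uIoc).2
          (Filter.Eventually.of_forall hbd)) hIb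
      have ht0 : (0:ℝ) ≤ (t:ℝ) := t.2.1
      have hcalc : (∫ s in (0:ℝ)..(t:ℝ), L * ((L*s)^k / (Nat.factorial k) * dist y z))
          = (L*(t:ℝ))^(k+1) / (Nat.factorial (k+1)) * dist y z := by
        have harr : ∀ s:ℝ, L * ((L*s)^k / (Nat.factorial k) * dist y z)
            = (L^(k+1) / (Nat.factorial k) * dist y z) * s^k := by
          intro s; rw [mul_pow]; ring
        simp_rw [harr]
        rw [intervalIntegral.integral_const_mul, integral_pow]
        have hfk : ((Nat.factorial k : ℝ)) ≠ 0 := by positivity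
        have hfk1 : ((Nat.factorial (k+1) : ℝ)) ≠ 0 := by positivity
        rw [Nat.factorial_succ, mul_pow]
        push_cast
        field_simp
        ring
      refine le_trans hnorm ?_
      rw [hcalc]
      rw [abs_of_nonneg (mul_nonneg (div_nonneg (pow_nonneg (mul_nonneg hL.le ht0) _)
        (Nat.cast_nonneg _)) dist_nonneg)]
  have hd0 : (0:ℝ) ≤ L*T := mul_nonneg hL.le hT.le
  -- distance versions
  have distm : ∀ (k : ℕ) (y z : C(Icc (0:ℝ) T, E)),
      dist (Phi^[k] y) (Phi^[k] z) ≤ (L*T)^k / (Nat.factorial k) * dist y z := by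
    intro k y z
    rw [ContinuousMap.dist_le (by positivity)]
    intro t
    rw [dist_eq_norm]
    refine (key k y z t).trans ?_
    have : (L*(t:ℝ))^k ≤ (L*T)^k :=
      pow_le_pow_left₀ (mul_nonneg hL.le t.2.1) (by nlinarith [t.2.2]) k
    have hfk : (0:ℝ) < (Nat.factorial k : ℝ) := by positivity
    gcongr
  have lip1 : ∀ y z : C(Icc (0:ℝ) T, E), dist (Phi y) (Phi z) ≤ (L*T) * dist y z := by
    intro y z
    have := distm 1 y z
    simpa using this
  -- contraction
  set q : ℝ := (L*T)^m / (Nat.factorial m) with hqdef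
  have hq0 : 0 ≤ q := by positivity
  have hcon : ContractingWith q.toNNReal (Phi^[m]) := by
    constructor
    · rwa [← NNReal.coe_lt_one, Real.coe_toNNReal _ hq0]
    · refine LipschitzWith.of_dist_le_mul (fun y z => ?_)
      rw [Real.coe_toNNReal _ hq0]
      exact distm m y z
  haveI : Nonempty C(Icc (0:ℝ) T, E) := ⟨ContinuousMap.const _ x0⟩
  set xstar := hcon.fixedPoint with hxs
  have hfixm : Phi^[m] xstar = xstar := hcon.fixedPoint_isFixedPt
  have hfix : Phi xstar = xstar := by
    refine hcon.fixedPoint_unique ?_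
    show Phi^[m] (Phi xstar) = Phi xstar
    rw [← Function.iterate_succ_apply, Function.iterate_succ_apply', hfixm]
  refine ⟨ext xstar, extc xstar, ?_, ?_⟩
  · intro t ht
    have h1 : ext xstar t = xstar ⟨t, ht⟩ := extapp xstar t ht ht
    rw [h1, ← hfix, Phieq, hfix]
  · intro z hzc ε hz
    have hε0 : 0 ≤ ε := le_trans (norm_nonneg _) (by simpa using hz 0 h0T)
    set zr : C(Icc (0:ℝ) T, E) := ⟨fun t => z t, hzc.comp continuous_subtype_val⟩ with hzr
    have hzrext : ∀ s ∈ Icc (0:ℝ) T, ext zr s = z s := by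
      intro s hs
      rw [extapp zr s hs hs]
      rfl
    have h1 : dist (Phi zr) zr ≤ ε := by
      rw [ContinuousMap.dist_le hε0]
      intro t
      rw [Phieq, dist_eq_norm]
      have : (∫ s in (0:ℝ)..(t:ℝ), F s (ext zr s)) = ∫ s in (0:ℝ)..(t:ℝ), F s (z s) := by
        refine intervalIntegral.integral_congr (fun s hs => ?_)
        rw [uIcc_of_le t.2.1] at hs
        rw [hzrext s ⟨hs.1, hs.2.trans t.2.2⟩]
      rw [this]
      exact hz t t.2
    have Dm : ∀ j : ℕ, dist (Phi^[j] zr) zr ≤ (∑ i ∈ Finset.range j, (L*T)^i) * ε := by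
      intro j
      induction j with
      | zero => simp
      | succ j ihj =>
        calc dist (Phi^[j+1] zr) zr ≤ dist (Phi^[j+1] zr) (Phi zr) + dist (Phi zr) zr :=
              dist_triangle _ _ _
        _ ≤ (L*T) * dist (Phi^[j] zr) zr + ε := by
              refine add_le_add ?_ h1
              rw [Function.iterate_succ_apply']
              exact lip1 _ _
        _ ≤ (L*T) * ((∑ i ∈ Finset.range j, (L*T)^i) * ε) + ε := by
              refine add_le_add_left (mul_le_mul_of_nonneg_left ihj hd0) ε
        _ = (∑ i ∈ Finset.range (j+1), (L*T)^i) * ε := by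
              rw [geom_sum_succ]; ring
    have hle : dist xstar zr ≤ (∑ i ∈ Finset.range m, (L*T)^i) / (1 - q) * ε := by
      have h2 : dist xstar zr ≤ q * dist xstar zr + (∑ i ∈ Finset.range m, (L*T)^i) * ε := by
        calc dist xstar zr ≤ dist (Phi^[m] xstar) (Phi^[m] zr) + dist (Phi^[m] zr) zr := by
              rw [hfixm]; exact dist_triangle _ _ _
        _ ≤ q * dist xstar zr + (∑ i ∈ Finset.range m, (L*T)^i) * ε :=
              add_le_add (distm m xstar zr) (Dm m)
      have h3 : (1 - q) * dist xstar zr ≤ (∑ i ∈ Finset.range m, (L*T)^i) * ε := by linarith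
      rw [div_mul_eq_mul_div, le_div_iff₀ (by linarith : (0:ℝ) < 1 - q)]
      linarith [h3]
    intro t ht
    have : ‖ext xstar t - z t‖ = dist (xstar ⟨t, ht⟩) (zr ⟨t, ht⟩) := by
      rw [extapp xstar t ht ht, dist_eq_norm]
      rfl
    rw [this]
    exact (ContinuousMap.dist_apply_le_dist _).trans hle
end picard

noncomputable def psi (k : ℕ) (α T : ℝ) (s : ℝ) : ℝ :=
  (if Int.fract (s * k / T) < α then (1:ℝ) else 0) - α

lemma psi_meas (k : ℕ) (α T : ℝ) : Measurable (psi k α T) := by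
  unfold psi
  refine Measurable.sub ?_ measurable_const
  refine Measurable.ite ?_ measurable_const measurable_const
  exact measurableSet_lt (measurable_fract.comp (by fun_prop)) measurable_const

lemma psi_bd {α : ℝ} (hα : α ∈ Icc (0:ℝ) 1) (k : ℕ) (T s : ℝ) : |psi k α T s| ≤ 1 := by
  unfold psi
  rcases hα with ⟨h0, h1⟩
  split <;> [skip; skip] <;> rw [abs_le] <;> constructor <;> linarith

lemma psi_periodic {T : ℝ} (hT : 0 < T) {k : ℕ} (hk : 1 ≤ k) (α : ℝ) :
    Function.Periodic (psi k α T) (T / k) := by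
  intro s
  unfold psi
  have hk0 : (k:ℝ) ≠ 0 := by positivity
  have : (s + T / k) * k / T = s * k / T + 1 := by field_simp
  rw [this, Int.fract_add_one]

lemma psi_int {α : ℝ} (hα : α ∈ Icc (0:ℝ) 1) (k : ℕ) (T a b : ℝ) :
    IntervalIntegrable (psi k α T) volume a b := by
  refine IntervalIntegrable.mono_fun (intervalIntegrable_const (c := (1:ℝ)))
    (psi_meas k α T).aestronglyMeasurable ?_
  refine Filter.Eventually.of_forall (fun s => ?_)
  simpa using psi_bd hα k T s

lemma psi_period_zero {T α : ℝ} (hT : 0 < T) (hα : α ∈ Icc (0:ℝ) 1) {k : ℕ} (hk : 1 ≤ k)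
    (a : ℝ) : (∫ s in a..(a + T / k), psi k α T s) = 0 := by
  have hh : (0:ℝ) < T / k := by positivity
  have hk0 : (k:ℝ) ≠ 0 := by positivity
  rw [(psi_periodic hT hk α).intervalIntegral_add_eq a 0]
  rw [zero_add]
  set h := T / k with hh'
  have hαh : 0 ≤ α * h := mul_nonneg hα.1 hh.le
  have hαh2 : α * h ≤ h := by nlinarith [hα.2]
  have hsplit : (∫ s in (0:ℝ)..h, psi k α T s)
      = (∫ s in (0:ℝ)..(α*h), psi k α T s) + ∫ s in (α*h)..h, psi k α T s := by
    rw [intervalIntegral.integral_add_adjacent_intervals (psi_int hα k T _ _) (psi_int hα k T _ _)]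
  have e1 : (∫ s in (0:ℝ)..(α*h), psi k α T s) = (1 - α) * (α * h) := by
    rw [intervalIntegral.integral_of_le hαh, integral_Ioc_eq_integral_Ioo]
    rw [setIntegral_congr_fun measurableSet_Ioo (g := fun _ => (1:ℝ) - α) ?_]
    · simp [Real.volume_Ioo, hαh]
      ring
    · intro s hs
      unfold psi
      have h1 : s * k / T = s / h := by rw [hh']; field_simp
      have h2 : 0 < s / h := div_pos hs.1 hh
      have h3 : s / h < α := (div_lt_iff₀ hh).2 (by linarith [hs.2])
      have h4 : s / h < 1 := lt_of_lt_of_le h3 hα.2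
      rw [h1, Int.fract_eq_self.2 ⟨h2.le, h4⟩, if_pos h3]
  have e2 : (∫ s in (α*h)..h, psi k α T s) = (0 - α) * (h - α * h) := by
    rw [intervalIntegral.integral_of_le hαh2, integral_Ioc_eq_integral_Ioo]
    rw [setIntegral_congr_fun measurableSet_Ioo (g := fun _ => (0:ℝ) - α) ?_]
    · simp [Real.volume_Ioo, hαh2]
      ring
    · intro s hs
      unfold psi
      have h1 : s * k / T = s / h := by rw [hh']; field_simp
      have h2 : 0 < s := lt_of_le_of_lt hαh hs.1
      have h4 : s / h < 1 := (div_lt_one hh).2 hs.2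
      have h3 : ¬ (s / h < α) := by
        push_neg
        rw [le_div_iff₀ hh]
        linarith [hs.1]
      rw [h1, Int.fract_eq_self.2 ⟨(div_pos h2 hh).le, h4⟩, if_neg h3]
  rw [hsplit, e1, e2]
  ring

lemma psi_primitive_bd {T α : ℝ} (hT : 0 < T) (hα : α ∈ Icc (0:ℝ) 1) {k : ℕ} (hk : 1 ≤ k)
    {s : ℝ} (hs : 0 ≤ s) : |∫ r in (0:ℝ)..s, psi k α T r| ≤ T / k := by
  set h := T / k with hh'
  have hh : (0:ℝ) < h := by positivity
  have per : ∀ x : ℝ, (∫ r in (0:ℝ)..(x + h), psi k α T r) = ∫ r in (0:ℝ)..x, psi k α T r := by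
    intro x
    rw [← intervalIntegral.integral_add_adjacent_intervals (psi_int hα k T 0 x)
      (psi_int hα k T x (x + h)), psi_period_zero hT hα hk x, add_zero]
  have iter : ∀ (N : ℕ) (x : ℝ), (∫ r in (0:ℝ)..(x + N * h), psi k α T r)
      = ∫ r in (0:ℝ)..x, psi k α T r := by
    intro N
    induction N with
    | zero => intro x; norm_num
    | succ N ih =>
      intro x
      have : x + (N + 1 : ℕ) * h = (x + N * h) + h := by push_cast; ring
      rw [this, per, ih]
  set n : ℕ := ⌊s / h⌋.toNat with hn
  have hfl : (0:ℤ) ≤ ⌊s / h⌋ := Int.floor_nonneg.2 (by positivity)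
  have hnc : (n : ℝ) = (⌊s / h⌋ : ℤ) := by
    rw [hn]; exact_mod_cast congrArg (fun z : ℤ => (z : ℝ)) (Int.toNat_of_nonneg hfl)
  set r := s - n * h with hr
  have hr0 : 0 ≤ r := by
    have := Int.floor_le (s / h)
    rw [hr, hnc]
    have : (⌊s / h⌋ : ℝ) * h ≤ s / h * h := by nlinarith [Int.floor_le (s / h)]
    rw [div_mul_cancel₀ s hh.ne'] at this
    linarith
  have hrh : r ≤ h := by
    have := Int.lt_floor_add_one (s / h)
    rw [hr, hnc]
    have h2 : s / h * h < ((⌊s / h⌋ : ℝ) + 1) * h := by nlinarith [Int.lt_floor_add_one (s / h)]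
    rw [div_mul_cancel₀ s hh.ne'] at h2
    nlinarith
  have hsr : s = r + n * h := by rw [hr]; ring
  rw [hsr, iter n r]
  have := intervalIntegral.norm_integral_le_of_norm_le_const
    (f := psi k α T) (a := 0) (b := r) (C := 1) (fun x _ => by simpa using psi_bd hα k T x)
  rw [Real.norm_eq_abs] at this
  calc |∫ x in (0:ℝ)..r, psi k α T x| ≤ 1 * |r - 0| := this
  _ ≤ h := by rw [one_mul, sub_zero, abs_of_nonneg hr0]; exact hrh

lemma floor_decomp {h t : ℝ} (hh : 0 < h) (ht : 0 ≤ t) :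
    (⌊t/h⌋.toNat : ℝ) * h ≤ t ∧ t - (⌊t/h⌋.toNat : ℝ) * h ≤ h := by
  have hfl : (0:ℤ) ≤ ⌊t / h⌋ := Int.floor_nonneg.2 (by positivity)
  have hnc : ((⌊t/h⌋.toNat : ℕ) : ℝ) = (⌊t / h⌋ : ℤ) := by
    exact_mod_cast congrArg (fun z : ℤ => (z : ℝ)) (Int.toNat_of_nonneg hfl)
  constructor
  · rw [hnc]
    have h1 : (⌊t / h⌋ : ℝ) * h ≤ t / h * h := by nlinarith [Int.floor_le (t / h)]
    rwa [div_mul_cancel₀ t hh.ne'] at h1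
  · rw [hnc]
    have h2 : t / h * h < ((⌊t / h⌋ : ℝ) + 1) * h := by nlinarith [Int.lt_floor_add_one (t / h)]
    rw [div_mul_cancel₀ t hh.ne'] at h2
    nlinarith

lemma osc {F : Type*} [NormedAddCommGroup F] [NormedSpace ℝ F] [CompleteSpace F] (T α : ℝ) (hT : 0 < T)
    (hα : α ∈ Icc (0:ℝ) 1) (g : ℝ → F) (hg : IntegrableOn g (Icc 0 T) volume)
    {η : ℝ} (hη : 0 < η) :
    ∃ K : ℕ, 1 ≤ K ∧ ∀ k : ℕ, K ≤ k → ∀ t ∈ Icc (0:ℝ) T,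
      ‖∫ s in (0:ℝ)..t, psi k α T s • g s‖ ≤ η := by
  classical
  set g1 : ℝ → F := Set.indicator (Icc 0 T) g with hg1def
  have hg1 : Integrable g1 volume := hg.integrable_indicator measurableSet_Icc
  obtain ⟨φ, φsupp, φL1, φcont, φint⟩ :=
    hg1.exists_hasCompactSupport_integral_sub_le (by positivity : (0:ℝ) < η/3)
  obtain ⟨M0, hM0⟩ := φsupp.exists_bound_of_continuous φcont
  set M : ℝ := max M0 0 with hM
  have hMnn : 0 ≤ M := le_max_right _ _
  have hMbd : ∀ x, ‖φ x‖ ≤ M := fun x => (hM0 x).trans (le_max_left _ _)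
  set ε' : ℝ := η / (3 * (T + 1)) with hε'
  have hε'pos : 0 < ε' := by positivity
  obtain ⟨δ, hδpos, hδ⟩ := Metric.uniformContinuous_iff.1
    (φsupp.uniformContinuous_of_continuous φcont) ε' hε'pos
  set c : ℝ := min δ (η / (3 * (M + 1))) with hc
  have hcpos : 0 < c := lt_min hδpos (by positivity)
  obtain ⟨K, hK⟩ := exists_nat_gt (T / c)
  have hK1 : 1 ≤ K := by
    by_contra hcon
    push_neg at hcon
    interval_cases K
    · simp at hK
      nlinarith [div_pos hT hcpos]
  refine ⟨K, hK1, fun k hk t ht => ?_⟩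
  have hk1 : 1 ≤ k := le_trans hK1 hk
  have hkpos : (0:ℝ) < k := by exact_mod_cast hk1
  set h : ℝ := T / k with hh'
  have hh : 0 < h := by positivity
  have hhc : h < c := by
    rw [hh', div_lt_iff₀ hkpos]
    calc T = (T / c) * c := by field_simp
    _ < K * c := by exact mul_lt_mul_of_pos_right hK hcpos
    _ ≤ c * k := by
        rw [mul_comm]
        exact mul_le_mul_of_nonneg_left (by exact_mod_cast hk) hcpos.le
  have hhδ : h < δ := lt_of_lt_of_le hhc (min_le_left _ _)
  have hhM : h ≤ η / (3 * (M + 1)) := (lt_of_lt_of_le hhc (min_le_right _ _)).le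
  -- integrability facts
  have ψm := psi_meas k α T
  have ψb : ∀ s, |psi k α T s| ≤ 1 := psi_bd hα k T
  have hgsm : IntegrableOn (fun s => psi k α T s • g s) (Icc 0 T) volume := by
    refine Integrable.mono' hg.norm
      ((ψm.aestronglyMeasurable.restrict).smul hg.aestronglyMeasurable) ?_
    refine Filter.Eventually.of_forall (fun s => ?_)
    rw [norm_smul, Real.norm_eq_abs]
    calc |psi k α T s| * ‖g s‖ ≤ 1 * ‖g s‖ :=
      mul_le_mul_of_nonneg_right (ψb s) (norm_nonneg _)
    _ = ‖g s‖ := one_mul _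
  have iig : IntervalIntegrable (fun s => psi k α T s • g s) volume 0 t := by
    rw [intervalIntegrable_iff_integrableOn_Ioc_of_le ht.1]
    exact hgsm.mono_set (Ioc_subset_Icc_self.trans (Icc_subset_Icc le_rfl ht.2))
  have iiφ : ∀ a b : ℝ, IntervalIntegrable (fun s => psi k α T s • φ s) volume a b := by
    intro a b
    refine IntervalIntegrable.mono_fun (intervalIntegrable_const (c := M))
      ((ψm.aestronglyMeasurable).smul φcont.aestronglyMeasurable).restrict ?_
    refine Filter.Eventually.of_forall (fun s => ?_)
    show ‖psi k α T s • φ s‖ ≤ |M|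
    rw [norm_smul, Real.norm_eq_abs, abs_of_nonneg hMnn]
    calc |psi k α T s| * ‖φ s‖ ≤ 1 * M :=
      mul_le_mul (ψb s) (hMbd s) (norm_nonneg _) one_pos.le
    _ = M := one_mul _
  have iigφ : IntervalIntegrable (fun s => psi k α T s • (g s - φ s)) volume 0 t := by
    have := iig.sub (iiφ 0 t)
    refine this.congr ?_
    intro s _
    show psi k α T s • g s - psi k α T s • φ s = psi k α T s • (g s - φ s)
    exact (smul_sub _ _ _).symm
  -- split
  have hsplit : (∫ s in (0:ℝ)..t, psi k α T s • g s)
      = (∫ s in (0:ℝ)..t, psi k α T s • (g s - φ s)) + ∫ s in (0:ℝ)..t, psi k α T s • φ s := by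
    rw [← intervalIntegral.integral_add iigφ (iiφ 0 t)]
    congr 1
    funext s
    rw [smul_sub]
    abel
  rw [hsplit]
  have term1 : ‖∫ s in (0:ℝ)..t, psi k α T s • (g s - φ s)‖ ≤ η/3 := by
    have hsubn : IntegrableOn (fun s => ‖g s - φ s‖) (Icc 0 T) volume :=
      (Integrable.sub hg φint.integrableOn).norm
    have hbint : IntervalIntegrable (fun s => ‖g s - φ s‖) volume 0 t := by
      rw [intervalIntegrable_iff_integrableOn_Ioc_of_le ht.1]
      exact hsubn.mono_set (Ioc_subset_Icc_self.trans (Icc_subset_Icc le_rfl ht.2))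
    have h1 := intervalIntegral.norm_integral_le_abs_of_norm_le
      (f := fun s => psi k α T s • (g s - φ s)) (g := fun s => ‖g s - φ s‖)
      (μ := volume) (a := 0) (b := t)
      (Filter.Eventually.of_forall (fun s => by
        rw [norm_smul, Real.norm_eq_abs]
        calc |psi k α T s| * ‖g s - φ s‖ ≤ 1 * ‖g s - φ s‖ :=
          mul_le_mul_of_nonneg_right (ψb s) (norm_nonneg _)
        _ = ‖g s - φ s‖ := one_mul _)) hbint
    refine h1.trans ?_
    rw [intervalIntegral.integral_of_le ht.1, abs_of_nonneg
      (setIntegral_nonneg measurableSet_Ioc (fun x _ => norm_nonneg _))]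
    have h2 : (∫ s in Ioc 0 t, ‖g s - φ s‖) ≤ ∫ s in Icc 0 T, ‖g s - φ s‖ := by
      refine setIntegral_mono_set hsubn ?_ ?_
      · exact Filter.Eventually.of_forall (fun x => norm_nonneg _)
      · exact HasSubset.Subset.eventuallyLE
          (Ioc_subset_Icc_self.trans (Icc_subset_Icc le_rfl ht.2))
    refine h2.trans ?_
    have h3 : (∫ s in Icc 0 T, ‖g s - φ s‖) = ∫ s in Icc 0 T, ‖g1 s - φ s‖ := by
      refine setIntegral_congr_fun measurableSet_Icc (fun x hx => ?_)
      rw [hg1def, Set.indicator_of_mem hx]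
    rw [h3]
    refine le_trans (setIntegral_le_integral (hg1.sub φint).norm
      (Filter.Eventually.of_forall (fun x => norm_nonneg _))) φL1
  have term2 : ‖∫ s in (0:ℝ)..t, psi k α T s • φ s‖ ≤ η/3 + η/3 := by
    set N : ℕ := ⌊t / h⌋.toNat with hN
    obtain ⟨hNle, hNup⟩ := floor_decomp hh ht.1
    have piece : ∀ i : ℕ, ‖∫ s in ((i:ℝ)*h)..((i:ℝ)*h + h), psi k α T s • φ s‖ ≤ ε' * h := by
      intro i
      have hzero : (∫ s in ((i:ℝ)*h)..((i:ℝ)*h + h), psi k α T s) = 0 :=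
        psi_period_zero hT hα hk1 _
      have hdecomp : (∫ s in ((i:ℝ)*h)..((i:ℝ)*h + h), psi k α T s • φ s)
          = ∫ s in ((i:ℝ)*h)..((i:ℝ)*h + h), psi k α T s • (φ s - φ ((i:ℝ)*h)) := by
        have e1 : (∫ s in ((i:ℝ)*h)..((i:ℝ)*h + h), psi k α T s • (φ s - φ ((i:ℝ)*h)))
            = (∫ s in ((i:ℝ)*h)..((i:ℝ)*h + h), psi k α T s • φ s)
              - (∫ s in ((i:ℝ)*h)..((i:ℝ)*h + h), psi k α T s) • φ ((i:ℝ)*h) := by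
          rw [← intervalIntegral.integral_smul_const,
            ← intervalIntegral.integral_sub (iiφ _ _)]
          · congr 1
            funext s
            rw [smul_sub]
          · exact ⟨((psi_int hα k T _ _).1).smul_const _, ((psi_int hα k T _ _).2).smul_const _⟩
        rw [e1, hzero, zero_smul, sub_zero]
      rw [hdecomp]
      have hbound := intervalIntegral.norm_integral_le_of_norm_le_const
        (f := fun s => psi k α T s • (φ s - φ ((i:ℝ)*h))) (C := ε')
        (a := (i:ℝ)*h) (b := (i:ℝ)*h + h) ?_
      · refine hbound.trans ?_
        have : |(i:ℝ)*h + h - (i:ℝ)*h| = h := by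
          rw [add_sub_cancel_left, abs_of_nonneg hh.le]
        rw [this]
      · intro s hs
        rw [uIoc_of_le (by linarith : (i:ℝ)*h ≤ (i:ℝ)*h + h)] at hs
        have hd : dist s ((i:ℝ)*h) < δ := by
          rw [Real.dist_eq, abs_of_nonneg (by linarith [hs.1.le] : 0 ≤ s - (i:ℝ)*h)]
          have := hs.2
          linarith [hhδ]
        have := hδ hd
        rw [dist_eq_norm] at this
        rw [norm_smul, Real.norm_eq_abs]
        calc |psi k α T s| * ‖φ s - φ ((i:ℝ)*h)‖ ≤ 1 * ε' :=
          mul_le_mul (ψb s) this.le (norm_nonneg _) one_pos.le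
        _ = ε' := one_mul _
    have hsum : ∑ i ∈ Finset.range N, (∫ s in ((i:ℝ)*h)..(((i+1:ℕ):ℝ)*h), psi k α T s • φ s)
        = ∫ s in (((0:ℕ):ℝ)*h)..(((N:ℕ):ℝ)*h), psi k α T s • φ s :=
      intervalIntegral.sum_integral_adjacent_intervals (fun i _ => iiφ _ _)
    have split2 : (∫ s in (0:ℝ)..t, psi k α T s • φ s)
        = (∫ s in (0:ℝ)..((N:ℝ)*h), psi k α T s • φ s)
          + ∫ s in ((N:ℝ)*h)..t, psi k α T s • φ s :=
      (intervalIntegral.integral_add_adjacent_intervals (iiφ _ _) (iiφ _ _)).symm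
    rw [split2]
    have b1 : ‖∫ s in (0:ℝ)..((N:ℝ)*h), psi k α T s • φ s‖ ≤ η/3 := by
      have e0 : (((0:ℕ):ℝ)*h) = (0:ℝ) := by norm_num
      rw [← e0, ← hsum]
      refine (norm_sum_le _ _).trans ?_
      have hterm : ∀ i ∈ Finset.range N,
          ‖∫ s in ((i:ℝ)*h)..(((i+1:ℕ):ℝ)*h), psi k α T s • φ s‖ ≤ ε' * h := by
        intro i _
        have : (((i+1:ℕ)):ℝ)*h = (i:ℝ)*h + h := by push_cast; ring
        rw [this]
        exact piece i
      refine (Finset.sum_le_sum hterm).trans ?_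
      rw [Finset.sum_const, Finset.card_range, nsmul_eq_mul]
      have hNhT : (N:ℝ) * h ≤ T := le_trans hNle ht.2
      have : (N:ℝ) * (ε' * h) = ε' * ((N:ℝ)*h) := by ring
      rw [this]
      have h1 : ε' * ((N:ℝ)*h) ≤ ε' * T := mul_le_mul_of_nonneg_left hNhT hε'pos.le
      refine h1.trans ?_
      rw [hε']
      rw [div_mul_eq_mul_div, div_le_div_iff₀ (by linarith) (by norm_num : (0:ℝ) < 3)]
      nlinarith
    have b2 : ‖∫ s in ((N:ℝ)*h)..t, psi k α T s • φ s‖ ≤ η/3 := by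
      have hbound := intervalIntegral.norm_integral_le_of_norm_le_const
        (f := fun s => psi k α T s • φ s) (C := M) (a := (N:ℝ)*h) (b := t) ?_
      · refine hbound.trans ?_
        have habs : |t - (N:ℝ)*h| ≤ h := by
          rw [abs_of_nonneg (by linarith : 0 ≤ t - (N:ℝ)*h)]
          exact hNup
        have h1 : M * |t - (N:ℝ)*h| ≤ M * h := mul_le_mul_of_nonneg_left habs hMnn
        refine h1.trans ?_
        have h2 : M * h ≤ M * (η / (3 * (M+1))) := mul_le_mul_of_nonneg_left hhM hMnn
        refine h2.trans ?_
        have h3 : M * (η / (3*(M+1))) ≤ (M+1) * (η / (3*(M+1))) :=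
          mul_le_mul_of_nonneg_right (by linarith) (by positivity)
        refine h3.trans ?_
        have h4 : (M+1) * (η / (3*(M+1))) = η/3 := by
          field_simp
        rw [h4]
      · intro s hs
        rw [norm_smul, Real.norm_eq_abs]
        calc |psi k α T s| * ‖φ s‖ ≤ 1 * M :=
          mul_le_mul (ψb s) (hMbd s) (norm_nonneg _) one_pos.le
        _ = M := one_mul _
    exact (norm_add_le _ _).trans (add_le_add b1 b2)
  calc ‖(∫ s in (0:ℝ)..t, psi k α T s • (g s - φ s)) + ∫ s in (0:ℝ)..t, psi k α T s • φ s‖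
      ≤ ‖∫ s in (0:ℝ)..t, psi k α T s • (g s - φ s)‖ + ‖∫ s in (0:ℝ)..t, psi k α T s • φ s‖ :=
        norm_add_le _ _
  _ ≤ η/3 + (η/3 + η/3) := add_le_add term1 term2
  _ = η := by ring

set_option maxHeartbeats 1000000 in
theorem stmt_3 {n : ℕ} {U : Type*} [MetricSpace U] [TopologicalSpace.SeparableSpace U]
    [MeasurableSpace U] [BorelSpace U]
    (T L : ℝ) (hT : 0 < T) (hL : 0 < L)
    (x0 : EuclideanSpace ℝ (Fin n))
    (f : ℝ → EuclideanSpace ℝ (Fin n) → U → EuclideanSpace ℝ (Fin n))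
    (f0 : ℝ → EuclideanSpace ℝ (Fin n) → U → ℝ)
    (fx : ℝ → EuclideanSpace ℝ (Fin n) → U → (EuclideanSpace ℝ (Fin n) →L[ℝ] EuclideanSpace ℝ (Fin n)))
    (f0x : ℝ → EuclideanSpace ℝ (Fin n) → U → EuclideanSpace ℝ (Fin n))
    -- (S2)
    (hfm : ∀ x u, Measurable (fun t => f t x u))
    (hf0m : ∀ x u, Measurable (fun t => f0 t x u))
    (hfc : ∀ t, Continuous (fun p : EuclideanSpace ℝ (Fin n) × U => f t p.1 p.2))
    (hf0c : ∀ t, Continuous (fun p : EuclideanSpace ℝ (Fin n) × U => f0 t p.1 p.2))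
    (hdf : ∀ t x u, HasFDerivAt (fun y => f t y u) (fx t x u) x)
    (hdf0 : ∀ t x u, HasGradientAt (fun y => f0 t y u) (f0x t x u) x)
    (hfLip : ∀ t x x' u, ‖f t x u - f t x' u‖ ≤ L * ‖x - x'‖)
    (hf0Lip : ∀ t x x' u, |f0 t x u - f0 t x' u| ≤ L * ‖x - x'‖)
    (hfbd : ∀ t u, ‖f t 0 u‖ ≤ L)
    (hf0bd : ∀ t u, |f0 t 0 u| ≤ L)
    -- optimal pair
    (ubar : ℝ → U) (hubar : Measurable ubar)
    (xbar : ℝ → EuclideanSpace ℝ (Fin n)) (hxbarc : ContinuousOn xbar (Icc 0 T))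
    (hxbar : ∀ t ∈ Icc 0 T, xbar t = x0 + ∫ s in (0:ℝ)..t, f s (xbar s) (ubar s))
    (hmin : ∀ (u : ℝ → U) (x : ℝ → EuclideanSpace ℝ (Fin n)), Measurable u →
      ContinuousOn x (Icc 0 T) →
      (∀ t ∈ Icc 0 T, x t = x0 + ∫ s in (0:ℝ)..t, f s (x s) (u s)) →
      (∫ t in (0:ℝ)..T, f0 t (xbar t) (ubar t)) ≤ ∫ t in (0:ℝ)..T, f0 t (x t) (u t)) :
    -- conclusion: relaxed cost is no smaller
    ∀ α ∈ Icc (0:ℝ) 1, ∀ (u : ℝ → U), Measurable u →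
      ∀ (xα : ℝ → EuclideanSpace ℝ (Fin n)), ContinuousOn xα (Icc 0 T) →
      (∀ t ∈ Icc 0 T, xα t = x0 + ∫ s in (0:ℝ)..t,
          ((1 - α) • f s (xα s) (ubar s) + α • f s (xα s) (u s))) →
      (∫ t in (0:ℝ)..T, f0 t (xbar t) (ubar t)) ≤
        ∫ t in (0:ℝ)..T, ((1 - α) * f0 t (xα t) (ubar t) + α * f0 t (xα t) (u t)) := by
  intro α hα u hu xα hxαc hxα
  classical
  have hTmem : T ∈ Icc (0:ℝ) T := ⟨hT.le, le_rfl⟩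
  -- continuous extension of xα
  set xta : ℝ → EuclideanSpace ℝ (Fin n) := fun s => xα ((projIcc 0 T hT.le s : Icc (0:ℝ) T) : ℝ) with hxta
  have hproj : ∀ s : ℝ, ((projIcc 0 T hT.le s : Icc (0:ℝ) T) : ℝ) ∈ Icc (0:ℝ) T :=
    fun s => (projIcc 0 T hT.le s).2
  have hxtac : Continuous xta := by
    rw [hxta]
    apply hxαc.comp_continuous
    · exact continuous_subtype_val.comp continuous_projIcc
    · exact hproj
  have hxtaeq : ∀ s ∈ Icc (0:ℝ) T, xta s = xα s := by
    intro s hs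
    rw [hxta]
    simp only []
    rw [projIcc_of_mem hT.le hs]
  -- bounds
  have hfb : ∀ s x v, ‖f s x v‖ ≤ L + L * ‖x‖ := by
    intro s x v
    calc ‖f s x v‖ = ‖(f s x v - f s 0 v) + f s 0 v‖ := by rw [sub_add_cancel]
    _ ≤ ‖f s x v - f s 0 v‖ + ‖f s 0 v‖ := norm_add_le _ _
    _ ≤ L * ‖x - 0‖ + L := add_le_add (hfLip s x 0 v) (hfbd s v)
    _ = L + L * ‖x‖ := by rw [sub_zero]; ring
  have hf0b : ∀ s x v, |f0 s x v| ≤ L + L * ‖x‖ := by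
    intro s x v
    calc |f0 s x v| = |(f0 s x v - f0 s 0 v) + f0 s 0 v| := by rw [sub_add_cancel]
    _ ≤ |f0 s x v - f0 s 0 v| + |f0 s 0 v| := abs_add_le _ _
    _ ≤ L * ‖x - 0‖ + L := add_le_add (hf0Lip s x 0 v) (hf0bd s v)
    _ = L + L * ‖x‖ := by rw [sub_zero]; ring
  -- integrability helpers
  have intf : ∀ (y : ℝ → EuclideanSpace ℝ (Fin n)), Continuous y → ∀ (v : ℝ → U), Measurable v →
      IntegrableOn (fun s => f s (y s) (v s)) (Icc 0 T) volume := by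
    intro y hy v hv
    obtain ⟨My, hMy⟩ := isCompact_Icc.exists_bound_of_continuousOn (hy.continuousOn (s := Icc (0:ℝ) T))
    refine Integrable.mono' (g := fun _ => L + L * max My 0)
      (integrableOn_const measure_Icc_lt_top.ne)
      (meas_comp f hfm hfc y hy v hv).aestronglyMeasurable ?_
    rw [ae_restrict_iff' measurableSet_Icc]
    refine Filter.Eventually.of_forall (fun s hs => ?_)
    refine (hfb s (y s) (v s)).trans ?_
    have h2 := (hMy s hs).trans (le_max_left My 0)
    have h3 := mul_le_mul_of_nonneg_left h2 hL.le
    show L + L * ‖y s‖ ≤ L + L * (My ⊔ 0)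
    linarith
  have intf0 : ∀ (y : ℝ → EuclideanSpace ℝ (Fin n)), Continuous y → ∀ (v : ℝ → U), Measurable v →
      IntegrableOn (fun s => f0 s (y s) (v s)) (Icc 0 T) volume := by
    intro y hy v hv
    obtain ⟨My, hMy⟩ := isCompact_Icc.exists_bound_of_continuousOn (hy.continuousOn (s := Icc (0:ℝ) T))
    refine Integrable.mono' (g := fun _ => L + L * max My 0)
      (integrableOn_const measure_Icc_lt_top.ne)
      (meas_comp f0 hf0m hf0c y hy v hv).aestronglyMeasurable ?_
    rw [ae_restrict_iff' measurableSet_Icc]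
    refine Filter.Eventually.of_forall (fun s hs => ?_)
    rw [Real.norm_eq_abs]
    refine (hf0b s (y s) (v s)).trans ?_
    have h2 := (hMy s hs).trans (le_max_left My 0)
    have h3 := mul_le_mul_of_nonneg_left h2 hL.le
    show L + L * ‖y s‖ ≤ L + L * (My ⊔ 0)
    linarith
  have hα0 : 0 ≤ α := hα.1
  have hα1 : α ≤ 1 := hα.2
  -- the relaxed vector field
  set Fα : ℝ → EuclideanSpace ℝ (Fin n) → EuclideanSpace ℝ (Fin n) :=
    fun s x => (1 - α) • f s x (ubar s) + α • f s x (u s) with hFα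
  have intFα : ∀ (y : ℝ → EuclideanSpace ℝ (Fin n)), Continuous y →
      IntegrableOn (fun s => Fα s (y s)) (Icc 0 T) volume := by
    intro y hy
    exact ((intf y hy ubar hubar).smul (1-α)).add ((intf y hy u hu).smul α)
  -- the relaxed equation for the extension xta
  have hxtaeqn : ∀ t ∈ Icc (0:ℝ) T, xta t = x0 + ∫ s in (0:ℝ)..t, Fα s (xta s) := by
    intro t ht
    rw [hxtaeq t ht, hxα t ht]
    congr 1
    refine intervalIntegral.integral_congr (fun s hs => ?_)
    rw [uIcc_of_le ht.1] at hs
    have hs' : s ∈ Icc (0:ℝ) T := ⟨hs.1, hs.2.trans ht.2⟩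
    rw [hFα]
    simp only []
    rw [hxtaeq s hs']
  -- choose the contraction exponent
  obtain ⟨m, hm⟩ := ((FloorSemiring.tendsto_pow_div_factorial_atTop (L*T)).eventually
    (gt_mem_nhds one_pos)).exists
  have hq0 : (0:ℝ) ≤ (L*T)^m / (Nat.factorial m) := by positivity
  set Cq : ℝ := (∑ i ∈ Finset.range m, (L*T)^i) / (1 - (L*T)^m / (Nat.factorial m)) with hCq
  have hCq0 : 0 ≤ Cq := by
    refine div_nonneg (Finset.sum_nonneg (fun i _ => by positivity)) (by linarith [hm])
  -- the weak-convergence data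
  set g : ℝ → EuclideanSpace ℝ (Fin n) := fun s => f s (xta s) (u s) - f s (xta s) (ubar s)
    with hgdef
  set g0 : ℝ → ℝ := fun s => f0 s (xta s) (u s) - f0 s (xta s) (ubar s) with hg0def
  have hgint : IntegrableOn g (Icc 0 T) volume :=
    (intf xta hxtac u hu).sub (intf xta hxtac ubar hubar)
  have hg0int : IntegrableOn g0 (Icc 0 T) volume :=
    (intf0 xta hxtac u hu).sub (intf0 xta hxtac ubar hubar)
  -- it suffices to prove the bound up to every η > 0
  refine le_of_forall_pos_le_add (fun η hη => ?_)
  set η₁ : ℝ := η / (2 * (L * T * Cq + 1)) with hη₁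
  have hη₁pos : 0 < η₁ := by
    have : 0 < L * T * Cq + 1 := by nlinarith [mul_nonneg (mul_nonneg hL.le hT.le) hCq0]
    positivity
  obtain ⟨K₁, hK₁1, hK₁⟩ := osc T α hT hα g hgint hη₁pos
  obtain ⟨K₂, hK₂1, hK₂⟩ := osc T α hT hα g0 hg0int (by positivity : (0:ℝ) < η/2)
  set k : ℕ := max K₁ K₂ with hkdef
  have hk1 : 1 ≤ k := le_trans hK₁1 (le_max_left _ _)
  have hoscg := hK₁ k (le_max_left _ _)
  have hoscg0 := hK₂ k (le_max_right _ _)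
  -- chattering control
  set uk : ℝ → U := fun s => if Int.fract (s * k / T) < α then u s else ubar s with huk
  have hukm : Measurable uk := by
    refine Measurable.ite ?_ hu hubar
    exact measurableSet_lt (measurable_fract.comp (by fun_prop)) measurable_const
  set Fk : ℝ → EuclideanSpace ℝ (Fin n) → EuclideanSpace ℝ (Fin n) :=
    fun s x => f s x (uk s) with hFk
  obtain ⟨xk, hxkc, hxkeq, hxkcmp⟩ := picard T L hT hL m hm x0 Fk
    (fun y hy => (meas_comp f hfm hfc y hy uk hukm).aestronglyMeasurable)
    (fun s x x' => hfLip s x x' (uk s))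
    (fun s x => hfb s x (uk s))
  -- pointwise field identity
  have hfield : ∀ s (x : EuclideanSpace ℝ (Fin n)),
      Fk s x - Fα s x = psi k α T s • (f s x (u s) - f s x (ubar s)) := by
    intro s x
    rw [hFk, hFα]
    simp only []
    unfold psi
    rw [huk]
    simp only []
    split_ifs with hc
    · module
    · module
  -- comparison hypothesis for picard
  have hcmp : ∀ t ∈ Icc (0:ℝ) T,
      ‖x0 + (∫ s in (0:ℝ)..t, Fk s (xta s)) - xta t‖ ≤ η₁ := by
    intro t ht
    have i1 : IntervalIntegrable (fun s => Fk s (xta s)) volume 0 t := by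
      rw [intervalIntegrable_iff_integrableOn_Ioc_of_le ht.1]
      exact (intf xta hxtac uk hukm).mono_set
        (Ioc_subset_Icc_self.trans (Icc_subset_Icc le_rfl ht.2))
    have i2 : IntervalIntegrable (fun s => Fα s (xta s)) volume 0 t := by
      rw [intervalIntegrable_iff_integrableOn_Ioc_of_le ht.1]
      exact (intFα xta hxtac).mono_set
        (Ioc_subset_Icc_self.trans (Icc_subset_Icc le_rfl ht.2))
    have e : x0 + (∫ s in (0:ℝ)..t, Fk s (xta s)) - xta t
        = ∫ s in (0:ℝ)..t, psi k α T s • g s := by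
      rw [hxtaeqn t ht]
      have e2 : x0 + (∫ s in (0:ℝ)..t, Fk s (xta s))
          - (x0 + ∫ s in (0:ℝ)..t, Fα s (xta s))
          = (∫ s in (0:ℝ)..t, Fk s (xta s)) - ∫ s in (0:ℝ)..t, Fα s (xta s) := by abel
      rw [e2, ← intervalIntegral.integral_sub i1 i2]
      congr 1
      funext s
      rw [hfield s (xta s)]
    rw [e]
    exact hoscg t ht
  have hdist := hxkcmp xta hxtac η₁ hcmp
  -- apply optimality
  have hxkeq' : ∀ t ∈ Icc (0:ℝ) T, xk t = x0 + ∫ s in (0:ℝ)..t, f s (xk s) (uk s) := by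
    intro t ht
    rw [hxkeq t ht]
  have hJ1 := hmin uk xk hukm hxkc.continuousOn hxkeq'
  -- interval integrability of the cost pieces
  have iic : ∀ (y : ℝ → EuclideanSpace ℝ (Fin n)), Continuous y → ∀ (v : ℝ → U), Measurable v →
      IntervalIntegrable (fun s => f0 s (y s) (v s)) volume 0 T := by
    intro y hy v hv
    rw [intervalIntegrable_iff_integrableOn_Ioc_of_le hT.le]
    exact (intf0 y hy v hv).mono_set Ioc_subset_Icc_self
  have iiψg0 : IntervalIntegrable (fun s => psi k α T s • g0 s) volume 0 T := by
    rw [intervalIntegrable_iff_integrableOn_Ioc_of_le hT.le]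
    have hIO : IntegrableOn (fun s => psi k α T s • g0 s) (Icc 0 T) volume := by
      refine Integrable.mono' hg0int.norm
        (((psi_meas k α T).aestronglyMeasurable.restrict).smul hg0int.aestronglyMeasurable) ?_
      refine Filter.Eventually.of_forall (fun s => ?_)
      rw [norm_smul, Real.norm_eq_abs]
      calc |psi k α T s| * ‖g0 s‖ ≤ 1 * ‖g0 s‖ :=
        mul_le_mul_of_nonneg_right (psi_bd hα k T s) (norm_nonneg _)
      _ = ‖g0 s‖ := one_mul _
    exact hIO.mono_set Ioc_subset_Icc_self
  have iiIa : IntervalIntegrable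
      (fun s => (1 - α) * f0 s (xta s) (ubar s) + α * f0 s (xta s) (u s)) volume 0 T :=
    ((iic xta hxtac ubar hubar).const_mul (1-α)).add ((iic xta hxtac u hu).const_mul α)
  -- step 1 : I1 ≤ I2 + L*Cq*η₁*T
  have step1 : (∫ s in (0:ℝ)..T, f0 s (xk s) (uk s))
      ≤ (∫ s in (0:ℝ)..T, f0 s (xta s) (uk s)) + L * (Cq * η₁) * T := by
    have hdiff : (∫ s in (0:ℝ)..T, f0 s (xk s) (uk s))
        - (∫ s in (0:ℝ)..T, f0 s (xta s) (uk s))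
        = ∫ s in (0:ℝ)..T, (f0 s (xk s) (uk s) - f0 s (xta s) (uk s)) :=
      (intervalIntegral.integral_sub (iic xk hxkc uk hukm) (iic xta hxtac uk hukm)).symm
    have hb := intervalIntegral.norm_integral_le_of_norm_le_const
      (f := fun s => f0 s (xk s) (uk s) - f0 s (xta s) (uk s)) (C := L * (Cq * η₁))
      (a := 0) (b := T) ?_
    · have := (le_abs_self _).trans (by rwa [← Real.norm_eq_abs] :
        |(∫ s in (0:ℝ)..T, (f0 s (xk s) (uk s) - f0 s (xta s) (uk s)))| ≤
          L * (Cq * η₁) * |T - 0|)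
      rw [sub_zero, abs_of_nonneg hT.le] at this
      linarith [hdiff ▸ this]
    · intro s hs
      rw [uIoc_of_le hT.le] at hs
      have hs' : s ∈ Icc (0:ℝ) T := ⟨hs.1.le, hs.2⟩
      rw [Real.norm_eq_abs]
      refine (hf0Lip s (xk s) (xta s) (uk s)).trans ?_
      exact mul_le_mul_of_nonneg_left (hdist s hs') hL.le
  -- step 2 : I2 = Ia + Sψ
  have hpt : ∀ s, f0 s (xta s) (uk s)
      = ((1 - α) * f0 s (xta s) (ubar s) + α * f0 s (xta s) (u s)) + psi k α T s • g0 s := by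
    intro s
    rw [huk, hg0def]
    simp only []
    unfold psi
    rw [smul_eq_mul]
    split_ifs with hc
    · ring
    · ring
  have step2 : (∫ s in (0:ℝ)..T, f0 s (xta s) (uk s))
      = (∫ s in (0:ℝ)..T, ((1 - α) * f0 s (xta s) (ubar s) + α * f0 s (xta s) (u s)))
        + ∫ s in (0:ℝ)..T, psi k α T s • g0 s := by
    rw [← intervalIntegral.integral_add iiIa iiψg0]
    refine intervalIntegral.integral_congr (fun s _ => hpt s)
  -- step 3 : the oscillating part is small
  have step3 : (∫ s in (0:ℝ)..T, psi k α T s • g0 s) ≤ η / 2 := by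
    have := hoscg0 T hTmem
    rw [Real.norm_eq_abs] at this
    exact (le_abs_self _).trans this
  -- step 4 : replace xta by xα in the target
  have step4 : (∫ s in (0:ℝ)..T, ((1 - α) * f0 s (xta s) (ubar s) + α * f0 s (xta s) (u s)))
      = ∫ s in (0:ℝ)..T, ((1 - α) * f0 s (xα s) (ubar s) + α * f0 s (xα s) (u s)) := by
    refine intervalIntegral.integral_congr (fun s hs => ?_)
    rw [uIcc_of_le hT.le] at hs
    rw [hxtaeq s hs]
  -- conclusion
  have hfinal : L * (Cq * η₁) * T ≤ η / 2 := by
    have hA : 0 ≤ L*T*Cq := mul_nonneg (mul_nonneg hL.le hT.le) hCq0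
    have hpos : (0:ℝ) < 2*(L*T*Cq+1) := by linarith
    rw [hη₁]
    have he : L * (Cq * (η / (2 * (L * T * Cq + 1)))) * T
        = (L*T*Cq) * η / (2*(L*T*Cq+1)) := by ring
    rw [he, div_le_div_iff₀ hpos two_pos]
    nlinarith [mul_nonneg hA hη.le]
  calc (∫ t in (0:ℝ)..T, f0 t (xbar t) (ubar t))
      ≤ ∫ s in (0:ℝ)..T, f0 s (xk s) (uk s) := hJ1
  _ ≤ (∫ s in (0:ℝ)..T, f0 s (xta s) (uk s)) + L * (Cq * η₁) * T := step1
  _ = (∫ s in (0:ℝ)..T, ((1 - α) * f0 s (xta s) (ubar s) + α * f0 s (xta s) (u s)))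
        + (∫ s in (0:ℝ)..T, psi k α T s • g0 s) + L * (Cq * η₁) * T := by rw [step2]
  _ ≤ (∫ s in (0:ℝ)..T, ((1 - α) * f0 s (xα s) (ubar s) + α * f0 s (xα s) (u s)))
        + η / 2 + η / 2 := by
      rw [step4]
      linarith [step3, hfinal]
  _ = (∫ t in (0:ℝ)..T, ((1 - α) * f0 t (xα t) (ubar t) + α * f0 t (xα t) (u t))) + η := by
      ring
end

section
/- Under assumptions (S1)–(S2), with $\bar x=x(\cdot;\bar u)$ and $x^\alpha$ the solution of the convex-combination dynamics $\dot x^\alpha=(1-\alpha)f(t,x^\alpha,\bar u(t))+\alpha f(t,x^\alpha,u(t))$, $x^\alpha(0)=x_0$, the difference quotient $X^\alpha(t)=(x^\alpha(t)-\bar x(t))/\alpha$ converges uniformly on $[0,T]$ as $\alpha\to 0^+$ to the solution $X$ of the variational equation $\dot X(t)=f_x(t,\bar x(t),\bar u(t))^\top X(t)+f(t,\bar x(t),u(t))-f(t,\bar x(t),\bar u(t))$, $X(0)=0$. -/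
open MeasureTheory Set Filter Topology intervalIntegral
open MeasureTheory Set
lemma aux_intInt {E : Type*} [NormedAddCommGroup E] {g : ℝ → E} {C T : ℝ}
    (hm : AEStronglyMeasurable g (volume.restrict (Icc 0 T)))
    (hb : ∀ s ∈ Icc 0 T, ‖g s‖ ≤ C) {t : ℝ} (ht : t ∈ Icc 0 T) :
    IntervalIntegrable g volume 0 t := by
  have hsub : Ioc (0:ℝ) t ⊆ Icc 0 T := fun s hs => ⟨hs.1.le, hs.2.trans ht.2⟩
  rw [intervalIntegrable_iff, uIoc_of_le ht.1]
  have hm' : AEStronglyMeasurable g (volume.restrict (Ioc 0 t)) :=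
    hm.mono_measure (Measure.restrict_mono hsub le_rfl)
  refine Integrable.mono' (g := fun _ => C) ?_ hm' ?_
  · exact integrable_const C
  · filter_upwards [ae_restrict_mem measurableSet_Ioc] with s hs
    exact hb s (hsub hs)

lemma aux_gronwall {φ : ℝ → ℝ} {a K T : ℝ} (hT : 0 ≤ T) (hK : 0 < K) (ha : 0 ≤ a)
    (hc : ContinuousOn φ (Icc 0 T)) (hnn : ∀ t ∈ Icc 0 T, 0 ≤ φ t)
    (h : ∀ t ∈ Icc 0 T, φ t ≤ a + K * ∫ s in (0:ℝ)..t, φ s) :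
    ∀ t ∈ Icc 0 T, φ t ≤ a * Real.exp (K * T) := by
  set p : ℝ → ℝ := fun s => min (max s 0) T with hp
  have hpmem : ∀ s, p s ∈ Icc 0 T := fun s =>
    ⟨le_min (le_max_right _ _) hT, min_le_right _ _⟩
  have hpc : Continuous p := (continuous_id.max continuous_const).min continuous_const
  have hpeq : ∀ s ∈ Icc 0 T, p s = s := by
    intro s hs; simp [hp, max_eq_left hs.1, min_eq_right hs.2, hs.2]
  set φ' : ℝ → ℝ := fun s => φ (p s) with hφ'
  have hφ'c : Continuous φ' := hc.comp_continuous hpc hpmem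
  have hφ'eq : ∀ s ∈ Icc 0 T, φ' s = φ s := fun s hs => by rw [hφ']; simp [hpeq s hs]
  have hint : ∀ t ∈ Icc 0 T, (∫ s in (0:ℝ)..t, φ' s) = ∫ s in (0:ℝ)..t, φ s := by
    intro t ht
    apply intervalIntegral.integral_congr
    intro s hs
    rw [uIcc_of_le ht.1] at hs
    exact hφ'eq s ⟨hs.1, hs.2.trans ht.2⟩
  set ψ : ℝ → ℝ := fun t => ∫ s in (0:ℝ)..t, φ' s with hψ
  have hψc : Continuous ψ :=
    intervalIntegral.continuous_primitive (fun a b => hφ'c.intervalIntegrable a b) 0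
  have hψd : ∀ x ∈ Ico 0 T, HasDerivWithinAt ψ (φ' x) (Ici x) x := by
    intro x hx
    exact intervalIntegral.integral_hasDerivWithinAt_right
      (hφ'c.intervalIntegrable 0 x)
      ⟨univ, univ_mem, hφ'c.stronglyMeasurable.aestronglyMeasurable⟩
      hφ'c.continuousWithinAt
  have hψnn : ∀ x ∈ Icc 0 T, 0 ≤ ψ x := by
    intro x hx
    apply intervalIntegral.integral_nonneg hx.1
    intro s hs
    exact hnn (p s) (hpmem s) |>.trans_eq rfl
  have hkey : ∀ x ∈ Icc 0 T, ‖ψ x‖ ≤ gronwallBound 0 K a (x - 0) := by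
    apply norm_le_gronwallBound_of_norm_deriv_right_le hψc.continuousOn hψd
    · simp [hψ]
    · intro x hx
      have hx' : x ∈ Icc 0 T := ⟨hx.1, hx.2.le⟩
      have h1 : φ' x ≤ a + K * ψ x := by
        rw [hφ'eq x hx']
        show φ x ≤ a + K * ∫ s in (0:ℝ)..x, φ' s
        rw [hint x hx']; exact h x hx'
      have h2 : 0 ≤ φ' x := by rw [hφ'eq x hx']; exact hnn x hx'
      rw [Real.norm_of_nonneg h2, Real.norm_of_nonneg (hψnn x hx')]
      linarith
  intro t ht
  have h1 : φ t ≤ a + K * ψ t := by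
    have : ψ t = ∫ s in (0:ℝ)..t, φ s := hint t ht
    rw [this]; exact h t ht
  have h2 := hkey t ht
  rw [Real.norm_of_nonneg (hψnn t ht), sub_zero] at h2
  have hgb : gronwallBound 0 K a t = 0 * Real.exp (K * t) + a / K * (Real.exp (K * t) - 1) := by
    rw [gronwallBound_of_K_ne_0 hK.ne']
  rw [hgb] at h2
  have h3 : K * ψ t ≤ a * (Real.exp (K * t) - 1) := by
    have h4 := mul_le_mul_of_nonneg_left h2 hK.le
    have h5 : K * (0 * Real.exp (K * t) + a / K * (Real.exp (K * t) - 1))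
        = a * (Real.exp (K * t) - 1) := by field_simp; ring
    linarith
  have h6 : Real.exp (K * t) ≤ Real.exp (K * T) :=
    Real.exp_le_exp.2 (mul_le_mul_of_nonneg_left ht.2 hK.le)
  nlinarith [Real.exp_pos (K * t)]

lemma aux_id {V : Type*} [AddCommGroup V] [Module ℝ V] {α : ℝ} (hα : α ≠ 0)
    (f1 f2 f3 f4 FX Fd : V) :
    α⁻¹ • ((1-α) • f1 + α • f2 - f3) - (FX + f4 - f3)
      = (α⁻¹ • Fd - FX) + α⁻¹ • (f1 - f3 - Fd) + ((f2 - f4) - (f1 - f3)) := by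
  match_scalars <;> field_simp <;> ring

lemma aux_frac {C ε : ℝ} (hC : 0 < C) (hε : 0 < ε) : ε / (2*(C+1)) * C < ε := by
  rw [div_mul_eq_mul_div, div_lt_iff₀ (by positivity)]
  nlinarith

set_option maxHeartbeats 1000000 in

theorem stmt_4 {n : ℕ} {U : Type*} [MetricSpace U] [TopologicalSpace.SeparableSpace U]
    [MeasurableSpace U] [BorelSpace U]
    (T L : ℝ) (hT : 0 < T) (hL : 0 < L)
    (x0 : EuclideanSpace ℝ (Fin n))
    (f : ℝ → EuclideanSpace ℝ (Fin n) → U → EuclideanSpace ℝ (Fin n))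
    (fx : ℝ → EuclideanSpace ℝ (Fin n) → U → (EuclideanSpace ℝ (Fin n) →L[ℝ] EuclideanSpace ℝ (Fin n)))
    -- (S1)-(S2)
    (hfm : ∀ x u, Measurable (fun t => f t x u))
    (hfc : ∀ t, Continuous (fun p : EuclideanSpace ℝ (Fin n) × U => f t p.1 p.2))
    (hdf : ∀ t x u, HasFDerivAt (fun y => f t y u) (fx t x u) x)
    (hfLip : ∀ t x x' u, ‖f t x u - f t x' u‖ ≤ L * ‖x - x'‖)
    (hfbd : ∀ t u, ‖f t 0 u‖ ≤ L)
    -- controls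
    (ubar u : ℝ → U) (hubar : Measurable ubar) (hu : Measurable u)
    -- states
    (xbar : ℝ → EuclideanSpace ℝ (Fin n)) (hxbarc : ContinuousOn xbar (Icc 0 T))
    (hxbar : ∀ t ∈ Icc 0 T, xbar t = x0 + ∫ s in (0:ℝ)..t, f s (xbar s) (ubar s))
    (xa : ℝ → ℝ → EuclideanSpace ℝ (Fin n))
    (hxac : ∀ α ∈ Ioc (0:ℝ) 1, ContinuousOn (xa α) (Icc 0 T))
    (hxa : ∀ α ∈ Ioc (0:ℝ) 1, ∀ t ∈ Icc 0 T, xa α t = x0 + ∫ s in (0:ℝ)..t,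
        ((1 - α) • f s (xa α s) (ubar s) + α • f s (xa α s) (u s)))
    -- solution of the variational equation
    (X : ℝ → EuclideanSpace ℝ (Fin n)) (hXc : ContinuousOn X (Icc 0 T))
    (hX : ∀ t ∈ Icc 0 T, X t = ∫ s in (0:ℝ)..t,
        ((fx s (xbar s) (ubar s)) (X s) + f s (xbar s) (u s) - f s (xbar s) (ubar s))) :
    TendstoUniformlyOn (fun α t => (α : ℝ)⁻¹ • (xa α t - xbar t)) X
      (nhdsWithin 0 (Ioi 0)) (Icc 0 T) := by
  haveI : SecondCountableTopology U := UniformSpace.secondCountable_of_separable U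
  set μ : Measure ℝ := volume.restrict (Icc 0 T) with hμdef
  have h0T : (0:ℝ) ≤ T := hT.le
  -- joint measurability of f
  have Fmeas : Measurable (Function.uncurry
      (fun (p : EuclideanSpace ℝ (Fin n) × U) (t : ℝ) => f t p.1 p.2)) :=
    measurable_uncurry_of_continuous_of_measurable (fun t => hfc t) (fun p => hfm p.1 p.2)
  have hcomp : ∀ (y : ℝ → EuclideanSpace ℝ (Fin n)) (v : ℝ → U), AEMeasurable y μ → Measurable v →
      AEStronglyMeasurable (fun s => f s (y s) (v s)) μ := by
    intro y v hy hv
    have h1 : AEMeasurable (fun s => ((y s, v s), s)) μ :=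
      (hy.prodMk hv.aemeasurable).prodMk aemeasurable_id
    exact (Fmeas.comp_aemeasurable h1).aestronglyMeasurable
  have hyae : ∀ (y : ℝ → EuclideanSpace ℝ (Fin n)), ContinuousOn y (Icc 0 T) → AEMeasurable y μ :=
    fun y hy => hy.aemeasurable measurableSet_Icc
  -- norm bound on fx
  have hfxnorm : ∀ t x v, ‖fx t x v‖ ≤ L := by
    intro t x v
    apply (hdf t x v).le_of_lip' hL.le
    filter_upwards with y using hfLip t y x v
  -- measurability of fx applied to a curve
  have hfxmeas : ∀ (w : ℝ → EuclideanSpace ℝ (Fin n)), AEMeasurable w μ →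
      AEStronglyMeasurable (fun s => (fx s (xbar s) (ubar s)) (w s)) μ := by
    intro w hw
    have hxb := hyae xbar hxbarc
    have hk : ∀ k : ℕ, AEStronglyMeasurable
        (fun s => ((k:ℝ)+1) • (f s (xbar s + ((k:ℝ)+1)⁻¹ • w s) (ubar s)
          - f s (xbar s) (ubar s))) μ := by
      intro k
      have h1 : AEMeasurable (fun s => xbar s + ((k:ℝ)+1)⁻¹ • w s) μ :=
        hxb.add (hw.fun_const_smul _)
      exact (((hcomp _ ubar h1 hubar).fun_sub (hcomp _ ubar hxb hubar)).fun_const_smul _)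
    apply aestronglyMeasurable_of_tendsto_ae atTop hk
    filter_upwards with s
    have hld := ((hdf s (xbar s) (ubar s)).hasLineDerivAt (w s)).tendsto_slope_zero
    have h3 : Tendsto (fun k : ℕ => ((k:ℝ)+1)⁻¹) atTop (𝓝[≠] (0:ℝ)) := by
      apply tendsto_nhdsWithin_of_tendsto_nhds_of_eventually_within
      · exact Tendsto.congr (fun k => one_div _) tendsto_one_div_add_atTop_nhds_zero_nat
      · filter_upwards with k
        simp only [mem_compl_iff, mem_singleton_iff]
        positivity
    have h4 := hld.comp h3
    convert h4 using 2 with k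
    simp [Function.comp]
  -- growth bound on f
  have hfgrow : ∀ t x v, ‖f t x v‖ ≤ L * (1 + ‖x‖) := by
    intro t x v
    have h1 := hfLip t x 0 v
    have h2 := hfbd t v
    have h3 : ‖f t x v‖ ≤ ‖f t x v - f t 0 v‖ + ‖f t 0 v‖ := by
      simpa using norm_add_le (f t x v - f t 0 v) (f t 0 v)
    simp only [sub_zero] at h1
    nlinarith [norm_nonneg x]
  -- compactness bounds
  obtain ⟨Mx, hMx⟩ := isCompact_Icc.exists_bound_of_continuousOn hxbarc
  obtain ⟨MX, hMX⟩ := isCompact_Icc.exists_bound_of_continuousOn hXc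
  set Ma : ℝ := (‖x0‖ + L*T) * Real.exp (L*T) with hMadef
  have hMa0 : 0 ≤ Ma := by positivity
  set g1 : ℝ → ℝ → EuclideanSpace ℝ (Fin n) :=
    fun α s => (1-α) • f s (xa α s) (ubar s) + α • f s (xa α s) (u s) with hg1def
  set g2 : ℝ → EuclideanSpace ℝ (Fin n) := fun s => f s (xbar s) (ubar s) with hg2def
  have hg2m : AEStronglyMeasurable g2 μ := hcomp xbar ubar (hyae xbar hxbarc) hubar
  have hg1m : ∀ α ∈ Ioc (0:ℝ) 1, AEStronglyMeasurable (g1 α) μ := by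
    intro α hα
    exact ((hcomp _ ubar (hyae _ (hxac α hα)) hubar).fun_const_smul _).fun_add
      ((hcomp _ u (hyae _ (hxac α hα)) hu).fun_const_smul _)
  have hg1bd : ∀ α ∈ Ioc (0:ℝ) 1, ∀ s, ‖g1 α s‖ ≤ L * (1 + ‖xa α s‖) := by
    intro α hα s
    have h1 : ‖g1 α s‖ ≤ (1-α) * ‖f s (xa α s) (ubar s)‖ + α * ‖f s (xa α s) (u s)‖ := by
      refine (norm_add_le _ _).trans ?_
      rw [norm_smul, norm_smul, Real.norm_of_nonneg (by linarith [hα.2] : (0:ℝ) ≤ 1 - α),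
        Real.norm_of_nonneg hα.1.le]
    have h2 := hfgrow s (xa α s) (ubar s)
    have h3 := hfgrow s (xa α s) (u s)
    nlinarith [hα.1.le, hα.2]
  have hg1int : ∀ α ∈ Ioc (0:ℝ) 1, ∀ t ∈ Icc 0 T, IntervalIntegrable (g1 α) volume 0 t := by
    intro α hα t ht
    obtain ⟨B, hB⟩ := isCompact_Icc.exists_bound_of_continuousOn (hxac α hα)
    refine aux_intInt (T := T) (C := L * (1 + B)) (hg1m α hα) ?_ ht
    intro s hs
    refine (hg1bd α hα s).trans ?_
    nlinarith [hB s hs, norm_nonneg (xa α s)]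
  have hg2int : ∀ t ∈ Icc 0 T, IntervalIntegrable g2 volume 0 t := by
    intro t ht
    refine aux_intInt (T := T) (C := L * (1 + Mx)) hg2m ?_ ht
    intro s hs
    refine (hfgrow s _ _).trans ?_
    nlinarith [hMx s hs, norm_nonneg (xbar s)]
  -- a priori bound on xa
  have hMabd : ∀ α ∈ Ioc (0:ℝ) 1, ∀ t ∈ Icc 0 T, ‖xa α t‖ ≤ Ma := by
    intro α hα
    have key : ∀ t ∈ Icc 0 T, ‖xa α t‖ ≤ (‖x0‖ + L*T) * Real.exp (L*T) := by
      refine aux_gronwall h0T hL (by positivity) ((hxac α hα).norm)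
        (fun t _ => norm_nonneg _) ?_
      intro t ht
      have hxaint : IntervalIntegrable (fun s => L + L * ‖xa α s‖) volume 0 t := by
        apply ContinuousOn.intervalIntegrable
        apply (continuousOn_const.add (continuousOn_const.mul (hxac α hα).norm)).mono
        rw [uIcc_of_le ht.1]
        exact Icc_subset_Icc le_rfl ht.2
      have h1 : ‖xa α t‖ ≤ ‖x0‖ + ‖∫ s in (0:ℝ)..t, g1 α s‖ := by
        rw [hxa α hα t ht]; exact norm_add_le _ _
      have h2 : ‖∫ s in (0:ℝ)..t, g1 α s‖ ≤ ∫ s in (0:ℝ)..t, ‖g1 α s‖ :=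
        intervalIntegral.norm_integral_le_integral_norm ht.1
      have h3 : (∫ s in (0:ℝ)..t, ‖g1 α s‖) ≤ ∫ s in (0:ℝ)..t, (L + L * ‖xa α s‖) := by
        apply intervalIntegral.integral_mono_on ht.1 ((hg1int α hα t ht).norm) hxaint
        intro s hs
        have := hg1bd α hα s
        linarith [this]
      have h4 : (∫ s in (0:ℝ)..t, (L + L * ‖xa α s‖))
          = L*t + L * ∫ s in (0:ℝ)..t, ‖xa α s‖ := by
        rw [intervalIntegral.integral_add intervalIntegrable_const
          (by apply ContinuousOn.intervalIntegrable
              apply (continuousOn_const.mul (hxac α hα).norm).mono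
              rw [uIcc_of_le ht.1]; exact Icc_subset_Icc le_rfl ht.2),
          intervalIntegral.integral_const, intervalIntegral.integral_const_mul]
        simp [smul_eq_mul, mul_comm]
      have h5 : L * t ≤ L * T := mul_le_mul_of_nonneg_left ht.2 hL.le
      linarith
    intro t ht
    rw [hMadef]
    exact key t ht
  -- bound on the difference d = xa - xbar
  set C1 : ℝ := 2*L*(1+Ma)*T*Real.exp (L*T) with hC1def
  have hC1pos : 0 < C1 := by rw [hC1def]; positivity
  have hdint : ∀ α ∈ Ioc (0:ℝ) 1, ∀ t ∈ Icc 0 T,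
      xa α t - xbar t = ∫ s in (0:ℝ)..t, (g1 α s - g2 s) := by
    intro α hα t ht
    rw [hxa α hα t ht, hxbar t ht,
      intervalIntegral.integral_sub (hg1int α hα t ht) (hg2int t ht)]
    abel
  have hdbd : ∀ α ∈ Ioc (0:ℝ) 1, ∀ t ∈ Icc 0 T, ‖xa α t - xbar t‖ ≤ C1 * α := by
    intro α hα
    have hdc : ContinuousOn (fun s => xa α s - xbar s) (Icc 0 T) := (hxac α hα).sub hxbarc
    have hptw : ∀ s ∈ Icc 0 T,
        ‖g1 α s - g2 s‖ ≤ L * ‖xa α s - xbar s‖ + (2*L*(1+Ma)) * α := by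
      intro s hs
      have hsplit : g1 α s - g2 s = (f s (xa α s) (ubar s) - f s (xbar s) (ubar s))
          + α • (f s (xa α s) (u s) - f s (xa α s) (ubar s)) := by
        simp only [hg1def, hg2def]
        module
      rw [hsplit]
      have h1 := hfLip s (xa α s) (xbar s) (ubar s)
      have h2 : ‖f s (xa α s) (u s) - f s (xa α s) (ubar s)‖ ≤ 2*L*(1+Ma) := by
        refine (norm_sub_le _ _).trans ?_
        have h3 := hfgrow s (xa α s) (u s)
        have h4 := hfgrow s (xa α s) (ubar s)
        have h5 := hMabd α hα s hs
        nlinarith [hL.le]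
      refine (norm_add_le _ _).trans ?_
      rw [norm_smul, Real.norm_of_nonneg hα.1.le]
      have h6 := mul_le_mul_of_nonneg_left h2 hα.1.le
      nlinarith [hα.1.le]
    have key : ∀ t ∈ Icc 0 T,
        ‖xa α t - xbar t‖ ≤ (2*L*(1+Ma)*T*α) * Real.exp (L*T) := by
      refine aux_gronwall h0T hL (mul_nonneg (by positivity) hα.1.le) hdc.norm (fun t _ => norm_nonneg _) ?_
      intro t ht
      have hgi : IntervalIntegrable (fun s => g1 α s - g2 s) volume 0 t :=
        (hg1int α hα t ht).sub (hg2int t ht)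
      have hmaj : IntervalIntegrable
          (fun s => L * ‖xa α s - xbar s‖ + (2*L*(1+Ma))*α) volume 0 t := by
        apply ContinuousOn.intervalIntegrable
        apply ((continuousOn_const.mul hdc.norm).add continuousOn_const).mono
        rw [uIcc_of_le ht.1]; exact Icc_subset_Icc le_rfl ht.2
      have h1 : ‖xa α t - xbar t‖ ≤ ∫ s in (0:ℝ)..t, ‖g1 α s - g2 s‖ := by
        rw [hdint α hα t ht]
        exact intervalIntegral.norm_integral_le_integral_norm ht.1
      have h2 : (∫ s in (0:ℝ)..t, ‖g1 α s - g2 s‖)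
          ≤ ∫ s in (0:ℝ)..t, (L * ‖xa α s - xbar s‖ + (2*L*(1+Ma))*α) := by
        apply intervalIntegral.integral_mono_on ht.1 hgi.norm hmaj
        intro s hs
        exact hptw s (Icc_subset_Icc le_rfl ht.2 hs)
      have h3 : (∫ s in (0:ℝ)..t, (L * ‖xa α s - xbar s‖ + (2*L*(1+Ma))*α))
          = L * (∫ s in (0:ℝ)..t, ‖xa α s - xbar s‖) + (2*L*(1+Ma))*α*t := by
        rw [intervalIntegral.integral_add (by
              apply ContinuousOn.intervalIntegrable
              apply (continuousOn_const.mul hdc.norm).mono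
              rw [uIcc_of_le ht.1]; exact Icc_subset_Icc le_rfl ht.2)
            intervalIntegrable_const,
          intervalIntegral.integral_const, intervalIntegral.integral_const_mul]
        simp only [smul_eq_mul, sub_zero]; ring
      have h4 : (2*L*(1+Ma))*α*t ≤ (2*L*(1+Ma))*α*T := by
        apply mul_le_mul_of_nonneg_left ht.2
        have := hα.1.le
        positivity
      linarith
    intro t ht
    calc ‖xa α t - xbar t‖ ≤ (2*L*(1+Ma)*T*α) * Real.exp (L*T) := key t ht
      _ = C1 * α := by rw [hC1def]; ring
  -- variational pieces
  set B : ℝ → EuclideanSpace ℝ (Fin n) := fun s =>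
    (fx s (xbar s) (ubar s)) (X s) + f s (xbar s) (u s) - f s (xbar s) (ubar s) with hBdef
  set R : ℝ → ℝ → EuclideanSpace ℝ (Fin n) := fun α s =>
    α⁻¹ • (f s (xa α s) (ubar s) - f s (xbar s) (ubar s)
      - (fx s (xbar s) (ubar s)) (xa α s - xbar s)) with hRdef
  have hBm : AEStronglyMeasurable B μ :=
    ((hfxmeas X (hyae X hXc)).add (hcomp xbar u (hyae xbar hxbarc) hu)).sub
      (hcomp xbar ubar (hyae xbar hxbarc) hubar)
  have hBbd : ∀ s ∈ Icc 0 T, ‖B s‖ ≤ L*MX + 2*(L*(1+Mx)) := by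
    intro s hs
    have h1 : ‖(fx s (xbar s) (ubar s)) (X s)‖ ≤ L * MX := by
      refine (ContinuousLinearMap.le_opNorm _ _).trans ?_
      exact mul_le_mul (hfxnorm s (xbar s) (ubar s)) (hMX s hs) (norm_nonneg _) hL.le
    have h2 := hfgrow s (xbar s) (u s)
    have h3 := hfgrow s (xbar s) (ubar s)
    have h4 := hMx s hs
    have h6 : L * (1 + ‖xbar s‖) ≤ L * (1 + Mx) :=
      mul_le_mul_of_nonneg_left (by linarith) hL.le
    have h5 : ‖B s‖ ≤ ‖(fx s (xbar s) (ubar s)) (X s)‖ + ‖f s (xbar s) (u s)‖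
        + ‖f s (xbar s) (ubar s)‖ := by
      rw [hBdef]
      refine (norm_sub_le _ _).trans ?_
      have := norm_add_le ((fx s (xbar s) (ubar s)) (X s)) (f s (xbar s) (u s))
      linarith
    linarith
  have hBint : ∀ t ∈ Icc 0 T, IntervalIntegrable B volume 0 t := by
    intro t ht
    exact aux_intInt (T := T) hBm hBbd ht
  have hRm : ∀ α ∈ Ioc (0:ℝ) 1, AEStronglyMeasurable (R α) μ := by
    intro α hα
    exact (((hcomp _ ubar (hyae _ (hxac α hα)) hubar).fun_sub
      (hcomp xbar ubar (hyae xbar hxbarc) hubar)).fun_sub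
      (hfxmeas (fun s => xa α s - xbar s)
        ((hyae _ (hxac α hα)).sub (hyae xbar hxbarc)))).fun_const_smul _
  have hRbd : ∀ α ∈ Ioc (0:ℝ) 1, ∀ s ∈ Icc 0 T, ‖R α s‖ ≤ 2*L*C1 := by
    intro α hα s hs
    have hα0 : (0:ℝ) < α := hα.1
    have h1 : ‖R α s‖ = α⁻¹ * ‖f s (xa α s) (ubar s) - f s (xbar s) (ubar s)
        - (fx s (xbar s) (ubar s)) (xa α s - xbar s)‖ := by
      rw [hRdef, norm_smul, Real.norm_of_nonneg (by positivity)]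
    have h2 : ‖f s (xa α s) (ubar s) - f s (xbar s) (ubar s)
        - (fx s (xbar s) (ubar s)) (xa α s - xbar s)‖
        ≤ L * ‖xa α s - xbar s‖ + L * ‖xa α s - xbar s‖ := by
      refine (norm_sub_le _ _).trans ?_
      have h3 := hfLip s (xa α s) (xbar s) (ubar s)
      have h4 : ‖(fx s (xbar s) (ubar s)) (xa α s - xbar s)‖ ≤ L * ‖xa α s - xbar s‖ := by
        refine (ContinuousLinearMap.le_opNorm _ _).trans ?_
        exact mul_le_mul_of_nonneg_right (hfxnorm s (xbar s) (ubar s)) (norm_nonneg _)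
      linarith
    have h5 := hdbd α hα s hs
    have h6 : L * ‖xa α s - xbar s‖ ≤ L * (C1 * α) :=
      mul_le_mul_of_nonneg_left h5 hL.le
    have h7 : ‖f s (xa α s) (ubar s) - f s (xbar s) (ubar s)
        - (fx s (xbar s) (ubar s)) (xa α s - xbar s)‖ ≤ 2 * L * (C1 * α) := by linarith
    rw [h1]
    calc α⁻¹ * ‖f s (xa α s) (ubar s) - f s (xbar s) (ubar s)
        - (fx s (xbar s) (ubar s)) (xa α s - xbar s)‖
        ≤ α⁻¹ * (2 * L * (C1 * α)) :=
          mul_le_mul_of_nonneg_left h7 (by positivity)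
      _ = 2*L*C1*(α⁻¹*α) := by ring
      _ = 2*L*C1 := by rw [inv_mul_cancel₀ (ne_of_gt hα0), mul_one]
  have hRnint : ∀ α ∈ Ioc (0:ℝ) 1, ∀ t ∈ Icc 0 T,
      IntervalIntegrable (fun s => ‖R α s‖) volume 0 t := by
    intro α hα t ht
    refine aux_intInt (T := T) (C := 2*L*C1) (hRm α hα).norm ?_ ht
    intro s hs
    rw [Real.norm_of_nonneg (norm_nonneg _)]
    exact hRbd α hα s hs
  set ρ : ℝ → ℝ := fun α => ∫ s in (0:ℝ)..T, ‖R α s‖ with hρdef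
  have hρ0 : ∀ α ∈ Ioc (0:ℝ) 1, 0 ≤ ρ α := by
    intro α hα
    exact intervalIntegral.integral_nonneg h0T (fun s _ => norm_nonneg _)
  -- main Gronwall estimate
  have hYX : ∀ α ∈ Ioc (0:ℝ) 1, ∀ t ∈ Icc 0 T,
      ‖α⁻¹ • (xa α t - xbar t) - X t‖ ≤ (ρ α + 2*L*C1*T*α) * Real.exp (L*T) := by
    intro α hα
    have hα0 : (0:ℝ) < α := hα.1
    have hYc : ContinuousOn (fun s => α⁻¹ • (xa α s - xbar s) - X s) (Icc 0 T) :=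
      (((hxac α hα).sub hxbarc).fun_const_smul _).sub hXc
    have ha0 : 0 ≤ ρ α + 2*L*C1*T*α :=
      add_nonneg (hρ0 α hα) (mul_nonneg (by positivity) hα0.le)
    refine aux_gronwall h0T hL ha0 hYc.norm (fun t _ => norm_nonneg _) ?_
    intro t ht
    have hTmem : T ∈ Icc (0:ℝ) T := ⟨h0T, le_rfl⟩
    have hABint : IntervalIntegrable (fun s => α⁻¹ • (g1 α s - g2 s) - B s) volume 0 t :=
      (((hg1int α hα t ht).sub (hg2int t ht)).smul α⁻¹).sub (hBint t ht)
    have e1 : (∫ s in (0:ℝ)..t, (α⁻¹ • (g1 α s - g2 s) - B s))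
        = (∫ s in (0:ℝ)..t, α⁻¹ • (g1 α s - g2 s)) - ∫ s in (0:ℝ)..t, B s :=
      intervalIntegral.integral_sub
        (((hg1int α hα t ht).sub (hg2int t ht)).smul α⁻¹) (hBint t ht)
    have e2 : (∫ s in (0:ℝ)..t, α⁻¹ • (g1 α s - g2 s))
        = α⁻¹ • ∫ s in (0:ℝ)..t, (g1 α s - g2 s) := intervalIntegral.integral_smul _ _
    have e3 : X t = ∫ s in (0:ℝ)..t, B s := hX t ht
    have hrep : α⁻¹ • (xa α t - xbar t) - X t
        = ∫ s in (0:ℝ)..t, (α⁻¹ • (g1 α s - g2 s) - B s) := by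
      rw [hdint α hα t ht, e3, ← e2, ← e1]
    -- pointwise bound
    have hptw : ∀ s ∈ Icc 0 T, ‖α⁻¹ • (g1 α s - g2 s) - B s‖
        ≤ L * ‖α⁻¹ • (xa α s - xbar s) - X s‖ + (‖R α s‖ + 2*L*C1*α) := by
      intro s hs
      have hmap : (fx s (xbar s) (ubar s)) (α⁻¹ • (xa α s - xbar s) - X s)
          = α⁻¹ • (fx s (xbar s) (ubar s)) (xa α s - xbar s)
            - (fx s (xbar s) (ubar s)) (X s) := by
        rw [map_sub, (fx s (xbar s) (ubar s)).map_smul]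
      have hid : α⁻¹ • (g1 α s - g2 s) - B s
          = (fx s (xbar s) (ubar s)) (α⁻¹ • (xa α s - xbar s) - X s) + R α s
            + ((f s (xa α s) (u s) - f s (xbar s) (u s))
              - (f s (xa α s) (ubar s) - f s (xbar s) (ubar s))) := by
        rw [hmap]
        simp only [hg1def, hg2def, hBdef, hRdef]
        exact aux_id (ne_of_gt hα0) _ _ _ _ _ _
      rw [hid]
      have hb1 : ‖(fx s (xbar s) (ubar s)) (α⁻¹ • (xa α s - xbar s) - X s)‖
          ≤ L * ‖α⁻¹ • (xa α s - xbar s) - X s‖ := by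
        refine (ContinuousLinearMap.le_opNorm _ _).trans ?_
        exact mul_le_mul_of_nonneg_right (hfxnorm s (xbar s) (ubar s)) (norm_nonneg _)
      have hd := hdbd α hα s hs
      have hb2 : ‖(f s (xa α s) (u s) - f s (xbar s) (u s))
          - (f s (xa α s) (ubar s) - f s (xbar s) (ubar s))‖ ≤ 2*L*C1*α := by
        refine (norm_sub_le _ _).trans ?_
        have hl1 := hfLip s (xa α s) (xbar s) (u s)
        have hl2 := hfLip s (xa α s) (xbar s) (ubar s)
        have hl3 : L * ‖xa α s - xbar s‖ ≤ L * (C1 * α) :=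
          mul_le_mul_of_nonneg_left hd hL.le
        linarith
      calc ‖(fx s (xbar s) (ubar s)) (α⁻¹ • (xa α s - xbar s) - X s) + R α s
            + ((f s (xa α s) (u s) - f s (xbar s) (u s))
              - (f s (xa α s) (ubar s) - f s (xbar s) (ubar s)))‖
          ≤ ‖(fx s (xbar s) (ubar s)) (α⁻¹ • (xa α s - xbar s) - X s) + R α s‖
            + ‖(f s (xa α s) (u s) - f s (xbar s) (u s))
              - (f s (xa α s) (ubar s) - f s (xbar s) (ubar s))‖ := norm_add_le _ _
        _ ≤ ‖(fx s (xbar s) (ubar s)) (α⁻¹ • (xa α s - xbar s) - X s)‖ + ‖R α s‖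
            + 2*L*C1*α := by
            have := norm_add_le ((fx s (xbar s) (ubar s))
              (α⁻¹ • (xa α s - xbar s) - X s)) (R α s)
            linarith
        _ ≤ L * ‖α⁻¹ • (xa α s - xbar s) - X s‖ + (‖R α s‖ + 2*L*C1*α) := by linarith
    -- integral estimates
    have hmaj : IntervalIntegrable
        (fun s => L * ‖α⁻¹ • (xa α s - xbar s) - X s‖ + (‖R α s‖ + 2*L*C1*α)) volume 0 t := by
      refine IntervalIntegrable.add ?_ (IntervalIntegrable.add
        (hRnint α hα t ht) intervalIntegrable_const)
      apply ContinuousOn.intervalIntegrable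
      apply (continuousOn_const.mul hYc.norm).mono
      rw [uIcc_of_le ht.1]; exact Icc_subset_Icc le_rfl ht.2
    have h1 : ‖α⁻¹ • (xa α t - xbar t) - X t‖
        ≤ ∫ s in (0:ℝ)..t, ‖α⁻¹ • (g1 α s - g2 s) - B s‖ := by
      rw [hrep]
      exact intervalIntegral.norm_integral_le_integral_norm ht.1
    have h2 : (∫ s in (0:ℝ)..t, ‖α⁻¹ • (g1 α s - g2 s) - B s‖)
        ≤ ∫ s in (0:ℝ)..t,
          (L * ‖α⁻¹ • (xa α s - xbar s) - X s‖ + (‖R α s‖ + 2*L*C1*α)) := by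
      apply intervalIntegral.integral_mono_on ht.1 hABint.norm hmaj
      intro s hs
      exact hptw s (Icc_subset_Icc le_rfl ht.2 hs)
    have h3 : (∫ s in (0:ℝ)..t,
          (L * ‖α⁻¹ • (xa α s - xbar s) - X s‖ + (‖R α s‖ + 2*L*C1*α)))
        = L * (∫ s in (0:ℝ)..t, ‖α⁻¹ • (xa α s - xbar s) - X s‖)
          + ((∫ s in (0:ℝ)..t, ‖R α s‖) + 2*L*C1*α*t) := by
      rw [intervalIntegral.integral_add (by
            apply ContinuousOn.intervalIntegrable
            apply (continuousOn_const.mul hYc.norm).mono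
            rw [uIcc_of_le ht.1]; exact Icc_subset_Icc le_rfl ht.2)
          (IntervalIntegrable.add (hRnint α hα t ht) intervalIntegrable_const),
        intervalIntegral.integral_add (hRnint α hα t ht) intervalIntegrable_const,
        intervalIntegral.integral_const, intervalIntegral.integral_const_mul]
      simp only [smul_eq_mul, sub_zero]; ring
    have h4 : (∫ s in (0:ℝ)..t, ‖R α s‖) ≤ ρ α := by
      apply intervalIntegral.integral_mono_interval le_rfl ht.1 ht.2
      · exact Eventually.of_forall (fun s => norm_nonneg _)
      · exact hRnint α hα T hTmem
    have h5 : 2*L*C1*α*t ≤ 2*L*C1*α*T :=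
      mul_le_mul_of_nonneg_left ht.2 (by positivity)
    have h6 : 2*L*C1*α*T = 2*L*C1*T*α := by ring
    linarith
  -- convergence of the remainder integral
  have hρlim : Tendsto ρ (𝓝[>](0:ℝ)) (𝓝 0) := by
    have h0 : (∫ s in (0:ℝ)..T, (0:ℝ)) = 0 := by simp
    have hmem1 : Ioc (0:ℝ) 1 ∈ 𝓝[>](0:ℝ) := Ioc_mem_nhdsGT_of_mem ⟨le_rfl, zero_lt_one⟩
    have key := intervalIntegral.tendsto_integral_filter_of_dominated_convergence
      (μ := volume) (a := (0:ℝ)) (b := T) (f := fun _ : ℝ => (0:ℝ))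
      (F := fun α s => ‖R α s‖) (l := 𝓝[>](0:ℝ)) (fun _ => 2*L*C1)
      ?meas ?bd intervalIntegrable_const ?lim
    · rw [hρdef]; simpa [h0] using key
    case meas =>
      filter_upwards [hmem1] with α hα
      have := (hRm α hα).norm
      rw [uIoc_of_le h0T]
      exact this.mono_measure (Measure.restrict_mono Ioc_subset_Icc_self le_rfl)
    case bd =>
      filter_upwards [hmem1] with α hα
      refine Eventually.of_forall ?_
      intro x hx
      rw [uIoc_of_le h0T] at hx
      rw [Real.norm_of_nonneg (norm_nonneg _)]
      exact hRbd α hα x (Ioc_subset_Icc_self hx)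
    case lim =>
      refine Eventually.of_forall ?_
      intro x hx
      rw [uIoc_of_le h0T] at hx
      have hxI : x ∈ Icc 0 T := Ioc_subset_Icc_self hx
      rw [Metric.tendsto_nhds]
      intro ε hε
      have hC1' : (0:ℝ) < C1 + 1 := by linarith
      have hcpos : 0 < ε / (2*(C1+1)) := by positivity
      have hlo := hasFDerivAt_iff_isLittleO_nhds_zero.1 (hdf x (xbar x) (ubar x))
      have hev := hlo.def hcpos
      rw [Metric.eventually_nhds_iff] at hev
      obtain ⟨δ, hδ, hδ'⟩ := hev
      have hmem : Ioo (0:ℝ) (min 1 (δ/(C1+1))) ∈ 𝓝[>](0:ℝ) :=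
        Ioo_mem_nhdsGT_of_mem ⟨le_rfl, lt_min zero_lt_one (by positivity)⟩
      filter_upwards [hmem] with α hα
      have hα1 : α ∈ Ioc (0:ℝ) 1 := ⟨hα.1, (hα.2.trans_le (min_le_left _ _)).le⟩
      have hd := hdbd α hα1 x hxI
      have hαδ : α < δ/(C1+1) := hα.2.trans_le (min_le_right _ _)
      have hdlt : ‖xa α x - xbar x‖ < δ := by
        have h7 : C1 * α < C1 * (δ/(C1+1)) :=
          mul_lt_mul_of_pos_left hαδ hC1pos
        have h8 : C1 * (δ/(C1+1)) < δ := by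
          rw [← mul_div_assoc, div_lt_iff₀ hC1']
          nlinarith
        linarith
      have happ := hδ' (show dist (xa α x - xbar x) 0 < δ by
        rwa [dist_zero_right])
      have hcan : xbar x + (xa α x - xbar x) = xa α x := by abel
      rw [hcan] at happ
      -- happ : ‖f x (xa α x) (ubar x) - f x (xbar x) (ubar x)
      --   - (fx x (xbar x) (ubar x)) (xa α x - xbar x)‖ ≤ c * ‖xa α x - xbar x‖
      have hRn : ‖R α x‖ ≤ (ε / (2*(C1+1))) * C1 := by
        have h9 : ‖R α x‖ = α⁻¹ * ‖f x (xa α x) (ubar x) - f x (xbar x) (ubar x)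
            - (fx x (xbar x) (ubar x)) (xa α x - xbar x)‖ := by
          rw [hRdef, norm_smul, Real.norm_of_nonneg (inv_nonneg.2 hα.1.le)]
        rw [h9]
        have h10 : ‖f x (xa α x) (ubar x) - f x (xbar x) (ubar x)
            - (fx x (xbar x) (ubar x)) (xa α x - xbar x)‖
            ≤ (ε / (2*(C1+1))) * (C1 * α) := by
          refine happ.trans ?_
          exact mul_le_mul_of_nonneg_left hd hcpos.le
        calc α⁻¹ * ‖f x (xa α x) (ubar x) - f x (xbar x) (ubar x)
              - (fx x (xbar x) (ubar x)) (xa α x - xbar x)‖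
            ≤ α⁻¹ * ((ε / (2*(C1+1))) * (C1 * α)) :=
              mul_le_mul_of_nonneg_left h10 (inv_nonneg.2 hα.1.le)
          _ = (ε / (2*(C1+1))) * C1 * (α⁻¹*α) := by ring
          _ = (ε / (2*(C1+1))) * C1 := by rw [inv_mul_cancel₀ (ne_of_gt hα.1), mul_one]
      have hfin : (ε / (2*(C1+1))) * C1 < ε := aux_frac hC1pos hε
      rw [Real.dist_0_eq_abs, abs_of_nonneg (norm_nonneg _)]
      exact lt_of_le_of_lt hRn hfin
  -- conclusion
  rw [Metric.tendstoUniformlyOn_iff]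
  intro ε hε
  have hlin : Tendsto (fun α : ℝ => 2*L*C1*T*α) (𝓝[>](0:ℝ)) (𝓝 0) := by
    have h1 : Tendsto (fun α : ℝ => 2*L*C1*T*α) (𝓝 (0:ℝ)) (𝓝 0) := by
      have h2 : Tendsto (fun α : ℝ => α) (𝓝 (0:ℝ)) (𝓝 0) := tendsto_id
      simpa using h2.const_mul (2*L*C1*T)
    exact h1.mono_left nhdsWithin_le_nhds
  have hlim : Tendsto (fun α => (ρ α + 2*L*C1*T*α) * Real.exp (L*T))
      (𝓝[>](0:ℝ)) (𝓝 0) := by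
    have := (hρlim.add hlin).mul_const (Real.exp (L*T))
    simpa using this
  have hev2 : ∀ᶠ α in 𝓝[>](0:ℝ), (ρ α + 2*L*C1*T*α) * Real.exp (L*T) < ε :=
    hlim.eventually_lt_const hε
  have hmem1 : Ioc (0:ℝ) 1 ∈ 𝓝[>](0:ℝ) := Ioc_mem_nhdsGT_of_mem ⟨le_rfl, zero_lt_one⟩
  filter_upwards [hev2, hmem1] with α h1 h2
  intro t ht
  rw [dist_eq_norm, norm_sub_rev]
  exact lt_of_le_of_lt (hYX α h2 t ht) h1
end

section
/- Let $W$ solve $\dot W+AW+WA^\top+Q=0$, $W(T)=0$, and $X$ solve $\dot X=A^\top X+b$, $X(0)=0$, with $A,Q,b$ bounded measurable and $Q(t)$ symmetric. Then $-\tfrac12\,\mathrm{tr}\int_0^T Q(t)X(t)X(t)^\top\,dt=-\int_0^T\langle W(t)b(t),X(t)\rangle\,dt$. -/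
open MeasureTheory Set ContinuousLinearMap
open scoped RealInnerProductSpace

lemma trace_rankone {n : ℕ} (Q : EuclideanSpace ℝ (Fin n) →L[ℝ] EuclideanSpace ℝ (Fin n))
    (x : EuclideanSpace ℝ (Fin n)) :
    (LinearMap.trace ℝ (EuclideanSpace ℝ (Fin n))
      ((Q ∘L ((innerSL ℝ x).smulRight x)) :
        EuclideanSpace ℝ (Fin n) →L[ℝ] EuclideanSpace ℝ (Fin n))) = ⟪Q x, x⟫ := by
  have h : ((Q ∘L ((innerSL ℝ x).smulRight x)) :
      EuclideanSpace ℝ (Fin n) →ₗ[ℝ] EuclideanSpace ℝ (Fin n))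
      = dualTensorHom ℝ _ _ (((innerSL ℝ x).toLinearMap) ⊗ₜ[ℝ] (Q x)) := by
    ext v
    simp [dualTensorHom_apply, _root_.map_smul]
  rw [h, LinearMap.trace_eq_contract_apply, contractLeft_apply]
  simp only [ContinuousLinearMap.coe_coe, innerSL_apply_apply]; exact real_inner_comm _ _
open scoped RealInnerProductSpace

section parts
variable {E F G : Type*} [NormedAddCommGroup E] [NormedSpace ℝ E] [CompleteSpace E]
  [NormedAddCommGroup F] [NormedSpace ℝ F] [CompleteSpace F]
  [NormedAddCommGroup G] [NormedSpace ℝ G] [CompleteSpace G]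

lemma aux_bilin_integrable (B : E →L[ℝ] F →L[ℝ] G) {T : ℝ}
    {φ : ℝ → E} {h : ℝ → F} (hφ : IntegrableOn φ (Ioc 0 T))
    (hhm : AEStronglyMeasurable h (volume.restrict (Ioc 0 T)))
    {C : ℝ} (hC : ∀ u ∈ Ioc 0 T, ‖h u‖ ≤ C) :
    Integrable (fun s => B (φ s) (h s)) (volume.restrict (Ioc 0 T)) := by
  have hm : AEStronglyMeasurable (fun s => B (φ s) (h s)) (volume.restrict (Ioc 0 T)) :=
    B.aestronglyMeasurable_comp₂ hφ.aestronglyMeasurable hhm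
  refine Integrable.mono' (hφ.norm.const_mul (‖B‖ * C)) hm ?_
  filter_upwards [ae_restrict_mem measurableSet_Ioc] with u hu
  calc ‖B (φ u) (h u)‖ ≤ ‖B‖ * ‖φ u‖ * ‖h u‖ := B.le_opNorm₂ _ _
    _ ≤ ‖B‖ * ‖φ u‖ * C := by
        refine mul_le_mul_of_nonneg_left (hC u hu) ?_
        positivity
    _ = ‖B‖ * C * ‖φ u‖ := by ring

lemma aux_bilin_integrable' (B : E →L[ℝ] F →L[ℝ] G) {T : ℝ}
    {h : ℝ → E} {ψ : ℝ → F} (hψ : IntegrableOn ψ (Ioc 0 T))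
    (hhm : AEStronglyMeasurable h (volume.restrict (Ioc 0 T)))
    {C : ℝ} (hC : ∀ u ∈ Ioc 0 T, ‖h u‖ ≤ C) :
    Integrable (fun s => B (h s) (ψ s)) (volume.restrict (Ioc 0 T)) := by
  have := aux_bilin_integrable B.flip hψ hhm hC
  simpa using this

lemma key_swap (B : E →L[ℝ] F →L[ℝ] G) {T : ℝ} (hT : 0 ≤ T)
    {φ : ℝ → E} {ψ : ℝ → F} (hφ : IntegrableOn φ (Icc 0 T)) (hψ : IntegrableOn ψ (Icc 0 T)) :
    (∫ s in Ioc 0 T, B (φ s) (∫ u in Ioc 0 s, ψ u))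
      + (∫ u in Ioc 0 T, B (∫ s in Ioc 0 u, φ s) (ψ u))
    = B (∫ s in Ioc 0 T, φ s) (∫ u in Ioc 0 T, ψ u) := by
  have hφ' : IntegrableOn φ (Ioc 0 T) := hφ.mono_set Ioc_subset_Icc_self
  have hψ' : IntegrableOn ψ (Ioc 0 T) := hψ.mono_set Ioc_subset_Icc_self
  -- primitives
  set Fi : ℝ → E := fun t => ∫ s in Ioc 0 t, φ s with hFi
  set Gi : ℝ → F := fun t => ∫ u in Ioc 0 t, ψ u with hGi
  have hFic : ContinuousOn Fi (Icc 0 T) := intervalIntegral.continuousOn_primitive hφ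
  have hGic : ContinuousOn Gi (Icc 0 T) := intervalIntegral.continuousOn_primitive hψ
  obtain ⟨Cf, hCf⟩ := isCompact_Icc.exists_bound_of_continuousOn hFic
  obtain ⟨Cg, hCg⟩ := isCompact_Icc.exists_bound_of_continuousOn hGic
  have hFim : AEStronglyMeasurable Fi (volume.restrict (Ioc 0 T)) :=
    (hFic.mono Ioc_subset_Icc_self).aestronglyMeasurable measurableSet_Ioc
  have hGim : AEStronglyMeasurable Gi (volume.restrict (Ioc 0 T)) :=
    (hGic.mono Ioc_subset_Icc_self).aestronglyMeasurable measurableSet_Ioc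
  have hI1 : Integrable (fun s => B (φ s) (Gi s)) (volume.restrict (Ioc 0 T)) :=
    aux_bilin_integrable B hφ' hGim (fun u hu => hCg u (Ioc_subset_Icc_self hu))
  have hI2 : Integrable (fun u => B (Fi u) (ψ u)) (volume.restrict (Ioc 0 T)) :=
    aux_bilin_integrable' B hψ' hFim (fun u hu => hCf u (Ioc_subset_Icc_self hu))
  -- splitting of the full integral
  have split : ∀ u ∈ Ioc 0 T, (∫ s in Ioc 0 T, φ s) = Fi u + ∫ s in Ioc u T, φ s := by
    intro u hu
    rw [hFi, ← setIntegral_union (Ioc_disjoint_Ioc_of_le le_rfl) measurableSet_Ioc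
      (hφ'.mono_set (Ioc_subset_Ioc_right hu.2)) (hφ'.mono_set (Ioc_subset_Ioc_left hu.1.le)),
      Ioc_union_Ioc_eq_Ioc hu.1.le hu.2]
  have hJ : Integrable (fun u => B (∫ s in Ioc u T, φ s) (ψ u)) (volume.restrict (Ioc 0 T)) := by
    have heq : ∀ u ∈ Ioc 0 T, B (∫ s in Ioc u T, φ s) (ψ u)
        = B (∫ s in Ioc 0 T, φ s) (ψ u) - B (Fi u) (ψ u) := by
      intro u hu
      rw [split u hu]
      simp [ContinuousLinearMap.add_apply]
    refine (Integrable.sub ((B (∫ s in Ioc 0 T, φ s)).integrable_comp hψ') hI2).congr ?_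
    filter_upwards [ae_restrict_mem measurableSet_Ioc] with u hu
    exact (heq u hu).symm
  -- right hand side
  have s1 : B (∫ s in Ioc 0 T, φ s) (∫ u in Ioc 0 T, ψ u)
      = ∫ u in Ioc 0 T, B (∫ s in Ioc 0 T, φ s) (ψ u) :=
    ((B (∫ s in Ioc 0 T, φ s)).integral_comp_comm hψ').symm
  have s2 : (∫ u in Ioc 0 T, B (∫ s in Ioc 0 T, φ s) (ψ u))
      = (∫ u in Ioc 0 T, B (Fi u) (ψ u)) + ∫ u in Ioc 0 T, B (∫ s in Ioc u T, φ s) (ψ u) := by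
    rw [← integral_add hI2 hJ]
    refine setIntegral_congr_fun measurableSet_Ioc ?_
    intro u hu
    rw [split u hu]
    simp [ContinuousLinearMap.add_apply]
  -- Fubini: ∫_u B(J u)(ψ u) = ∫_s B(φ s)(Gi s)
  have fub : (∫ u in Ioc 0 T, B (∫ s in Ioc u T, φ s) (ψ u))
      = ∫ s in Ioc 0 T, B (φ s) (Gi s) := by
    set S : Set (ℝ × ℝ) := {p : ℝ × ℝ | p.1 < p.2} with hS
    have hSm : MeasurableSet S := measurableSet_lt measurable_fst measurable_snd
    set H : ℝ × ℝ → G := S.indicator (fun p => B (φ p.2) (ψ p.1)) with hH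
    have hK : AEStronglyMeasurable (fun p : ℝ × ℝ => B (φ p.2) (ψ p.1))
        ((volume.restrict (Ioc 0 T)).prod (volume.restrict (Ioc 0 T))) :=
      B.aestronglyMeasurable_comp₂ hφ'.aestronglyMeasurable.comp_snd hψ'.aestronglyMeasurable.comp_fst
    have hHint : Integrable H ((volume.restrict (Ioc 0 T)).prod (volume.restrict (Ioc 0 T))) := by
      refine Integrable.mono' (hψ'.norm.mul_prod (hφ'.norm.const_mul ‖B‖)) (hK.indicator hSm) ?_
      refine Filter.Eventually.of_forall fun p => ?_
      calc ‖H p‖ ≤ ‖B (φ p.2) (ψ p.1)‖ := norm_indicator_le_norm_self _ _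
        _ ≤ ‖B‖ * ‖φ p.2‖ * ‖ψ p.1‖ := B.le_opNorm₂ _ _
        _ = ‖ψ p.1‖ * (‖B‖ * ‖φ p.2‖) := by ring
    have swap := MeasureTheory.integral_integral_swap
      (f := fun u s => H (u, s)) (μ := volume.restrict (Ioc 0 T))
      (ν := volume.restrict (Ioc 0 T)) hHint
    have lhs : (∫ u in Ioc 0 T, ∫ s in Ioc 0 T, H (u, s))
        = ∫ u in Ioc 0 T, B (∫ s in Ioc u T, φ s) (ψ u) := by
      refine setIntegral_congr_fun measurableSet_Ioc ?_
      intro u hu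
      have h1 : ∀ s, H (u, s) = (Ioi u).indicator (fun s => B (φ s) (ψ u)) s := by
        intro s
        by_cases h : u < s <;> simp [hH, hS, Set.indicator, h]
      calc (∫ s in Ioc 0 T, H (u, s)) = ∫ s in Ioc 0 T, (Ioi u).indicator (fun s => B (φ s) (ψ u)) s := by
            simp_rw [h1]
        _ = ∫ s in Ioc 0 T ∩ Ioi u, B (φ s) (ψ u) := setIntegral_indicator measurableSet_Ioi
        _ = ∫ s in Ioc u T, B (φ s) (ψ u) := by rw [Ioc_inter_Ioi, sup_eq_right.mpr hu.1.le]
        _ = B (∫ s in Ioc u T, φ s) (ψ u) := by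
            have := (B.flip (ψ u)).integral_comp_comm (hφ'.mono_set (Ioc_subset_Ioc_left hu.1.le))
            simpa using this
    have rhs : (∫ s in Ioc 0 T, ∫ u in Ioc 0 T, H (u, s))
        = ∫ s in Ioc 0 T, B (φ s) (Gi s) := by
      refine setIntegral_congr_fun measurableSet_Ioc ?_
      intro s hs
      have h1 : ∀ u, H (u, s) = (Iio s).indicator (fun u => B (φ s) (ψ u)) u := by
        intro u
        by_cases h : u < s <;> simp [hH, hS, Set.indicator, h]
      have h2 : Ioc 0 T ∩ Iio s = Ioo 0 s := by
        ext x
        simp only [mem_inter_iff, mem_Ioc, mem_Iio, mem_Ioo]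
        exact ⟨fun h => ⟨h.1.1, h.2⟩, fun h => ⟨⟨h.1, (h.2.le.trans hs.2)⟩, h.2⟩⟩
      calc (∫ u in Ioc 0 T, H (u, s)) = ∫ u in Ioc 0 T, (Iio s).indicator (fun u => B (φ s) (ψ u)) u := by
            simp_rw [h1]
        _ = ∫ u in Ioc 0 T ∩ Iio s, B (φ s) (ψ u) := setIntegral_indicator measurableSet_Iio
        _ = ∫ u in Ioo 0 s, B (φ s) (ψ u) := by rw [h2]
        _ = ∫ u in Ioc 0 s, B (φ s) (ψ u) := (integral_Ioc_eq_integral_Ioo).symm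
        _ = B (φ s) (Gi s) :=
            (B (φ s)).integral_comp_comm (hψ'.mono_set (Ioc_subset_Ioc_right hs.2))
    rw [← lhs, swap, rhs]
  rw [s1, s2, fub]
  ring_nf
  abel

end parts
section parts2
variable {E F G : Type*} [NormedAddCommGroup E] [NormedSpace ℝ E] [CompleteSpace E]
  [NormedAddCommGroup F] [NormedSpace ℝ F] [CompleteSpace F]
  [NormedAddCommGroup G] [NormedSpace ℝ G] [CompleteSpace G]

lemma parts_s9 (B : E →L[ℝ] F →L[ℝ] G) {T : ℝ} (hT : 0 ≤ T)
    {φ : ℝ → E} {ψ : ℝ → F} (hφ : IntegrableOn φ (Icc 0 T)) (hψ : IntegrableOn ψ (Icc 0 T))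
    {f : ℝ → E} {g : ℝ → F} {c : E} {d : F}
    (hf : ∀ t ∈ Icc 0 T, f t = c + ∫ s in (0:ℝ)..t, φ s)
    (hg : ∀ t ∈ Icc 0 T, g t = d + ∫ s in (0:ℝ)..t, ψ s) :
    B (f T) (g T) - B c d = ∫ t in (0:ℝ)..T, (B (φ t) (g t) + B (f t) (ψ t)) := by
  have hφ' : IntegrableOn φ (Ioc 0 T) := hφ.mono_set Ioc_subset_Icc_self
  have hψ' : IntegrableOn ψ (Ioc 0 T) := hψ.mono_set Ioc_subset_Icc_self
  set Fi : ℝ → E := fun t => ∫ s in Ioc 0 t, φ s with hFi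
  set Gi : ℝ → F := fun t => ∫ u in Ioc 0 t, ψ u with hGi
  have hf' : ∀ t ∈ Icc 0 T, f t = c + Fi t := by
    intro t ht
    rw [hf t ht, intervalIntegral.integral_of_le ht.1]
  have hg' : ∀ t ∈ Icc 0 T, g t = d + Gi t := by
    intro t ht
    rw [hg t ht, intervalIntegral.integral_of_le ht.1]
  have hFic : ContinuousOn Fi (Icc 0 T) := intervalIntegral.continuousOn_primitive hφ
  have hGic : ContinuousOn Gi (Icc 0 T) := intervalIntegral.continuousOn_primitive hψ
  obtain ⟨Cf, hCf⟩ := isCompact_Icc.exists_bound_of_continuousOn hFic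
  obtain ⟨Cg, hCg⟩ := isCompact_Icc.exists_bound_of_continuousOn hGic
  have hFim : AEStronglyMeasurable Fi (volume.restrict (Ioc 0 T)) :=
    (hFic.mono Ioc_subset_Icc_self).aestronglyMeasurable measurableSet_Ioc
  have hGim : AEStronglyMeasurable Gi (volume.restrict (Ioc 0 T)) :=
    (hGic.mono Ioc_subset_Icc_self).aestronglyMeasurable measurableSet_Ioc
  have hI1 : Integrable (fun s => B (φ s) (Gi s)) (volume.restrict (Ioc 0 T)) :=
    aux_bilin_integrable B hφ' hGim (fun u hu => hCg u (Ioc_subset_Icc_self hu))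
  have hI2 : Integrable (fun u => B (Fi u) (ψ u)) (volume.restrict (Ioc 0 T)) :=
    aux_bilin_integrable' B hψ' hFim (fun u hu => hCf u (Ioc_subset_Icc_self hu))
  have hI3 : Integrable (fun s => B (φ s) d) (volume.restrict (Ioc 0 T)) := by
    have := (B.flip d).integrable_comp hφ'
    simpa using this
  have hI4 : Integrable (fun u => B c (ψ u)) (volume.restrict (Ioc 0 T)) :=
    (B c).integrable_comp hψ'
  have hrw : ∫ t in (0:ℝ)..T, (B (φ t) (g t) + B (f t) (ψ t))
      = ∫ t in Ioc 0 T, ((B (φ t) d + B (φ t) (Gi t)) + (B c (ψ t) + B (Fi t) (ψ t))) := by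
    rw [intervalIntegral.integral_of_le hT]
    refine setIntegral_congr_fun measurableSet_Ioc ?_
    intro t ht
    simp only [hf' t (Ioc_subset_Icc_self ht), hg' t (Ioc_subset_Icc_self ht), map_add,
      ContinuousLinearMap.add_apply]
  have hI13 : Integrable (fun t => B (φ t) d + B (φ t) (Gi t)) (volume.restrict (Ioc 0 T)) :=
    hI3.add hI1
  have hI24 : Integrable (fun t => B c (ψ t) + B (Fi t) (ψ t)) (volume.restrict (Ioc 0 T)) :=
    hI4.add hI2
  rw [hrw, integral_add hI13 hI24, integral_add hI3 hI1, integral_add hI4 hI2]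
  have e3 : (∫ t in Ioc 0 T, B (φ t) d) = B (Fi T) d := by
    have := (B.flip d).integral_comp_comm hφ'
    simpa using this
  have e4 : (∫ t in Ioc 0 T, B c (ψ t)) = B c (Gi T) := (B c).integral_comp_comm hψ'
  have key := key_swap B hT hφ hψ
  rw [e3, e4, hf' T ⟨hT, le_rfl⟩, hg' T ⟨hT, le_rfl⟩]
  have : (∫ t in Ioc 0 T, B (φ t) (Gi t)) + (∫ u in Ioc 0 T, B (Fi u) (ψ u))
      = B (Fi T) (Gi T) := key
  simp only [map_add, ContinuousLinearMap.add_apply]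
  rw [← this]
  abel

end parts2
section symm
variable {E : Type*} [NormedAddCommGroup E] [InnerProductSpace ℝ E] [CompleteSpace E]

lemma Wsymm_aux {T : ℝ} (hT : 0 ≤ T) (A Q W : ℝ → E →L[ℝ] E)
    (hQsymm : ∀ t ∈ Icc 0 T, IsSelfAdjoint (Q t))
    (CA : ℝ) (hCA : ∀ t, ‖A t‖ ≤ CA)
    (hWc : ContinuousOn W (Icc 0 T))
    (hFi : IntegrableOn (fun s => A s ∘L W s + W s ∘L ContinuousLinearMap.adjoint (A s) + Q s)
      (Icc 0 T))
    (hW : ∀ t ∈ Icc 0 T, W t = ∫ s in t..T,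
      (A s ∘L W s + W s ∘L ContinuousLinearMap.adjoint (A s) + Q s)) :
    ∀ t ∈ Icc 0 T, ContinuousLinearMap.adjoint (W t) = W t := by
  have hCA0 : (0:ℝ) ≤ CA := le_trans (norm_nonneg _) (hCA 0)
  set F : ℝ → E →L[ℝ] E :=
    fun s => A s ∘L W s + W s ∘L ContinuousLinearMap.adjoint (A s) + Q s with hFdef
  set D : ℝ → E →L[ℝ] E := fun t => W t - ContinuousLinearMap.adjoint (W t) with hDdef
  set G : ℝ → E →L[ℝ] E :=
    fun s => A s ∘L D s + D s ∘L ContinuousLinearMap.adjoint (A s) with hGdef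
  have hadj_cont : Continuous (fun M : E →L[ℝ] E => ContinuousLinearMap.adjoint M) :=
    (ContinuousLinearMap.adjoint : (E →L[ℝ] E) ≃ₗᵢ⋆[ℝ] _).continuous
  have hDc : ContinuousOn D (Icc 0 T) := hWc.sub (hadj_cont.comp_continuousOn hWc)
  have hFadj_i : IntegrableOn (fun s => ContinuousLinearMap.adjoint (F s)) (Icc 0 T) := by
    refine Integrable.mono' hFi.norm
      (hadj_cont.comp_aestronglyMeasurable hFi.aestronglyMeasurable) ?_
    refine Filter.Eventually.of_forall fun s => ?_
    rw [LinearIsometryEquiv.norm_map]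
  have hGF : ∀ s ∈ Icc 0 T, G s = F s - ContinuousLinearMap.adjoint (F s) := by
    intro s hs
    have hQ : ContinuousLinearMap.adjoint (Q s) = Q s :=
      ContinuousLinearMap.isSelfAdjoint_iff'.mp (hQsymm s hs)
    simp only [hGdef, hFdef, hDdef, map_add, ContinuousLinearMap.adjoint_comp,
      ContinuousLinearMap.adjoint_adjoint, hQ, ContinuousLinearMap.comp_sub,
      ContinuousLinearMap.sub_comp]
    abel
  have hGi : IntegrableOn G (Icc 0 T) := by
    refine (hFi.sub hFadj_i).congr ?_
    filter_upwards [ae_restrict_mem measurableSet_Icc] with s hs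
    exact (hGF s hs).symm
  have hD : ∀ t ∈ Icc 0 T, D t = ∫ s in t..T, G s := by
    intro t ht
    have hsub : Icc t T ⊆ Icc 0 T := Icc_subset_Icc ht.1 le_rfl
    have hFII : IntervalIntegrable F volume t T :=
      ((hFi.mono_set hsub).congr_set_ae (by rw [uIcc_of_le ht.2]; exact Filter.EventuallyEq.rfl)).intervalIntegrable
    have h1 : ContinuousLinearMap.adjoint (W t)
        = ∫ s in t..T, ContinuousLinearMap.adjoint (F s) := by
      rw [hW t ht, intervalIntegral.integral_of_le ht.2, intervalIntegral.integral_of_le ht.2]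
      exact ((ContinuousLinearMap.adjoint : (E →L[ℝ] E) ≃ₗᵢ⋆[ℝ] _).toLinearIsometry.integral_comp_comm
        F).symm
    have hFadjII : IntervalIntegrable (fun s => ContinuousLinearMap.adjoint (F s)) volume t T :=
      ((hFadj_i.mono_set hsub).congr_set_ae (by rw [uIcc_of_le ht.2]; exact Filter.EventuallyEq.rfl)).intervalIntegrable
    show W t - ContinuousLinearMap.adjoint (W t) = _
    rw [h1, hW t ht, ← intervalIntegral.integral_sub hFII hFadjII]
    refine intervalIntegral.integral_congr ?_
    intro s hs
    rw [uIcc_of_le ht.2] at hs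
    exact (hGF s (hsub hs)).symm
  obtain ⟨M, hM⟩ := isCompact_Icc.exists_bound_of_continuousOn hDc
  have hM0 : (0:ℝ) ≤ M := le_trans (norm_nonneg _) (hM 0 ⟨le_rfl, hT⟩)
  have hGnorm : ∀ s ∈ Icc 0 T, ‖G s‖ ≤ 2 * CA * ‖D s‖ := by
    intro s _
    calc ‖G s‖ ≤ ‖A s ∘L D s‖ + ‖D s ∘L ContinuousLinearMap.adjoint (A s)‖ := norm_add_le _ _
      _ ≤ ‖A s‖ * ‖D s‖ + ‖D s‖ * ‖ContinuousLinearMap.adjoint (A s)‖ :=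
          add_le_add (ContinuousLinearMap.opNorm_comp_le _ _) (ContinuousLinearMap.opNorm_comp_le _ _)
      _ ≤ CA * ‖D s‖ + ‖D s‖ * CA := by
          rw [LinearIsometryEquiv.norm_map]
          exact add_le_add (mul_le_mul_of_nonneg_right (hCA s) (norm_nonneg _))
            (mul_le_mul_of_nonneg_left (hCA s) (norm_nonneg _))
      _ = 2 * CA * ‖D s‖ := by ring
  have key : ∀ k : ℕ, ∀ t ∈ Icc 0 T,
      ‖D t‖ ≤ M * (2*CA)^k * (T-t)^k / (k.factorial : ℝ) := by
    intro k
    induction k with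
    | zero => intro t ht; simpa using hM t ht
    | succ k ih =>
      intro t ht
      have hsub : Icc t T ⊆ Icc 0 T := Icc_subset_Icc ht.1 le_rfl
      have hGII : IntervalIntegrable G volume t T :=
        ((hGi.mono_set hsub).congr_set_ae (by rw [uIcc_of_le ht.2]; exact Filter.EventuallyEq.rfl)).intervalIntegrable
      rw [hD t ht]
      have h1 : ‖∫ s in t..T, G s‖ ≤ ∫ s in t..T, ‖G s‖ :=
        intervalIntegral.norm_integral_le_integral_norm ht.2
      have hkz : ((k.factorial : ℝ)) ≠ 0 := Nat.cast_ne_zero.mpr k.factorial_pos.ne'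
      set c : ℝ := 2*CA * M * (2*CA)^k / (k.factorial : ℝ) with hc
      have hc0 : 0 ≤ c := by positivity
      have h2 : (∫ s in t..T, ‖G s‖) ≤ ∫ s in t..T, c * (T-s)^k := by
        refine intervalIntegral.integral_mono_on ht.2 hGII.norm ?_ ?_
        · exact (continuous_const.mul ((continuous_const.sub continuous_id).pow k)).intervalIntegrable _ _
        · intro s hs
          have hs' : s ∈ Icc 0 T := hsub hs
          have hTs : (0:ℝ) ≤ T - s := sub_nonneg.mpr hs.2
          calc ‖G s‖ ≤ 2*CA*‖D s‖ := hGnorm s hs'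
            _ ≤ 2*CA * (M * (2*CA)^k * (T-s)^k / (k.factorial : ℝ)) :=
                mul_le_mul_of_nonneg_left (ih s hs') (by positivity)
            _ = c * (T-s)^k := by rw [hc]; ring
      have hpow : (∫ s in t..T, (T - s)^k) = (T-t)^(k+1)/(k+1) := by
        rw [intervalIntegral.integral_comp_sub_left (fun x => x^k) T]
        simp [integral_pow]
      have h3 : (∫ s in t..T, c * (T-s)^k)
          = M * (2*CA)^(k+1) * (T-t)^(k+1) / ((k+1).factorial : ℝ) := by
        rw [intervalIntegral.integral_const_mul, hpow, hc, Nat.factorial_succ]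
        have hk1 : ((k:ℝ)+1) ≠ 0 := by positivity
        push_cast
        field_simp
        ring
      exact h1.trans (h2.trans_eq h3)
  intro t ht
  have h0 : ‖D t‖ ≤ 0 := by
    have tend : Filter.Tendsto (fun k : ℕ => M * ((2*CA*(T-t))^k / (k.factorial : ℝ)))
        Filter.atTop (nhds 0) := by
      simpa using (FloorSemiring.tendsto_pow_div_factorial_atTop (K := ℝ) (2*CA*(T-t))).const_mul M
    refine ge_of_tendsto' tend fun k => ?_
    calc ‖D t‖ ≤ M * (2*CA)^k * (T-t)^k / (k.factorial : ℝ) := key k t ht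
      _ = M * ((2*CA*(T-t))^k / (k.factorial : ℝ)) := by rw [mul_pow, mul_pow]; ring
  have hD0 : D t = 0 := norm_le_zero_iff.mp h0
  have := sub_eq_zero.mp hD0
  exact this.symm

end symm
set_option maxHeartbeats 2000000 in
theorem stmt_9 {n : ℕ} (T : ℝ) (hT : 0 < T)
    (A Q : ℝ → EuclideanSpace ℝ (Fin n) →L[ℝ] EuclideanSpace ℝ (Fin n))
    (b : ℝ → EuclideanSpace ℝ (Fin n))
    (hAm : StronglyMeasurable A) (hQm : StronglyMeasurable Q) (hbm : Measurable b)
    (CA CQ Cb : ℝ) (hCA : ∀ t, ‖A t‖ ≤ CA) (hCQ : ∀ t, ‖Q t‖ ≤ CQ) (hCb : ∀ t, ‖b t‖ ≤ Cb)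
    (hQsymm : ∀ t ∈ Icc 0 T, IsSelfAdjoint (Q t))
    (W : ℝ → EuclideanSpace ℝ (Fin n) →L[ℝ] EuclideanSpace ℝ (Fin n))
    (hWc : ContinuousOn W (Icc 0 T))
    (hW : ∀ t ∈ Icc 0 T, W t = ∫ s in t..T,
      (A s ∘L W s + W s ∘L ContinuousLinearMap.adjoint (A s) + Q s))
    (X : ℝ → EuclideanSpace ℝ (Fin n)) (hXc : ContinuousOn X (Icc 0 T))
    (hX : ∀ t ∈ Icc 0 T, X t = ∫ s in (0:ℝ)..t,
      (ContinuousLinearMap.adjoint (A s) (X s) + b s)) :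
    -(1/2) * ∫ t in (0:ℝ)..T,
        (LinearMap.trace ℝ (EuclideanSpace ℝ (Fin n))
          ((Q t ∘L ((innerSL ℝ (X t)).smulRight (X t))) :
            EuclideanSpace ℝ (Fin n) →L[ℝ] EuclideanSpace ℝ (Fin n)))
      = -∫ t in (0:ℝ)..T, ⟪W t (b t), X t⟫ := by
  have hT' : (0:ℝ) ≤ T := hT.le
  have h0mem : (0:ℝ) ∈ Icc (0:ℝ) T := ⟨le_rfl, hT'⟩
  have hTmem : T ∈ Icc (0:ℝ) T := ⟨hT', le_rfl⟩
  have hX0 : X 0 = 0 := by simpa using hX 0 h0mem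
  have hWT : W T = 0 := by simpa using hW T hTmem
  obtain ⟨CW, hCW⟩ := isCompact_Icc.exists_bound_of_continuousOn hWc
  obtain ⟨CX, hCX⟩ := isCompact_Icc.exists_bound_of_continuousOn hXc
  have hCW0 : (0:ℝ) ≤ CW := le_trans (norm_nonneg _) (hCW 0 h0mem)
  have hCX0 : (0:ℝ) ≤ CX := le_trans (norm_nonneg _) (hCX 0 h0mem)
  have hCA0 : (0:ℝ) ≤ CA := le_trans (norm_nonneg _) (hCA 0)
  have hCQ0 : (0:ℝ) ≤ CQ := le_trans (norm_nonneg _) (hCQ 0)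
  have hCb0 : (0:ℝ) ≤ Cb := le_trans (norm_nonneg _) (hCb 0)
  have hWm : AEStronglyMeasurable W (volume.restrict (Icc 0 T)) :=
    hWc.aestronglyMeasurable measurableSet_Icc
  have hXm : AEStronglyMeasurable X (volume.restrict (Icc 0 T)) :=
    hXc.aestronglyMeasurable measurableSet_Icc
  have hAm' : AEStronglyMeasurable A (volume.restrict (Icc 0 T)) :=
    hAm.aestronglyMeasurable.restrict
  have hQm' : AEStronglyMeasurable Q (volume.restrict (Icc 0 T)) :=
    hQm.aestronglyMeasurable.restrict
  have hbm' : AEStronglyMeasurable b (volume.restrict (Icc 0 T)) :=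
    hbm.aestronglyMeasurable.restrict
  have hadj_cont : Continuous (fun M : EuclideanSpace ℝ (Fin n) →L[ℝ] EuclideanSpace ℝ (Fin n) =>
      ContinuousLinearMap.adjoint M) :=
    (ContinuousLinearMap.adjoint :
      (EuclideanSpace ℝ (Fin n) →L[ℝ] EuclideanSpace ℝ (Fin n)) ≃ₗᵢ⋆[ℝ] _).continuous
  have hAadjm : AEStronglyMeasurable (fun s => ContinuousLinearMap.adjoint (A s))
      (volume.restrict (Icc 0 T)) := hadj_cont.comp_aestronglyMeasurable hAm'
  -- x' measurability and integrability
  have hx'm : AEStronglyMeasurable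
      (fun s => ContinuousLinearMap.adjoint (A s) (X s) + b s) (volume.restrict (Icc 0 T)) := by
    have h1 := (ContinuousLinearMap.id ℝ
      (EuclideanSpace ℝ (Fin n) →L[ℝ] EuclideanSpace ℝ (Fin n))).aestronglyMeasurable_comp₂
      hAadjm hXm
    exact h1.add hbm'
  have hx'bound : ∀ s ∈ Icc (0:ℝ) T,
      ‖ContinuousLinearMap.adjoint (A s) (X s) + b s‖ ≤ CA * CX + Cb := by
    intro s hs
    calc ‖ContinuousLinearMap.adjoint (A s) (X s) + b s‖
        ≤ ‖ContinuousLinearMap.adjoint (A s) (X s)‖ + ‖b s‖ := norm_add_le _ _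
      _ ≤ ‖ContinuousLinearMap.adjoint (A s)‖ * ‖X s‖ + Cb :=
          add_le_add (ContinuousLinearMap.le_opNorm _ _) (hCb s)
      _ ≤ CA * CX + Cb := by
          rw [LinearIsometryEquiv.norm_map]
          exact add_le_add_left (mul_le_mul (hCA s) (hCX s hs) (norm_nonneg _) hCA0) _
  have hx'i : IntegrableOn
      (fun s => ContinuousLinearMap.adjoint (A s) (X s) + b s) (Icc 0 T) := by
    refine Integrable.mono' (g := fun _ => CA * CX + Cb)
      (integrableOn_const measure_Icc_lt_top.ne) hx'm ?_
    filter_upwards [ae_restrict_mem measurableSet_Icc] with s hs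
    exact hx'bound s hs
  -- F measurability and integrability
  have hFm : AEStronglyMeasurable
      (fun s => A s ∘L W s + W s ∘L ContinuousLinearMap.adjoint (A s) + Q s)
      (volume.restrict (Icc 0 T)) := by
    have h1 := (ContinuousLinearMap.compL ℝ (EuclideanSpace ℝ (Fin n))
      (EuclideanSpace ℝ (Fin n)) (EuclideanSpace ℝ (Fin n))).aestronglyMeasurable_comp₂ hAm' hWm
    have h2 := (ContinuousLinearMap.compL ℝ (EuclideanSpace ℝ (Fin n))
      (EuclideanSpace ℝ (Fin n)) (EuclideanSpace ℝ (Fin n))).aestronglyMeasurable_comp₂ hWm hAadjm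
    exact (h1.add h2).add hQm'
  have hFbound : ∀ s ∈ Icc (0:ℝ) T,
      ‖A s ∘L W s + W s ∘L ContinuousLinearMap.adjoint (A s) + Q s‖
        ≤ CA * CW + CW * CA + CQ := by
    intro s hs
    calc ‖A s ∘L W s + W s ∘L ContinuousLinearMap.adjoint (A s) + Q s‖
        ≤ ‖A s ∘L W s + W s ∘L ContinuousLinearMap.adjoint (A s)‖ + ‖Q s‖ := norm_add_le _ _
      _ ≤ ‖A s ∘L W s‖ + ‖W s ∘L ContinuousLinearMap.adjoint (A s)‖ + ‖Q s‖ :=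
          add_le_add_left (norm_add_le _ _) _
      _ ≤ ‖A s‖ * ‖W s‖ + ‖W s‖ * ‖ContinuousLinearMap.adjoint (A s)‖ + CQ :=
          add_le_add (add_le_add (ContinuousLinearMap.opNorm_comp_le _ _)
            (ContinuousLinearMap.opNorm_comp_le _ _)) (hCQ s)
      _ ≤ CA * CW + CW * CA + CQ := by
          rw [LinearIsometryEquiv.norm_map]
          exact add_le_add_left (add_le_add
            (mul_le_mul (hCA s) (hCW s hs) (norm_nonneg _) hCA0)
            (mul_le_mul (hCW s hs) (hCA s) (norm_nonneg _) hCW0)) _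
  have hFi : IntegrableOn
      (fun s => A s ∘L W s + W s ∘L ContinuousLinearMap.adjoint (A s) + Q s) (Icc 0 T) := by
    refine Integrable.mono' (g := fun _ => CA * CW + CW * CA + CQ)
      (integrableOn_const measure_Icc_lt_top.ne) hFm ?_
    filter_upwards [ae_restrict_mem measurableSet_Icc] with s hs
    exact hFbound s hs
  -- symmetry of W
  have hWsymm := Wsymm_aux hT' A Q W hQsymm CA hCA hWc hFi hW
  -- interval integrability of F on [0, T]
  have hFII : IntervalIntegrable
      (fun s => A s ∘L W s + W s ∘L ContinuousLinearMap.adjoint (A s) + Q s) volume 0 T :=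
    (hFi.congr_set_ae (by rw [uIcc_of_le hT']; exact Filter.EventuallyEq.rfl)).intervalIntegrable
  -- representation of W
  have hWrep : ∀ t ∈ Icc (0:ℝ) T, W t = W 0 + ∫ s in (0:ℝ)..t,
      (-(A s ∘L W s + W s ∘L ContinuousLinearMap.adjoint (A s) + Q s)) := by
    intro t ht
    have h0 := hW 0 h0mem
    have hsplit := intervalIntegral.integral_add_adjacent_intervals
      (hFII.mono_set (by rw [uIcc_of_le ht.1, uIcc_of_le hT']; exact Icc_subset_Icc le_rfl ht.2))
      (hFII.mono_set (by rw [uIcc_of_le ht.2, uIcc_of_le hT']; exact Icc_subset_Icc ht.1 le_rfl))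
      (a := 0) (b := t) (c := T)
    rw [hW t ht, intervalIntegral.integral_neg, h0, ← hsplit]
    abel
  -- parts #1 : representation of t ↦ W t (X t)
  have hP : ∀ t ∈ Icc (0:ℝ) T, W t (X t) = ∫ s in (0:ℝ)..t,
      (W s (ContinuousLinearMap.adjoint (A s) (X s) + b s)
        - (A s ∘L W s + W s ∘L ContinuousLinearMap.adjoint (A s) + Q s) (X s)) := by
    intro t ht
    have hsub : Icc (0:ℝ) t ⊆ Icc (0:ℝ) T := Icc_subset_Icc le_rfl ht.2
    have hnegFi : IntegrableOn
        (fun s => -(A s ∘L W s + W s ∘L ContinuousLinearMap.adjoint (A s) + Q s)) (Icc 0 t) :=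
      (hFi.mono_set hsub).neg
    have hcon := parts_s9 (ContinuousLinearMap.id ℝ
        (EuclideanSpace ℝ (Fin n) →L[ℝ] EuclideanSpace ℝ (Fin n))) ht.1
      hnegFi (hx'i.mono_set hsub)
      (f := W) (c := W 0) (g := X) (d := 0)
      (fun u hu => hWrep u (hsub hu))
      (fun u hu => by rw [zero_add]; exact hX u (hsub hu))
    simp only [ContinuousLinearMap.id_apply, map_zero, sub_zero,
      ContinuousLinearMap.neg_apply] at hcon
    rw [hcon]
    refine intervalIntegral.integral_congr fun s _ => ?_
    simp only [ContinuousLinearMap.neg_apply]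
    abel
  -- parts #2
  have hPm : AEStronglyMeasurable (fun t => W t (X t)) (volume.restrict (Icc 0 T)) :=
    (ContinuousLinearMap.id ℝ
      (EuclideanSpace ℝ (Fin n) →L[ℝ] EuclideanSpace ℝ (Fin n))).aestronglyMeasurable_comp₂
      hWm hXm
  have hp'm : AEStronglyMeasurable
      (fun s => W s (ContinuousLinearMap.adjoint (A s) (X s) + b s)
        - (A s ∘L W s + W s ∘L ContinuousLinearMap.adjoint (A s) + Q s) (X s))
      (volume.restrict (Icc 0 T)) := by
    have h1 := (ContinuousLinearMap.id ℝ
      (EuclideanSpace ℝ (Fin n) →L[ℝ] EuclideanSpace ℝ (Fin n))).aestronglyMeasurable_comp₂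
      hWm hx'm
    have h2 := (ContinuousLinearMap.id ℝ
      (EuclideanSpace ℝ (Fin n) →L[ℝ] EuclideanSpace ℝ (Fin n))).aestronglyMeasurable_comp₂
      hFm hXm
    exact h1.sub h2
  have hp'i : IntegrableOn
      (fun s => W s (ContinuousLinearMap.adjoint (A s) (X s) + b s)
        - (A s ∘L W s + W s ∘L ContinuousLinearMap.adjoint (A s) + Q s) (X s)) (Icc 0 T) := by
    refine Integrable.mono'
      (g := fun _ => CW * (CA * CX + Cb) + (CA * CW + CW * CA + CQ) * CX)
      (integrableOn_const measure_Icc_lt_top.ne) hp'm ?_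
    filter_upwards [ae_restrict_mem measurableSet_Icc] with s hs
    calc ‖W s (ContinuousLinearMap.adjoint (A s) (X s) + b s)
          - (A s ∘L W s + W s ∘L ContinuousLinearMap.adjoint (A s) + Q s) (X s)‖
        ≤ ‖W s (ContinuousLinearMap.adjoint (A s) (X s) + b s)‖
          + ‖(A s ∘L W s + W s ∘L ContinuousLinearMap.adjoint (A s) + Q s) (X s)‖ :=
          norm_sub_le _ _
      _ ≤ ‖W s‖ * ‖ContinuousLinearMap.adjoint (A s) (X s) + b s‖
          + ‖A s ∘L W s + W s ∘L ContinuousLinearMap.adjoint (A s) + Q s‖ * ‖X s‖ :=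
          add_le_add (ContinuousLinearMap.le_opNorm _ _) (ContinuousLinearMap.le_opNorm _ _)
      _ ≤ CW * (CA * CX + Cb) + (CA * CW + CW * CA + CQ) * CX :=
          add_le_add
            (mul_le_mul (hCW s hs) (hx'bound s hs) (norm_nonneg _) hCW0)
            (mul_le_mul (hFbound s hs) (hCX s hs) (norm_nonneg _) (by positivity))
  have main := parts_s9 (innerSL ℝ :
      EuclideanSpace ℝ (Fin n) →L[ℝ] EuclideanSpace ℝ (Fin n) →L[ℝ] ℝ) hT' hp'i hx'i
    (f := fun t => W t (X t)) (c := 0) (g := X) (d := 0)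
    (fun u hu => by rw [zero_add]; exact hP u hu)
    (fun u hu => by rw [zero_add]; exact hX u hu)
  simp only [hWT, ContinuousLinearMap.zero_apply, map_zero, sub_zero] at main
  -- main : 0 = ∫ t in 0..T, (innerSL ℝ (p' t) (X t) + innerSL ℝ (W t (X t)) (x' t))
  have hptwise : ∀ t ∈ Icc (0:ℝ) T,
      ((innerSL ℝ) (W t (ContinuousLinearMap.adjoint (A t) (X t) + b t)
          - (A t ∘L W t + W t ∘L ContinuousLinearMap.adjoint (A t) + Q t) (X t))) (X t)
        + ((innerSL ℝ) (W t (X t))) (ContinuousLinearMap.adjoint (A t) (X t) + b t)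
      = -⟪Q t (X t), X t⟫ + 2 * ⟪W t (b t), X t⟫ := by
    intro t ht
    have hadj1 : ⟪W t (X t), ContinuousLinearMap.adjoint (A t) (X t)⟫
        = ⟪A t (W t (X t)), X t⟫ := ContinuousLinearMap.adjoint_inner_right _ _ _
    have hadj2 : ⟪W t (X t), b t⟫ = ⟪W t (b t), X t⟫ := by
      conv_lhs => rw [← hWsymm t ht]
      rw [ContinuousLinearMap.adjoint_inner_left]
      exact real_inner_comm _ _
    simp only [innerSL_apply_apply, map_add, ContinuousLinearMap.add_apply,
      ContinuousLinearMap.comp_apply, inner_sub_left, inner_add_left, inner_add_right]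
    rw [hadj1, hadj2]
    ring
  have hQXX_m : AEStronglyMeasurable (fun t => ⟪Q t (X t), X t⟫) (volume.restrict (Icc 0 T)) := by
    have h1 := (ContinuousLinearMap.id ℝ
      (EuclideanSpace ℝ (Fin n) →L[ℝ] EuclideanSpace ℝ (Fin n))).aestronglyMeasurable_comp₂
      hQm' hXm
    exact (innerSL ℝ :
      EuclideanSpace ℝ (Fin n) →L[ℝ] EuclideanSpace ℝ (Fin n) →L[ℝ] ℝ).aestronglyMeasurable_comp₂
      h1 hXm
  have hQXX_i : IntegrableOn (fun t => ⟪Q t (X t), X t⟫) (Icc 0 T) := by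
    refine Integrable.mono' (g := fun _ => CQ * CX * CX)
      (integrableOn_const measure_Icc_lt_top.ne) hQXX_m ?_
    filter_upwards [ae_restrict_mem measurableSet_Icc] with s hs
    calc ‖⟪Q s (X s), X s⟫‖ ≤ ‖Q s (X s)‖ * ‖X s‖ := norm_inner_le_norm _ _
      _ ≤ (CQ * CX) * CX := by
          refine mul_le_mul ?_ (hCX s hs) (norm_nonneg _) (by positivity)
          calc ‖Q s (X s)‖ ≤ ‖Q s‖ * ‖X s‖ := ContinuousLinearMap.le_opNorm _ _
            _ ≤ CQ * CX := mul_le_mul (hCQ s) (hCX s hs) (norm_nonneg _) hCQ0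
  have hWbX_m : AEStronglyMeasurable (fun t => ⟪W t (b t), X t⟫) (volume.restrict (Icc 0 T)) := by
    have h1 := (ContinuousLinearMap.id ℝ
      (EuclideanSpace ℝ (Fin n) →L[ℝ] EuclideanSpace ℝ (Fin n))).aestronglyMeasurable_comp₂
      hWm hbm'
    exact (innerSL ℝ :
      EuclideanSpace ℝ (Fin n) →L[ℝ] EuclideanSpace ℝ (Fin n) →L[ℝ] ℝ).aestronglyMeasurable_comp₂
      h1 hXm
  have hWbX_i : IntegrableOn (fun t => ⟪W t (b t), X t⟫) (Icc 0 T) := by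
    refine Integrable.mono' (g := fun _ => CW * Cb * CX)
      (integrableOn_const measure_Icc_lt_top.ne) hWbX_m ?_
    filter_upwards [ae_restrict_mem measurableSet_Icc] with s hs
    calc ‖⟪W s (b s), X s⟫‖ ≤ ‖W s (b s)‖ * ‖X s‖ := norm_inner_le_norm _ _
      _ ≤ (CW * Cb) * CX := by
          refine mul_le_mul ?_ (hCX s hs) (norm_nonneg _) (by positivity)
          calc ‖W s (b s)‖ ≤ ‖W s‖ * ‖b s‖ := ContinuousLinearMap.le_opNorm _ _
            _ ≤ CW * Cb := mul_le_mul (hCW s hs) (hCb s) (norm_nonneg _) hCW0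
  have hQII : IntervalIntegrable (fun t => ⟪Q t (X t), X t⟫) volume 0 T :=
    (hQXX_i.congr_set_ae (by rw [uIcc_of_le hT']; exact Filter.EventuallyEq.rfl)).intervalIntegrable
  have hWbII : IntervalIntegrable (fun t => ⟪W t (b t), X t⟫) volume 0 T :=
    (hWbX_i.congr_set_ae (by rw [uIcc_of_le hT']; exact Filter.EventuallyEq.rfl)).intervalIntegrable
  have main2 : (0:ℝ) = ∫ t in (0:ℝ)..T, (-⟪Q t (X t), X t⟫ + 2 * ⟪W t (b t), X t⟫) := by
    refine main.trans ?_
    refine intervalIntegral.integral_congr fun t ht => ?_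
    rw [uIcc_of_le hT'] at ht
    exact hptwise t ht
  have hsplit2 : (∫ t in (0:ℝ)..T, (-⟪Q t (X t), X t⟫ + 2 * ⟪W t (b t), X t⟫))
      = -(∫ t in (0:ℝ)..T, ⟪Q t (X t), X t⟫) + 2 * ∫ t in (0:ℝ)..T, ⟪W t (b t), X t⟫ := by
    have hnegQ : IntervalIntegrable (fun t => -⟪Q t (X t), X t⟫) volume 0 T := hQII.neg
    have h2Wb : IntervalIntegrable (fun t => 2 * ⟪W t (b t), X t⟫) volume 0 T :=
      hWbII.const_mul 2
    rw [intervalIntegral.integral_add hnegQ h2Wb, intervalIntegral.integral_neg,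
      intervalIntegral.integral_const_mul]
  have hkey : (∫ t in (0:ℝ)..T, ⟪Q t (X t), X t⟫)
      = 2 * ∫ t in (0:ℝ)..T, ⟪W t (b t), X t⟫ := by
    have := main2.trans hsplit2
    linarith
  have htr : (∫ t in (0:ℝ)..T,
      (LinearMap.trace ℝ (EuclideanSpace ℝ (Fin n))
          ((Q t ∘L ((innerSL ℝ (X t)).smulRight (X t))) :
            EuclideanSpace ℝ (Fin n) →L[ℝ] EuclideanSpace ℝ (Fin n))))
      = ∫ t in (0:ℝ)..T, ⟪Q t (X t), X t⟫ := by
    refine intervalIntegral.integral_congr fun t _ => ?_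
    exact trace_rankone (Q t) (X t)
  rw [htr, hkey]
  ring
end

section
/- Let $F,G:[0,T]\to\mathbb{R}^n$ be bounded measurable, and let $\beta\in[0,T)$ be a common Lebesgue point of $F$, $|F|^2$, and $G$ (i.e., $\frac1\alpha\int_\beta^{\beta+\alpha}(F,|F|^2,G)\to(F(\beta),|F(\beta)|^2,G(\beta))$ as $\alpha\to0^+$). Then $\lim_{\alpha\to0^+}\frac{2}{\alpha^2}\int_\beta^{\beta+\alpha}\!\!dt\int_\beta^t\langle F(t),G(s)\rangle\,ds=\langle F(\beta),G(\beta)\rangle$. -/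
open MeasureTheory Set
open scoped RealInnerProductSpace

/-- Bounded a.e.-strongly-measurable functions are interval integrable. -/
lemma aux_bdd_intervalIntegrable {E : Type*} [NormedAddCommGroup E] {f : ℝ → E}
    (hm : AEStronglyMeasurable f volume) {a b C : ℝ}
    (hC : ∀ t ∈ Set.uIoc a b, ‖f t‖ ≤ C) : IntervalIntegrable f volume a b := by
  rw [intervalIntegrable_iff]
  have hfin : volume (Set.uIoc a b) < ⊤ := by rw [Set.uIoc]; exact measure_Ioc_lt_top
  refine Integrable.mono' (g := fun _ => C)
    (integrableOn_const hfin.ne) hm.restrict ?_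
  exact (ae_restrict_iff' measurableSet_uIoc).2 (Filter.Eventually.of_forall hC)

/-- Pull a constant out of an inner product under an interval integral. -/
lemma aux_intervalIntegral_inner {E : Type*} [NormedAddCommGroup E] [InnerProductSpace ℝ E]
    [CompleteSpace E] {f : ℝ → E} {a b : ℝ}
    (hf : IntervalIntegrable f volume a b) (c : E) :
    (∫ x in a..b, ⟪c, f x⟫) = ⟪c, ∫ x in a..b, f x⟫ := by
  simp only [intervalIntegral]
  rw [integral_inner hf.1, integral_inner hf.2, inner_sub_right]

lemma aux_integral_sub_id (β α : ℝ) : (∫ t in β..(β + α), (t - β)) = α ^ 2 / 2 := by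
  have h := intervalIntegral.integral_comp_sub_right (a := β) (b := β + α) (fun u => u) β
  simp only [sub_self, add_sub_cancel_left] at h
  rw [h, integral_id]
  ring

set_option maxHeartbeats 1000000 in
theorem stmt_11 {n : ℕ} (T : ℝ) (hT : 0 < T)
    (F G : ℝ → EuclideanSpace ℝ (Fin n))
    (hFm : Measurable F) (hGm : Measurable G)
    (CF CG : ℝ) (hCF : ∀ t, ‖F t‖ ≤ CF) (hCG : ∀ t, ‖G t‖ ≤ CG)
    (β : ℝ) (hβ : β ∈ Ico 0 T)
    (hF : Filter.Tendsto (fun α => α⁻¹ • ∫ t in β..(β + α), F t)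
      (nhdsWithin 0 (Ioi 0)) (nhds (F β)))
    (hF2 : Filter.Tendsto (fun α => α⁻¹ * ∫ t in β..(β + α), ‖F t‖ ^ 2)
      (nhdsWithin 0 (Ioi 0)) (nhds (‖F β‖ ^ 2)))
    (hG : Filter.Tendsto (fun α => α⁻¹ • ∫ t in β..(β + α), G t)
      (nhdsWithin 0 (Ioi 0)) (nhds (G β))) :
    Filter.Tendsto (fun α => (2 / α ^ 2) * ∫ t in β..(β + α), ∫ s in β..t, ⟪F t, G s⟫)
      (nhdsWithin 0 (Ioi 0)) (nhds ⟪F β, G β⟫) := by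
  have hCF0 : 0 ≤ CF := (norm_nonneg _).trans (hCF 0)
  have hCG0 : 0 ≤ CG := (norm_nonneg _).trans (hCG 0)
  have hGint : ∀ a b : ℝ, IntervalIntegrable G volume a b := fun a b =>
    aux_bdd_intervalIntegrable hGm.aestronglyMeasurable (fun t _ => hCG t)
  have hIcont : Continuous fun t => ∫ s in β..t, G s :=
    intervalIntegral.continuous_primitive hGint β
  -- measurability of the integrands
  have hJm : Measurable fun t => (⟪F t, (∫ s in β..t, G s) - (t - β) • G β⟫ : ℝ) :=
    hFm.inner (hIcont.measurable.sub ((measurable_id.sub measurable_const).smul measurable_const))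
  have hE1m : Measurable fun t => (t - β) * ⟪F t - F β, G β⟫ :=
    (measurable_id.sub measurable_const).mul ((hFm.sub measurable_const).inner measurable_const)
  have hSqm : Measurable fun t => ‖F t - F β‖ ^ 2 :=
    ((hFm.sub measurable_const).norm).pow_const 2
  have hSqint : ∀ α : ℝ, IntervalIntegrable (fun t => ‖F t - F β‖ ^ 2) volume β (β + α) := by
    intro α
    refine aux_bdd_intervalIntegrable hSqm.aestronglyMeasurable
      (C := (CF + ‖F β‖) ^ 2) (fun t _ => ?_)
    have h1 : ‖F t - F β‖ ≤ CF + ‖F β‖ :=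
      (norm_sub_le _ _).trans (add_le_add_left (hCF t) _)
    have h2 : (0:ℝ) ≤ ‖F t - F β‖ := norm_nonneg _
    rw [Real.norm_eq_abs, abs_of_nonneg (by positivity)]
    nlinarith
  -- integrability of the three pieces, for α > 0
  have hint2 : ∀ α : ℝ, IntervalIntegrable (fun t => (t - β) * ⟪F t - F β, G β⟫)
      volume β (β + α) := by
    intro α
    refine aux_bdd_intervalIntegrable hE1m.aestronglyMeasurable
      (C := |α| * ((CF + ‖F β‖) * ‖G β‖)) (fun t ht => ?_)
    have habs : |t - β| ≤ |α| := by
      rcases le_total β (β + α) with h | h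
      · rw [Set.uIoc_of_le h] at ht
        rw [abs_le]
        constructor <;> nlinarith [le_abs_self α, neg_abs_le α, ht.1, ht.2]
      · rw [Set.uIoc_of_ge h] at ht
        rw [abs_le]
        constructor <;> nlinarith [le_abs_self α, neg_abs_le α, ht.1, ht.2]
    have h2 : |⟪F t - F β, G β⟫| ≤ (CF + ‖F β‖) * ‖G β‖ := by
      refine (abs_real_inner_le_norm _ _).trans ?_
      exact mul_le_mul_of_nonneg_right
        ((norm_sub_le _ _).trans (add_le_add_left (hCF t) _)) (norm_nonneg _)
    rw [Real.norm_eq_abs, abs_mul]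
    exact mul_le_mul habs h2 (abs_nonneg _) (abs_nonneg _)
  have hint3 : ∀ α : ℝ, IntervalIntegrable
      (fun t => (⟪F t, (∫ s in β..t, G s) - (t - β) • G β⟫ : ℝ)) volume β (β + α) := by
    intro α
    refine aux_bdd_intervalIntegrable hJm.aestronglyMeasurable
      (C := CF * ((CG + ‖G β‖) * |α|)) (fun t ht => ?_)
    have habs : |t - β| ≤ |α| := by
      rcases le_total β (β + α) with h | h
      · rw [Set.uIoc_of_le h] at ht
        rw [abs_le]
        constructor <;> nlinarith [le_abs_self α, neg_abs_le α, ht.1, ht.2]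
      · rw [Set.uIoc_of_ge h] at ht
        rw [abs_le]
        constructor <;> nlinarith [le_abs_self α, neg_abs_le α, ht.1, ht.2]
    have hI : ‖(∫ s in β..t, G s)‖ ≤ CG * |t - β| := by
      have := intervalIntegral.norm_integral_le_of_norm_le_const
        (a := β) (b := t) (C := CG) (f := G) (fun s _ => hCG s)
      simpa [abs_sub_comm] using this
    have hJ : ‖(∫ s in β..t, G s) - (t - β) • G β‖ ≤ (CG + ‖G β‖) * |α| := by
      refine (norm_sub_le _ _).trans ?_
      have h1 : ‖(t - β) • G β‖ = |t - β| * ‖G β‖ := by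
        rw [norm_smul, Real.norm_eq_abs]
      have h2 : CG * |t - β| ≤ CG * |α| := mul_le_mul_of_nonneg_left habs hCG0
      have h3 : |t - β| * ‖G β‖ ≤ |α| * ‖G β‖ :=
        mul_le_mul_of_nonneg_right habs (norm_nonneg _)
      rw [h1]; nlinarith
    rw [Real.norm_eq_abs]
    refine (abs_real_inner_le_norm _ _).trans ?_
    exact mul_le_mul (hCF t) hJ (norm_nonneg _) hCF0
  -- the L² Lebesgue-point statement
  have hL2 : Filter.Tendsto (fun α => α⁻¹ * ∫ t in β..(β + α), ‖F t - F β‖ ^ 2)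
      (nhdsWithin 0 (Ioi 0)) (nhds 0) := by
    have hFint : ∀ a b : ℝ, IntervalIntegrable F volume a b := fun a b =>
      aux_bdd_intervalIntegrable hFm.aestronglyMeasurable (fun t _ => hCF t)
    have hFsqint : ∀ α : ℝ, IntervalIntegrable (fun t => ‖F t‖ ^ 2) volume β (β + α) := by
      intro α
      refine aux_bdd_intervalIntegrable (hFm.norm.pow_const 2).aestronglyMeasurable
        (C := CF ^ 2) (fun t _ => ?_)
      have := hCF t; have := norm_nonneg (F t)
      rw [Real.norm_eq_abs, abs_of_nonneg (by positivity)]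
      nlinarith
    have hinnint : ∀ α : ℝ, IntervalIntegrable (fun t => (⟪F t, F β⟫ : ℝ)) volume β (β + α) := by
      intro α
      refine aux_bdd_intervalIntegrable (hFm.inner measurable_const).aestronglyMeasurable
        (C := CF * ‖F β‖) (fun t _ => ?_)
      rw [Real.norm_eq_abs]
      exact (abs_real_inner_le_norm _ _).trans
        (mul_le_mul_of_nonneg_right (hCF t) (norm_nonneg _))
    have key : Filter.Tendsto
        (fun α => (α⁻¹ * ∫ t in β..(β + α), ‖F t‖ ^ 2)
          - (2 * ⟪α⁻¹ • ∫ t in β..(β + α), F t, F β⟫ - ‖F β‖ ^ 2))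
        (nhdsWithin 0 (Ioi 0)) (nhds 0) := by
      have h1 : Filter.Tendsto (fun α => (⟪α⁻¹ • ∫ t in β..(β + α), F t, F β⟫ : ℝ))
          (nhdsWithin 0 (Ioi 0)) (nhds ⟪F β, F β⟫) := hF.inner tendsto_const_nhds
      have h2 := hF2.sub (((h1.const_mul 2)).sub (tendsto_const_nhds (x := ‖F β‖ ^ 2)))
      have h3 : ‖F β‖ ^ 2 - (2 * ⟪F β, F β⟫ - ‖F β‖ ^ 2) = 0 := by
        rw [real_inner_self_eq_norm_sq]; ring
      rwa [h3] at h2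
    refine Filter.Tendsto.congr' ?_ key
    filter_upwards [self_mem_nhdsWithin] with α hα
    have hα0 : (0:ℝ) < α := hα
    have hsplit : (∫ t in β..(β + α), ‖F t - F β‖ ^ 2)
        = (∫ t in β..(β + α), ‖F t‖ ^ 2)
          - (2 * (∫ t in β..(β + α), (⟪F t, F β⟫ : ℝ)) - α * ‖F β‖ ^ 2) := by
      have hpt : ∀ t : ℝ, ‖F t - F β‖ ^ 2
          = ‖F t‖ ^ 2 - (2 * ⟪F t, F β⟫ - ‖F β‖ ^ 2) := by
        intro t; rw [norm_sub_sq_real]; ring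
      rw [intervalIntegral.integral_congr (g := fun t =>
        ‖F t‖ ^ 2 - (2 * ⟪F t, F β⟫ - ‖F β‖ ^ 2)) (fun t _ => hpt t)]
      rw [intervalIntegral.integral_sub (hFsqint α)
        (((hinnint α).const_mul 2).sub intervalIntegrable_const)]
      rw [intervalIntegral.integral_sub ((hinnint α).const_mul 2) intervalIntegrable_const]
      rw [intervalIntegral.integral_const_mul, intervalIntegral.integral_const]
      simp [add_sub_cancel_left, smul_eq_mul]
    have hpull : (∫ t in β..(β + α), (⟪F t, F β⟫ : ℝ))
        = ⟪∫ t in β..(β + α), F t, F β⟫ := by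
      have h1 : ∀ t : ℝ, (⟪F t, F β⟫ : ℝ) = ⟪F β, F t⟫ := fun t => real_inner_comm _ _
      rw [intervalIntegral.integral_congr (g := fun t => (⟪F β, F t⟫ : ℝ)) (fun t _ => h1 t)]
      rw [aux_intervalIntegral_inner (hFint β (β + α))]
      exact real_inner_comm _ _
    rw [hsplit, hpull]
    rw [real_inner_smul_left]
    field_simp
    try ring
  -- the two error terms
  have hE2 : Filter.Tendsto
      (fun α => (2 / α ^ 2) * ∫ t in β..(β + α),
        (⟪F t, (∫ s in β..t, G s) - (t - β) • G β⟫ : ℝ))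
      (nhdsWithin 0 (Ioi 0)) (nhds 0) := by
    rw [Metric.tendsto_nhdsWithin_nhds]
    intro ε hε
    have hε' : 0 < ε / (CF + 1) := by positivity
    obtain ⟨δ, hδ0, hδ⟩ := Metric.tendsto_nhdsWithin_nhds.1 hG (ε / (CF + 1)) hε'
    refine ⟨δ, hδ0, fun α hα hαδ => ?_⟩
    have hα0 : (0:ℝ) < α := hα
    rw [Real.dist_eq, sub_zero, abs_of_pos hα0] at hαδ
    have hαle : β ≤ β + α := by linarith
    set ε' := ε / (CF + 1) with hε'def
    have hbd : ∀ t ∈ Set.uIoc β (β + α),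
        ‖(⟪F t, (∫ s in β..t, G s) - (t - β) • G β⟫ : ℝ)‖ ≤ CF * ε' * (t - β) := by
      intro t ht
      rw [Set.uIoc_of_le hαle] at ht
      have hu0 : 0 < t - β := by linarith [ht.1]
      have huδ : t - β < δ := by linarith [ht.2]
      have h1 := hδ (Set.mem_Ioi.2 hu0)
        (by rw [Real.dist_eq, sub_zero, abs_of_pos hu0]; exact huδ)
      rw [dist_eq_norm] at h1
      have hteq : β + (t - β) = t := by ring
      rw [hteq] at h1
      have h2 : (∫ s in β..t, G s) - (t - β) • G β
          = (t - β) • ((t - β)⁻¹ • (∫ s in β..t, G s) - G β) := by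
        rw [smul_sub, smul_inv_smul₀ (ne_of_gt hu0)]
      rw [h2, Real.norm_eq_abs]
      have h3 := abs_real_inner_le_norm (F t)
        ((t - β) • ((t - β)⁻¹ • (∫ s in β..t, G s) - G β))
      have h4 : ‖(t - β) • ((t - β)⁻¹ • (∫ s in β..t, G s) - G β)‖ ≤ (t - β) * ε' := by
        rw [norm_smul, Real.norm_eq_abs, abs_of_pos hu0]
        exact mul_le_mul_of_nonneg_left h1.le hu0.le
      calc |(⟪F t, (t - β) • ((t - β)⁻¹ • (∫ s in β..t, G s) - G β)⟫ : ℝ)|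
          ≤ ‖F t‖ * ‖(t - β) • ((t - β)⁻¹ • (∫ s in β..t, G s) - G β)‖ := h3
        _ ≤ CF * ((t - β) * ε') :=
            mul_le_mul (hCF t) h4 (norm_nonneg _) hCF0
        _ = CF * ε' * (t - β) := by ring
    have hgint : IntervalIntegrable (fun t => CF * ε' * (t - β)) volume β (β + α) :=
      (Continuous.intervalIntegrable
        (continuous_const.mul (continuous_id.sub continuous_const))) _ _
    have hIb := intervalIntegral.norm_integral_le_abs_of_norm_le
      ((ae_restrict_iff' measurableSet_uIoc).2 (Filter.Eventually.of_forall hbd)) hgint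
    have hcomp : (∫ t in β..(β + α), CF * ε' * (t - β)) = CF * ε' * (α ^ 2 / 2) := by
      rw [intervalIntegral.integral_const_mul, aux_integral_sub_id]
    rw [hcomp] at hIb
    rw [Real.dist_eq, sub_zero, abs_mul]
    have h2α : |2 / α ^ 2| = 2 / α ^ 2 := abs_of_pos (by positivity)
    rw [h2α]
    have habsval : |CF * ε' * (α ^ 2 / 2)| = CF * ε' * (α ^ 2 / 2) :=
      abs_of_nonneg (by positivity)
    rw [Real.norm_eq_abs, habsval] at hIb
    have hle : 2 / α ^ 2 * |∫ t in β..(β + α),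
        (⟪F t, (∫ s in β..t, G s) - (t - β) • G β⟫ : ℝ)| ≤ CF * ε' := by
      have h5 : 2 / α ^ 2 * (CF * ε' * (α ^ 2 / 2)) = CF * ε' := by
        field_simp
      calc 2 / α ^ 2 * |∫ t in β..(β + α),
            (⟪F t, (∫ s in β..t, G s) - (t - β) • G β⟫ : ℝ)|
          ≤ 2 / α ^ 2 * (CF * ε' * (α ^ 2 / 2)) :=
            mul_le_mul_of_nonneg_left hIb (by positivity)
        _ = CF * ε' := h5
    have hfinal : CF * ε' < ε := by
      rw [hε'def]
      rw [mul_div_assoc']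
      rw [div_lt_iff₀ (by linarith)]
      nlinarith
    linarith
  have hE1 : Filter.Tendsto
      (fun α => (2 / α ^ 2) * ∫ t in β..(β + α), (t - β) * ⟪F t - F β, G β⟫)
      (nhdsWithin 0 (Ioi 0)) (nhds 0) := by
    rw [Metric.tendsto_nhdsWithin_nhds]
    intro ε hε
    set g := ‖G β‖ with hgdef
    have hg0 : 0 ≤ g := norm_nonneg _
    clear_value g
    set ε' := ε / (2 * (g + 1)) with hε'def
    have hε'0 : 0 < ε' := by positivity
    obtain ⟨δ, hδ0, hδ⟩ := Metric.tendsto_nhdsWithin_nhds.1 hL2 (ε' ^ 2) (by positivity)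
    refine ⟨δ, hδ0, fun α hα hαδ => ?_⟩
    have hα0 : (0:ℝ) < α := hα
    rw [Real.dist_eq, sub_zero, abs_of_pos hα0] at hαδ
    have hαle : β ≤ β + α := by linarith
    set S := ∫ t in β..(β + α), ‖F t - F β‖ ^ 2 with hSdef
    have hS0 : 0 ≤ S := intervalIntegral.integral_nonneg hαle (fun t _ => by positivity)
    have hSlt := hδ hα (by rw [Real.dist_eq, sub_zero, abs_of_pos hα0]; exact hαδ)
    rw [Real.dist_eq, sub_zero] at hSlt
    have hSlt' : α⁻¹ * S < ε' ^ 2 := lt_of_abs_lt hSlt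
    have hSle : S ≤ ε' ^ 2 * α := by
      have h := mul_le_mul_of_nonneg_left hSlt'.le hα0.le
      have h2 : α * (α⁻¹ * S) = S := by field_simp
      nlinarith
    -- pointwise bound
    have hbd : ∀ t ∈ Set.uIoc β (β + α),
        ‖(t - β) * ⟪F t - F β, G β⟫‖
          ≤ α * g * (‖F t - F β‖ ^ 2 + ε' ^ 2) / (2 * ε') := by
      intro t ht
      rw [Set.uIoc_of_le hαle] at ht
      have hu0 : 0 < t - β := by linarith [ht.1]
      have huα : t - β ≤ α := by linarith [ht.2]
      set h := ‖F t - F β‖ with hhdef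
      have hh0 : 0 ≤ h := norm_nonneg _
      clear_value h
      have h2 : |(⟪F t - F β, G β⟫ : ℝ)| ≤ h * g := by
        rw [hhdef, hgdef]; exact abs_real_inner_le_norm _ _
      rw [Real.norm_eq_abs, abs_mul, abs_of_pos hu0]
      rw [le_div_iff₀ (by positivity)]
      have k1 : (t - β) * |(⟪F t - F β, G β⟫ : ℝ)| ≤ α * (h * g) :=
        mul_le_mul huα h2 (abs_nonneg _) hα0.le
      have k2 : (t - β) * |(⟪F t - F β, G β⟫ : ℝ)| * (2 * ε') ≤ α * (h * g) * (2 * ε') :=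
        mul_le_mul_of_nonneg_right k1 (by positivity)
      have k3 : α * (h * g) * (2 * ε') ≤ α * g * (h ^ 2 + ε' ^ 2) := by
        nlinarith [sq_nonneg (h - ε'), mul_nonneg (mul_nonneg hα0.le hg0) (sq_nonneg (h - ε'))]
      linarith
    have hbint : IntervalIntegrable
        (fun t => α * g * (‖F t - F β‖ ^ 2 + ε' ^ 2) / (2 * ε')) volume β (β + α) := by
      have h1 : IntervalIntegrable (fun t => ‖F t - F β‖ ^ 2 + ε' ^ 2) volume β (β + α) :=
        (hSqint α).add intervalIntegrable_const
      have h2 := (h1.const_mul (α * g)).div_const (2 * ε')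
      simpa [mul_div_assoc] using h2
    have hIb := intervalIntegral.norm_integral_le_abs_of_norm_le
      ((ae_restrict_iff' measurableSet_uIoc).2 (Filter.Eventually.of_forall hbd)) hbint
    have hcomp : (∫ t in β..(β + α), α * g * (‖F t - F β‖ ^ 2 + ε' ^ 2) / (2 * ε'))
        = α * g * (S + ε' ^ 2 * α) / (2 * ε') := by
      have h1 : ∀ t : ℝ, α * g * (‖F t - F β‖ ^ 2 + ε' ^ 2) / (2 * ε')
          = (α * g / (2 * ε')) * (‖F t - F β‖ ^ 2 + ε' ^ 2) := fun t => by ring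
      rw [intervalIntegral.integral_congr (g := fun t =>
        (α * g / (2 * ε')) * (‖F t - F β‖ ^ 2 + ε' ^ 2)) (fun t _ => h1 t)]
      rw [intervalIntegral.integral_const_mul,
        intervalIntegral.integral_add (hSqint α) intervalIntegrable_const,
        intervalIntegral.integral_const]
      rw [← hSdef]
      simp only [add_sub_cancel_left, smul_eq_mul]
      ring
    rw [hcomp] at hIb
    have hIbound : |∫ t in β..(β + α), (t - β) * ⟪F t - F β, G β⟫|
        ≤ α ^ 2 * g * ε' := by
      have h1 : α * g * (S + ε' ^ 2 * α) / (2 * ε') ≤ α ^ 2 * g * ε' := by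
        rw [div_le_iff₀ (by positivity)]
        nlinarith [mul_le_mul_of_nonneg_left hSle (mul_nonneg hα0.le hg0)]
      have h2 : |α * g * (S + ε' ^ 2 * α) / (2 * ε')|
          = α * g * (S + ε' ^ 2 * α) / (2 * ε') := abs_of_nonneg (by positivity)
      rw [Real.norm_eq_abs, h2] at hIb
      linarith
    rw [Real.dist_eq, sub_zero, abs_mul, abs_of_pos (show (0:ℝ) < 2 / α ^ 2 by positivity)]
    have hle : 2 / α ^ 2 * |∫ t in β..(β + α), (t - β) * ⟪F t - F β, G β⟫|
        ≤ 2 * g * ε' := by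
      have h5 : 2 / α ^ 2 * (α ^ 2 * g * ε') = 2 * g * ε' := by field_simp
      calc 2 / α ^ 2 * |∫ t in β..(β + α), (t - β) * ⟪F t - F β, G β⟫|
          ≤ 2 / α ^ 2 * (α ^ 2 * g * ε') := mul_le_mul_of_nonneg_left hIbound (by positivity)
        _ = 2 * g * ε' := h5
    have hfinal : 2 * g * ε' < ε := by
      rw [hε'def, mul_div_assoc']
      rw [div_lt_iff₀ (by positivity)]
      nlinarith
    linarith
  -- assemble
  have hsum := (tendsto_const_nhds (x := (⟪F β, G β⟫ : ℝ))
    (f := nhdsWithin (0:ℝ) (Ioi 0))).add (hE1.add hE2)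
  simp only [add_zero] at hsum
  refine Filter.Tendsto.congr' ?_ hsum
  filter_upwards [self_mem_nhdsWithin] with α hα
  have hα0 : (0:ℝ) < α := hα
  have hαle : β ≤ β + α := by linarith
  have hpt : ∀ t : ℝ, (∫ s in β..t, (⟪F t, G s⟫ : ℝ))
      = (t - β) * ⟪F β, G β⟫ + ((t - β) * ⟪F t - F β, G β⟫
          + ⟪F t, (∫ s in β..t, G s) - (t - β) • G β⟫) := by
    intro t
    rw [aux_intervalIntegral_inner (hGint β t)]
    have : (⟪F t, ∫ s in β..t, G s⟫ : ℝ)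
        = ⟪F t, (t - β) • G β⟫ + ⟪F t, (∫ s in β..t, G s) - (t - β) • G β⟫ := by
      rw [← inner_add_right]
      congr 1
      abel
    rw [this, real_inner_smul_right]
    have h2 : (⟪F t - F β, G β⟫ : ℝ) = ⟪F t, G β⟫ - ⟪F β, G β⟫ := inner_sub_left _ _ _
    rw [h2]
    ring
  have hI2 : (∫ t in β..(β + α), ∫ s in β..t, (⟪F t, G s⟫ : ℝ))
      = α ^ 2 / 2 * ⟪F β, G β⟫
        + ((∫ t in β..(β + α), (t - β) * ⟪F t - F β, G β⟫)
          + ∫ t in β..(β + α), (⟪F t, (∫ s in β..t, G s) - (t - β) • G β⟫ : ℝ)) := by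
    rw [intervalIntegral.integral_congr (g := fun t =>
      (t - β) * ⟪F β, G β⟫ + ((t - β) * ⟪F t - F β, G β⟫
        + ⟪F t, (∫ s in β..t, G s) - (t - β) • G β⟫)) (fun t _ => hpt t)]
    have hc1 : IntervalIntegrable (fun t => (t - β) * (⟪F β, G β⟫ : ℝ)) volume β (β + α) :=
      (Continuous.intervalIntegrable (by fun_prop)) _ _
    rw [intervalIntegral.integral_add hc1 ((hint2 α).add (hint3 α))]
    rw [intervalIntegral.integral_add (hint2 α) (hint3 α)]
    rw [intervalIntegral.integral_mul_const, aux_integral_sub_id]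
  rw [hI2]
  have hαne : α ≠ 0 := ne_of_gt hα0
  field_simp
end

section
/- Let $F,G:[0,T]\to\mathbb{R}^n$ be bounded measurable. If for every $\beta\in[0,T)$ and every $\alpha\in(0,T-\beta)$ one has $\int_\beta^{\beta+\alpha}dt\int_\beta^t\langle F(t),G(s)\rangle\,ds\le0$, then $\langle F(t),G(t)\rangle\le0$ for a.e. $t\in[0,T]$. -/
open MeasureTheory Set
open scoped RealInnerProductSpace

lemma inner_intervalIntegral' {n : ℕ} {f : ℝ → EuclideanSpace ℝ (Fin n)} {a b : ℝ}
    (hf : IntervalIntegrable f volume a b) (c : EuclideanSpace ℝ (Fin n)) :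
    (∫ s in a..b, ⟪c, f s⟫) = ⟪c, ∫ s in a..b, f s⟫ := by
  rw [intervalIntegral.intervalIntegral_eq_integral_uIoc,
      intervalIntegral.intervalIntegral_eq_integral_uIoc,
      integral_inner (intervalIntegrable_iff.mp hf) c, real_inner_smul_right, smul_eq_mul]

lemma locInt_of_bdd {n : ℕ} (F : ℝ → EuclideanSpace ℝ (Fin n)) (hFm : Measurable F) (CF : ℝ)
    (hCF : ∀ t, ‖F t‖ ≤ CF) : LocallyIntegrable F volume := by
  rw [MeasureTheory.locallyIntegrable_iff]
  intro K hK
  exact Integrable.mono' (integrableOn_const hK.measure_lt_top.ne)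
    hFm.aestronglyMeasurable.restrict (Filter.Eventually.of_forall fun t => hCF t)

lemma ivlInt_of_bdd_on {E : Type*} [NormedAddCommGroup E] (f : ℝ → E)
    (hf : AEStronglyMeasurable f volume) (C : ℝ) (a b : ℝ)
    (hC : ∀ t ∈ Set.uIoc a b, ‖f t‖ ≤ C) :
    IntervalIntegrable f volume a b := by
  rw [intervalIntegrable_iff]
  refine Integrable.mono' (g := fun _ => C)
    (integrableOn_const measure_Ioc_lt_top.ne) hf.restrict ?_
  filter_upwards [ae_restrict_mem measurableSet_uIoc] with t ht using hC t ht

theorem stmt_12 {n : ℕ} (T : ℝ) (hT : 0 < T)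
    (F G : ℝ → EuclideanSpace ℝ (Fin n))
    (hFm : Measurable F) (hGm : Measurable G)
    (CF CG : ℝ) (hCF : ∀ t, ‖F t‖ ≤ CF) (hCG : ∀ t, ‖G t‖ ≤ CG)
    (h : ∀ β ∈ Ico (0:ℝ) T, ∀ α ∈ Ioo (0:ℝ) (T - β),
      (∫ t in β..(β + α), ∫ s in β..t, ⟪F t, G s⟫) ≤ 0) :
    ∀ᵐ t ∂(volume : Measure ℝ), t ∈ Icc 0 T → ⟪F t, G t⟫ ≤ 0 := by
  have hCF0 : 0 ≤ CF := le_trans (norm_nonneg _) (hCF 0)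
  have hCG0 : 0 ≤ CG := le_trans (norm_nonneg _) (hCG 0)
  have hFloc : LocallyIntegrable F volume := locInt_of_bdd F hFm CF hCF
  have hGloc : LocallyIntegrable G volume := locInt_of_bdd G hGm CG hCG
  have hGivl : ∀ a b : ℝ, IntervalIntegrable G volume a b := fun a b =>
    ivlInt_of_bdd_on G hGm.aestronglyMeasurable CG a b (fun t _ => hCG t)
  have hFae := IsUnifLocDoublingMeasure.ae_tendsto_average_norm_sub (μ := volume) hFloc 1
  have hGae := IsUnifLocDoublingMeasure.ae_tendsto_average_norm_sub (μ := volume) hGloc 1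
  have hTae : ∀ᵐ t : ℝ, t ≠ T := by
    have h0 : (volume : Measure ℝ) {T} = 0 := measure_singleton T
    exact measure_mono_null (fun t ht => by simpa using ht) h0
  filter_upwards [hFae, hGae, hTae] with β hβF hβG hβT hβmem
  have hβ0 : 0 ≤ β := hβmem.1
  have hβT' : β < T := lt_of_le_of_ne hβmem.2 hβT
  have hball : ∀ᶠ α : ℝ in nhdsWithin 0 (Ioi 0), β ∈ Metric.closedBall β (1 * α) := by
    filter_upwards [self_mem_nhdsWithin] with a ha
    simp only [Metric.mem_closedBall, dist_self, one_mul]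
    exact le_of_lt ha
  have hFa : Filter.Tendsto (fun α : ℝ => ⨍ y in Metric.closedBall β α, ‖F y - F β‖)
      (nhdsWithin 0 (Ioi 0)) (nhds 0) := hβF (fun _ => β) id Filter.tendsto_id hball
  have hGa : Filter.Tendsto (fun α : ℝ => ⨍ y in Metric.closedBall β α, ‖G y - G β‖)
      (nhdsWithin 0 (Ioi 0)) (nhds 0) := hβG (fun _ => β) id Filter.tendsto_id hball
  set c := ⟪F β, G β⟫ with hc
  set g : ℝ → EuclideanSpace ℝ (Fin n) := fun t => ∫ s in β..t, G s with hgdef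
  have hgc : Continuous g := intervalIntegral.continuous_primitive hGivl β
  have key : ∀ᶠ α in nhdsWithin (0:ℝ) (Ioi 0),
      c ≤ 4*CF*(⨍ y in Metric.closedBall β α, ‖G y - G β‖)
        + 4*CG*(⨍ y in Metric.closedBall β α, ‖F y - F β‖) := by
    have hmem : Ioo (0:ℝ) (T - β) ∈ nhdsWithin (0:ℝ) (Ioi 0) :=
      Ioo_mem_nhdsGT_of_mem ⟨le_refl 0, sub_pos.2 hβT'⟩
    filter_upwards [hmem] with α hα
    obtain ⟨hα0, hαT⟩ := hα
    set aG := ⨍ y in Metric.closedBall β α, ‖G y - G β‖ with haG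
    set aF := ⨍ y in Metric.closedBall β α, ‖F y - F β‖ with haF
    set A := ∫ s in β..β+α, ‖G s - G β‖ with hA
    set B := ∫ s in β..β+α, ‖F s - F β‖ with hB
    have hαle : β ≤ β + α := by linarith
    -- Step 1: the double integral equals ∫ ⟪F t, g t⟫ and is ≤ 0
    have hI0 : (∫ t in β..β+α, ⟪F t, g t⟫) ≤ 0 := by
      have hh := h β ⟨hβ0, hβT'⟩ α ⟨hα0, hαT⟩
      have heq : ∀ t : ℝ, (∫ s in β..t, ⟪F t, G s⟫) = ⟪F t, g t⟫ := fun t =>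
        inner_intervalIntegral' (hGivl β t) (F t)
      simpa only [heq] using hh
    -- bound for g
    have hgnorm : ∀ t, β ≤ t → ‖g t‖ ≤ CG * (t - β) := by
      intro t ht
      have h5 := intervalIntegral.norm_integral_le_of_norm_le_const
        (f := G) (a := β) (b := t) (C := CG) (fun x _ => hCG x)
      rwa [abs_of_nonneg (show (0:ℝ) ≤ t - β by linarith)] at h5
    -- integrability of pieces
    have h1 : IntervalIntegrable (fun t => ⟪F t, g t⟫) volume β (β+α) := by
      refine ivlInt_of_bdd_on _ (hFm.inner hgc.measurable).aestronglyMeasurable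
        (CF * (CG * α)) _ _ ?_
      intro t ht
      rw [uIoc_of_le hαle] at ht
      have hgt : ‖g t‖ ≤ CG * α := le_trans (hgnorm t ht.1.le)
        (by nlinarith [ht.2, ht.1.le])
      calc ‖⟪F t, g t⟫‖ = |⟪F t, g t⟫| := rfl
        _ ≤ ‖F t‖ * ‖g t‖ := abs_real_inner_le_norm _ _
        _ ≤ CF * (CG * α) := mul_le_mul (hCF t) hgt (norm_nonneg _) hCF0
    have h2 : IntervalIntegrable (fun t => ‖F t - F β‖) volume β (β+α) := by
      refine ivlInt_of_bdd_on _ ((hFm.sub measurable_const).norm).aestronglyMeasurable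
        (CF + CF) _ _ ?_
      intro t _
      calc ‖‖F t - F β‖‖ = ‖F t - F β‖ := norm_norm _
        _ ≤ ‖F t‖ + ‖F β‖ := norm_sub_le _ _
        _ ≤ CF + CF := add_le_add (hCF t) (hCF β)
    have hGn2 : IntervalIntegrable (fun s => ‖G s - G β‖) volume β (β+α) := by
      refine ivlInt_of_bdd_on _ ((hGm.sub measurable_const).norm).aestronglyMeasurable
        (CG + CG) _ _ ?_
      intro t _
      calc ‖‖G t - G β‖‖ = ‖G t - G β‖ := norm_norm _
        _ ≤ ‖G t‖ + ‖G β‖ := norm_sub_le _ _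
        _ ≤ CG + CG := add_le_add (hCG t) (hCG β)
    -- pointwise inequality
    have hpt : ∀ t ∈ Icc β (β+α),
        (t-β)*c ≤ ⟪F t, g t⟫ + (α*CG*‖F t - F β‖ + CF*A) := by
      rintro t ⟨ht1, ht2⟩
      have hsplit : (∫ s in β..t, (G s - G β)) = g t - (t-β) • G β := by
        rw [intervalIntegral.integral_sub (hGivl β t) intervalIntegrable_const,
            intervalIntegral.integral_const]
      have hAnn : ‖g t - (t-β) • G β‖ ≤ A := by
        rw [← hsplit]
        calc ‖∫ s in β..t, (G s - G β)‖ ≤ ∫ s in β..t, ‖G s - G β‖ :=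
              intervalIntegral.norm_integral_le_integral_norm ht1
          _ ≤ A := intervalIntegral.integral_mono_interval le_rfl ht1 ht2
              (Filter.Eventually.of_forall fun s => norm_nonneg _) hGn2
      have e1 : (t-β)*c - ⟪F t, g t⟫
          = ⟪F β - F t, (t-β) • G β⟫ + ⟪F t, (t-β) • G β - g t⟫ := by
        simp only [inner_sub_left, inner_sub_right, real_inner_smul_right, hc]
        ring
      have b1 : ⟪F β - F t, (t-β) • G β⟫ ≤ α*CG*‖F t - F β‖ := by
        have q1 := real_inner_le_norm (F β - F t) ((t-β) • G β)
        have q2 : ‖(t-β) • G β‖ = (t-β)*‖G β‖ := by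
          rw [norm_smul, Real.norm_eq_abs, abs_of_nonneg (by linarith : (0:ℝ) ≤ t - β)]
        have q3 : ‖F β - F t‖ = ‖F t - F β‖ := norm_sub_rev _ _
        have q4 : (t-β)*‖G β‖ ≤ α*CG :=
          mul_le_mul (by linarith) (hCG β) (norm_nonneg _) (by linarith)
        have q5 : ‖F t - F β‖ * ((t-β)*‖G β‖) ≤ ‖F t - F β‖ * (α*CG) :=
          mul_le_mul_of_nonneg_left q4 (norm_nonneg _)
        rw [q2, q3] at q1
        calc ⟪F β - F t, (t-β) • G β⟫ ≤ ‖F t - F β‖ * ((t-β)*‖G β‖) := q1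
          _ ≤ ‖F t - F β‖ * (α*CG) := q5
          _ = α*CG*‖F t - F β‖ := by ring
      have b2 : ⟪F t, (t-β) • G β - g t⟫ ≤ CF * A := by
        have q1 := real_inner_le_norm (F t) ((t-β) • G β - g t)
        have q2 : ‖(t-β) • G β - g t‖ = ‖g t - (t-β) • G β‖ := norm_sub_rev _ _
        rw [q2] at q1
        calc ⟪F t, (t-β) • G β - g t⟫ ≤ ‖F t‖ * ‖g t - (t-β) • G β‖ := q1
          _ ≤ CF * A := mul_le_mul (hCF t) hAnn (norm_nonneg _) hCF0
      linarith [b1, b2, e1]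
    -- integrate the pointwise inequality
    have hLint : IntervalIntegrable (fun t => (t-β)*c) volume β (β+α) :=
      (((continuous_id.sub continuous_const).mul continuous_const)).intervalIntegrable _ _
    have hRint : IntervalIntegrable
        (fun t => ⟪F t, g t⟫ + (α*CG*‖F t - F β‖ + CF*A)) volume β (β+α) :=
      h1.add ((h2.const_mul _).add intervalIntegrable_const)
    have hmono := intervalIntegral.integral_mono_on hαle hLint hRint hpt
    have hLeq : (∫ t in β..β+α, (t-β)*c) = α^2/2 * c := by
      rw [intervalIntegral.integral_mul_const]
      have h5 := intervalIntegral.integral_comp_sub_right (a := β) (b := β+α) (fun x => x) β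
      simp only [add_sub_cancel_left, sub_self] at h5
      rw [h5, integral_id]
      ring
    have hReq : (∫ t in β..β+α, (⟪F t, g t⟫ + (α*CG*‖F t - F β‖ + CF*A)))
        = (∫ t in β..β+α, ⟪F t, g t⟫) + (α*CG*B + α*(CF*A)) := by
      rw [intervalIntegral.integral_add h1 ((h2.const_mul _).add intervalIntegrable_const),
          intervalIntegral.integral_add (h2.const_mul _) intervalIntegrable_const,
          intervalIntegral.integral_const_mul, intervalIntegral.integral_const]
      simp only [smul_eq_mul, add_sub_cancel_left, hB]
    rw [hLeq, hReq] at hmono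
    have hch : α^2/2 * c ≤ α*CG*B + α*(CF*A) := by linarith [hI0]
    -- compare interval integrals with ball averages
    have hsubset : Ioc β (β+α) ⊆ Metric.closedBall β α := by
      rw [Real.closedBall_eq_Icc]
      intro x hx
      exact ⟨by linarith [hx.1], hx.2⟩
    have hvol : volume.real (Metric.closedBall β α) = 2*α := by
      rw [measureReal_def, Real.volume_closedBall, ENNReal.toReal_ofReal (by linarith)]
    have hAle : A ≤ 2*α*aG := by
      have hIntcb : IntegrableOn (fun y => ‖G y - G β‖) (Metric.closedBall β α) volume :=
        ((hGloc.integrableOn_isCompact (isCompact_closedBall β α)).sub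
          (integrableOn_const measure_closedBall_lt_top.ne)).norm
      have h6 : A = ∫ y in Ioc β (β+α), ‖G y - G β‖ := intervalIntegral.integral_of_le hαle
      have h7 : (∫ y in Ioc β (β+α), ‖G y - G β‖)
          ≤ ∫ y in Metric.closedBall β α, ‖G y - G β‖ :=
        setIntegral_mono_set hIntcb (Filter.Eventually.of_forall fun y => norm_nonneg _)
          (HasSubset.Subset.eventuallyLE hsubset)
      have h8 : (∫ y in Metric.closedBall β α, ‖G y - G β‖) = 2*α*aG := by
        rw [haG, setAverage_eq, hvol, smul_eq_mul]
        field_simp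
      rw [h6]
      linarith [h7, h8.symm.le, h8.le]
    have hBle : B ≤ 2*α*aF := by
      have hIntcb : IntegrableOn (fun y => ‖F y - F β‖) (Metric.closedBall β α) volume :=
        ((hFloc.integrableOn_isCompact (isCompact_closedBall β α)).sub
          (integrableOn_const measure_closedBall_lt_top.ne)).norm
      have h6 : B = ∫ y in Ioc β (β+α), ‖F y - F β‖ := intervalIntegral.integral_of_le hαle
      have h7 : (∫ y in Ioc β (β+α), ‖F y - F β‖)
          ≤ ∫ y in Metric.closedBall β α, ‖F y - F β‖ :=
        setIntegral_mono_set hIntcb (Filter.Eventually.of_forall fun y => norm_nonneg _)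
          (HasSubset.Subset.eventuallyLE hsubset)
      have h8 : (∫ y in Metric.closedBall β α, ‖F y - F β‖) = 2*α*aF := by
        rw [haF, setAverage_eq, hvol, smul_eq_mul]
        field_simp
      rw [h6]
      linarith [h7, h8.le]
    -- conclude
    have hpos : (0:ℝ) < α^2/2 := by positivity
    rw [← mul_le_mul_iff_of_pos_right hpos]
    have q1 : α*(CF*A) ≤ (α*CF)*(2*α*aG) := by
      have := mul_le_mul_of_nonneg_left hAle (mul_nonneg hα0.le hCF0)
      linarith [this]
    have q2 : α*CG*B ≤ (α*CG)*(2*α*aF) := by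
      have := mul_le_mul_of_nonneg_left hBle (mul_nonneg hα0.le hCG0)
      linarith [this]
    nlinarith [hch, q1, q2]
  have hlim : Filter.Tendsto (fun α : ℝ =>
      4*CF*(⨍ y in Metric.closedBall β α, ‖G y - G β‖)
        + 4*CG*(⨍ y in Metric.closedBall β α, ‖F y - F β‖))
      (nhdsWithin 0 (Ioi 0)) (nhds 0) := by
    have := (hGa.const_mul (4*CF)).add (hFa.const_mul (4*CG))
    simpa using this
  exact ge_of_tendsto hlim key
end
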